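/- arXiv:2207.06508 — 8 statements merged into one kernel-verified Lean document; each statement's English description precedes it below -/
import Mathlib

section
/- Let v be a k-Grassmannian permutation in S_n (i.e., v(1) < ... < v(k) and v(k+1) < ... < v(n)). Then for any u in S_n, u ≤ v in Bruhat order if and only if u(j) ≤ v(j) for all 1 ≤ j ≤ k and u(m) ≥ v(m) for all k < m ≤ n. -/
/-- Gale (dominance) order on finsets of `Fin n`: componentwise comparison
of the increasingly sorted lists. -/
def galeList {n : ℕ} (I J : Finset (Fin n)) : Prop :=
  List.Forall₂ (· ≤ ·) (I.sort (· ≤ ·)) (J.sort (· ≤ ·))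

/-- Bruhat order on permutations of `Fin n`, via the tableau criterion:
`u ≤ v` iff every initial set of `u` is dominated by the corresponding
initial set of `v` in Gale order. -/
def bruhatLE {n : ℕ} (u v : Equiv.Perm (Fin n)) : Prop :=
  ∀ i : Fin n, galeList ((Finset.Iic i).image u) ((Finset.Iic i).image v)

/-- `v` is `k`-Grassmannian: increasing on the first `k` positions and on the rest. -/
def IsGrassmannian {n : ℕ} (k : ℕ) (v : Equiv.Perm (Fin n)) : Prop :=
  (∀ i j : Fin n, i < j → (j : ℕ) < k → v i < v j) ∧
  (∀ i j : Fin n, i < j → k ≤ (i : ℕ) → v i < v j)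

section BSaux

variable {n : ℕ}

lemma countP_sort_eq (t : ℕ) (s : Finset (Fin n)) :
    ((s.sort (·≤·)).countP fun x : Fin n => decide ((x:ℕ) < t))
      = (s.filter (fun x : Fin n => (x:ℕ) < t)).card := by
  rw [(Finset.sort_perm_toList s _).countP_eq]
  rw [Finset.card_def, Finset.filter_val, ← Multiset.countP_eq_card_filter, ← Finset.coe_toList,
    Multiset.coe_countP]

lemma forall2_countP {a b : List (Fin n)} (h : List.Forall₂ (· ≤ ·) a b) (t : ℕ) :
    (b.countP fun x : Fin n => decide ((x:ℕ) < t))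
      ≤ (a.countP fun x : Fin n => decide ((x:ℕ) < t)) := by
  induction h with
  | nil => simp
  | @cons x y a b hxy h ih =>
    rw [List.countP_cons, List.countP_cons]
    have hxy' : (x:ℕ) ≤ (y:ℕ) := hxy
    by_cases hy : (y:ℕ) < t
    · have hx : (x:ℕ) < t := lt_of_le_of_lt hxy' hy
      simp only [hx, hy, decide_true]
      omega
    · simp only [hy, decide_false]
      by_cases hx : (x:ℕ) < t <;> simp [hx] <;> omega

lemma sorted_forall2 : ∀ a b : List (Fin n), a.Pairwise (· ≤ ·) → b.Pairwise (· ≤ ·) →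
    a.length = b.length →
    (∀ t : ℕ, (b.countP fun x : Fin n => decide ((x:ℕ) < t))
      ≤ (a.countP fun x : Fin n => decide ((x:ℕ) < t))) →
    List.Forall₂ (· ≤ ·) a b := by
  intro a
  induction a with
  | nil =>
    intro b _ _ hl _
    cases b with
    | nil => constructor
    | cons y b => simp at hl
  | cons x a ih =>
    intro b ha hb hl hc
    cases b with
    | nil => simp at hl
    | cons y b =>
      rw [List.pairwise_cons] at ha hb
      have hxy : x ≤ y := by
        by_contra hxy
        push_neg at hxy
        have hyx : (y:ℕ) < (x:ℕ) := hxy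
        have h0 := hc ((y:ℕ)+1)
        have h1 : 1 ≤ ((y::b).countP fun z : Fin n => decide ((z:ℕ) < (y:ℕ)+1)) := by
          rw [List.countP_cons]
          simp
        have h2 : ((x::a).countP fun z : Fin n => decide ((z:ℕ) < (y:ℕ)+1)) = 0 := by
          rw [List.countP_eq_zero]
          intro z hz
          have hxz : (x:ℕ) ≤ (z:ℕ) := by
            rcases List.mem_cons.mp hz with h | h
            · exact le_of_eq (by rw [h])
            · exact ha.1 z h
          simp only [decide_eq_true_eq]
          omega
        omega
      constructor
      · exact hxy
      · apply ih b ha.2 hb.2 (by simpa using hl)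
        intro t
        have h0 := hc t
        rw [List.countP_cons, List.countP_cons] at h0
        by_cases hy : (y:ℕ) < t
        · have hx : (x:ℕ) < t := lt_of_le_of_lt (show (x:ℕ) ≤ (y:ℕ) from hxy) hy
          simp only [hx, hy, decide_true] at h0
          omega
        · have hz : (b.countP fun z : Fin n => decide ((z:ℕ) < t)) = 0 := by
            rw [List.countP_eq_zero]
            intro z hzb
            have : (y:ℕ) ≤ (z:ℕ) := hb.1 z hzb
            simp only [decide_eq_true_eq]
            omega
          omega

lemma gale_iff {I J : Finset (Fin n)} :
    galeList I J ↔ I.card = J.card ∧ ∀ t : ℕ,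
      (J.filter fun x : Fin n => (x:ℕ) < t).card ≤ (I.filter fun x : Fin n => (x:ℕ) < t).card := by
  constructor
  · intro h
    refine ⟨?_, fun t => ?_⟩
    · have := h.length_eq
      rwa [Finset.length_sort, Finset.length_sort] at this
    · rw [← countP_sort_eq, ← countP_sort_eq]
      exact forall2_countP h t
  · rintro ⟨h1, h2⟩
    apply sorted_forall2 _ _ (Finset.pairwise_sort _ _) (Finset.pairwise_sort _ _)
    · rw [Finset.length_sort, Finset.length_sort, h1]
    · intro t
      rw [countP_sort_eq, countP_sort_eq]
      exact h2 t

lemma card_filter_image (w : Equiv.Perm (Fin n)) (s : Finset (Fin n)) (t : ℕ) :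
    ((s.image w).filter fun x : Fin n => (x:ℕ) < t).card
      = (s.filter fun p : Fin n => ((w p : Fin n):ℕ) < t).card := by
  rw [Finset.filter_image]
  exact Finset.card_image_of_injective _ w.injective

lemma card_univ_filter (w : Equiv.Perm (Fin n)) (t : ℕ) :
    ((Finset.univ : Finset (Fin n)).filter fun p : Fin n => ((w p : Fin n):ℕ) < t).card
      = ((Finset.univ : Finset (Fin n)).filter fun x : Fin n => (x:ℕ) < t).card := by
  rw [← card_filter_image w Finset.univ t, Finset.image_univ_equiv]

lemma split_count (i : Fin n) (q : Fin n → Prop) [DecidablePred q] :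
    ((Finset.Iic i).filter q).card + ((Finset.Ioi i).filter q).card
      = ((Finset.univ : Finset (Fin n)).filter q).card := by
  rw [← Finset.card_union_of_disjoint, ← Finset.filter_union]
  · congr 2
    ext p
    simp only [Finset.mem_union, Finset.mem_Iic, Finset.mem_Ioi, Finset.mem_univ, iff_true]
    exact le_or_gt p i
  · apply Finset.disjoint_filter_filter
    rw [Finset.disjoint_left]
    intro p hp hp2
    simp only [Finset.mem_Iic] at hp
    simp only [Finset.mem_Ioi] at hp2
    exact absurd hp (not_le.mpr hp2)

end BSaux

section BSmain

variable {n : ℕ}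

lemma tail_count (u v : Equiv.Perm (Fin n)) (h : bruhatLE u v) (m : Fin n) (t : ℕ) :
    ((Finset.Ici m).filter fun p : Fin n => (u p : ℕ) < t).card
      ≤ ((Finset.Ici m).filter fun p : Fin n => (v p : ℕ) < t).card := by
  by_cases hm : (m:ℕ) = 0
  · have hIci : (Finset.Ici m) = Finset.univ := by
      ext p
      simp only [Finset.mem_Ici, Finset.mem_univ, iff_true, Fin.le_def]
      omega
    rw [hIci, card_univ_filter u, card_univ_filter v]
  · have hmpos : 0 < (m:ℕ) := Nat.pos_of_ne_zero hm
    have hmn : (m:ℕ) - 1 < n := by have := m.isLt; omega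
    set i : Fin n := ⟨(m:ℕ)-1, hmn⟩ with hi
    have hIoi : Finset.Ioi i = Finset.Ici m := by
      ext p
      simp only [Finset.mem_Ioi, Finset.mem_Ici, Fin.le_def, Fin.lt_def, hi]
      omega
    have hg := (gale_iff.mp (h i)).2 t
    rw [card_filter_image, card_filter_image] at hg
    have su := split_count i (fun p : Fin n => (u p : ℕ) < t)
    have sv := split_count i (fun p : Fin n => (v p : ℕ) < t)
    rw [card_univ_filter u] at su
    rw [card_univ_filter v] at sv
    rw [hIoi] at su sv
    omega

theorem stmt0' {k : ℕ} (v : Equiv.Perm (Fin n)) (hv : IsGrassmannian k v)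
    (u : Equiv.Perm (Fin n)) :
    bruhatLE u v ↔
      ((∀ j : Fin n, (j : ℕ) < k → u j ≤ v j) ∧
       (∀ m : Fin n, k ≤ (m : ℕ) → v m ≤ u m)) := by
  constructor
  · intro h
    constructor
    · intro j hj
      have hcnt := (gale_iff.mp (h j)).2 ((v j : ℕ)+1)
      rw [card_filter_image, card_filter_image] at hcnt
      have hJ : ((Finset.Iic j).filter fun p : Fin n => (v p : ℕ) < (v j : ℕ)+1)
          = Finset.Iic j := by
        apply Finset.filter_eq_self.mpr
        intro p hp
        rcases eq_or_lt_of_le (Finset.mem_Iic.mp hp) with h' | h'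
        · rw [h']
          omega
        · have h2 : (v p : ℕ) < (v j : ℕ) := hv.1 p j h' hj
          omega
      rw [hJ] at hcnt
      have hsub := Finset.eq_of_subset_of_card_le (Finset.filter_subset _ _) hcnt
      have hj' : j ∈ (Finset.Iic j).filter fun p : Fin n => (u p : ℕ) < (v j : ℕ)+1 := by
        rw [hsub]
        exact Finset.mem_Iic.mpr le_rfl
      have h3 := (Finset.mem_filter.mp hj').2
      rw [Fin.le_def]
      omega
    · intro m hm
      by_contra hum
      push_neg at hum
      have hum' : (u m : ℕ) < (v m : ℕ) := hum
      have hc := tail_count u v h m ((v m : ℕ))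
      have hzero : ((Finset.Ici m).filter fun p : Fin n => (v p : ℕ) < (v m : ℕ)).card = 0 := by
        rw [Finset.card_eq_zero, Finset.filter_eq_empty_iff]
        intro p hp
        rcases eq_or_lt_of_le (Finset.mem_Ici.mp hp) with h' | h'
        · rw [← h']
          omega
        · have h2 : (v m : ℕ) < (v p : ℕ) := hv.2 m p h' hm
          omega
      have hpos : 0 < ((Finset.Ici m).filter fun p : Fin n => (u p : ℕ) < (v m : ℕ)).card := by
        apply Finset.card_pos.mpr
        exact ⟨m, Finset.mem_filter.mpr ⟨Finset.mem_Ici.mpr le_rfl, hum'⟩⟩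
      omega
  · rintro ⟨h1, h2⟩ i
    rw [gale_iff]
    refine ⟨?_, fun t => ?_⟩
    · rw [Finset.card_image_of_injective _ u.injective,
        Finset.card_image_of_injective _ v.injective]
    · rw [card_filter_image, card_filter_image]
      by_cases hik : (i:ℕ) < k
      · apply Finset.card_le_card
        intro p hp
        rw [Finset.mem_filter] at hp ⊢
        refine ⟨hp.1, ?_⟩
        have hpi : (p:ℕ) ≤ (i:ℕ) := Fin.le_def.mp (Finset.mem_Iic.mp hp.1)
        have h3 : (u p : ℕ) ≤ (v p : ℕ) := h1 p (by omega)
        have := hp.2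
        omega
      · have hsub : ((Finset.Ioi i).filter fun p : Fin n => (u p : ℕ) < t)
            ⊆ ((Finset.Ioi i).filter fun p : Fin n => (v p : ℕ) < t) := by
          intro p hp
          rw [Finset.mem_filter] at hp ⊢
          refine ⟨hp.1, ?_⟩
          have hpi : (i:ℕ) < (p:ℕ) := Fin.lt_def.mp (Finset.mem_Ioi.mp hp.1)
          have h3 : (v p : ℕ) ≤ (u p : ℕ) := h2 p (by omega)
          have := hp.2
          omega
        have su := split_count i (fun p : Fin n => (u p : ℕ) < t)
        have sv := split_count i (fun p : Fin n => (v p : ℕ) < t)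
        rw [card_univ_filter u] at su
        rw [card_univ_filter v] at sv
        have hcard := Finset.card_le_card hsub
        omega

end BSmain


/-- Bergeron–Sottile criterion: for `v` a `k`-Grassmannian permutation,
`u ≤ v` in Bruhat order iff `u(j) ≤ v(j)` for positions `j` among the first `k`
and `u(m) ≥ v(m)` for the remaining positions `m`. -/
theorem stmt0 {n k : ℕ} (v : Equiv.Perm (Fin n)) (hv : IsGrassmannian k v)
    (u : Equiv.Perm (Fin n)) :
    bruhatLE u v ↔
      ((∀ j : Fin n, (j : ℕ) < k → u j ≤ v j) ∧
       (∀ m : Fin n, k ≤ (m : ℕ) → v m ≤ u m)) := by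
  exact stmt0' v hv u
end

section
/- Let v ∈ S_n be k-Grassmannian and u ≤ v in Bruhat order. Then there exists a unique permutation u' ∈ [u,v] that is maximal in Bruhat order among all permutations y ∈ [u,v] with (y(1),...,y(k)) = (u(1),...,u(k)) as an ordered list. -/
open Finset

namespace BruhatAux

variable {n : ℕ}

/-- count of positions `r ≤ j` with value `≥ t`. -/
def cnt (w : Equiv.Perm (Fin n)) (j : Fin n) (t : ℕ) : ℕ :=
  ((Finset.Iic j).filter (fun r => t ≤ (w r : ℕ))).card

/-- count of positions `r < i` with value `≥ t`. -/
def pcnt (w : Equiv.Perm (Fin n)) (i : Fin n) (t : ℕ) : ℕ :=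
  ((Finset.Iio i).filter (fun r => t ≤ (w r : ℕ))).card



lemma filter_card_eq {m : ℕ} (I : Finset (Fin n)) (h : I.card = m) (t : ℕ) :
    (I.filter (fun x : Fin n => t ≤ (x : ℕ))).card
      = (Finset.univ.filter (fun a : Fin m => t ≤ ((I.orderEmbOfFin h a : Fin n) : ℕ))).card := by
  symm
  apply Finset.card_bij (fun (a : Fin m) _ => (I.orderEmbOfFin h a : Fin n))
  · intro a ha
    simp only [Finset.mem_filter, Finset.mem_univ, true_and] at ha
    exact Finset.mem_filter.2 ⟨I.orderEmbOfFin_mem h a, ha⟩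
  · intro a _ b _ hab
    exact (I.orderEmbOfFin h).injective hab
  · intro x hx
    simp only [Finset.mem_filter] at hx
    have : x ∈ Set.range (I.orderEmbOfFin h) := by
      rw [Finset.range_orderEmbOfFin]; exact hx.1
    obtain ⟨a, ha⟩ := this
    exact ⟨a, Finset.mem_filter.2 ⟨Finset.mem_univ _, by rw [ha]; exact hx.2⟩, ha⟩

lemma galeList_iff_emb {m : ℕ} {I J : Finset (Fin n)} (hI : I.card = m) (hJ : J.card = m) :
    galeList I J ↔ ∀ a : Fin m, I.orderEmbOfFin hI a ≤ J.orderEmbOfFin hJ a := by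
  unfold galeList
  rw [List.forall₂_iff_get]
  have hlI : (I.sort (· ≤ ·)).length = m := by rw [Finset.length_sort, hI]
  have hlJ : (J.sort (· ≤ ·)).length = m := by rw [Finset.length_sort, hJ]
  constructor
  · rintro ⟨-, hget⟩ a
    rw [Finset.orderEmbOfFin_apply, Finset.orderEmbOfFin_apply]
    exact hget a (by omega) (by omega)
  · intro hp
    refine ⟨by omega, fun i h₁ h₂ => ?_⟩
    have := hp ⟨i, by omega⟩
    rw [Finset.orderEmbOfFin_apply, Finset.orderEmbOfFin_apply] at this
    simpa using this

lemma galeList_iff_count {I J : Finset (Fin n)} (hc : I.card = J.card) :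
    galeList I J ↔ ∀ t : ℕ,
      (I.filter (fun x : Fin n => t ≤ (x : ℕ))).card
        ≤ (J.filter (fun x : Fin n => t ≤ (x : ℕ))).card := by
  rw [galeList_iff_emb hc rfl]
  constructor
  · intro hp t
    rw [filter_card_eq I hc t, filter_card_eq J rfl t]
    apply Finset.card_le_card
    intro a ha
    simp only [Finset.mem_filter, Finset.mem_univ, true_and] at ha ⊢
    exact le_trans ha (by exact_mod_cast hp a)
  · intro hcnt a
    by_contra hlt
    push_neg at hlt
    set t : ℕ := (I.orderEmbOfFin hc a : ℕ) with ht
    have h1 : Finset.Ici a ⊆ Finset.univ.filter (fun b : Fin J.card => t ≤ ((I.orderEmbOfFin hc b : Fin n) : ℕ)) := by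
      intro b hb
      simp only [Finset.mem_Ici] at hb
      simp only [Finset.mem_filter, Finset.mem_univ, true_and]
      exact_mod_cast (I.orderEmbOfFin hc).monotone hb
    have h2 : Finset.univ.filter (fun b : Fin J.card => t ≤ ((J.orderEmbOfFin rfl b : Fin n) : ℕ)) ⊆ Finset.Ioi a := by
      intro b hb
      simp only [Finset.mem_filter, Finset.mem_univ, true_and] at hb
      simp only [Finset.mem_Ioi]
      by_contra hba
      push_neg at hba
      have : (J.orderEmbOfFin rfl b : Fin n) ≤ J.orderEmbOfFin rfl a := (J.orderEmbOfFin rfl).monotone hba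
      have : ((J.orderEmbOfFin rfl b : Fin n) : ℕ) < t := lt_of_le_of_lt (by exact_mod_cast this) (by exact_mod_cast hlt)
      omega
    have hIci : Finset.Ici a = insert a (Finset.Ioi a) := (Finset.Ioi_insert a).symm
    have hcard1 : (Finset.Ioi a).card + 1 ≤ (Finset.univ.filter (fun b : Fin J.card => t ≤ ((I.orderEmbOfFin hc b : Fin n) : ℕ))).card := by
      have := Finset.card_le_card h1
      rw [hIci, Finset.card_insert_of_notMem (by simp)] at this
      omega
    have hcard2 := Finset.card_le_card h2
    have := hcnt t
    rw [filter_card_eq I hc t, filter_card_eq J rfl t] at this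
    omega


lemma image_filter_card (w : Equiv.Perm (Fin n)) (s : Finset (Fin n)) (t : ℕ) :
    ((s.image w).filter (fun x : Fin n => t ≤ (x : ℕ))).card
      = (s.filter (fun r => t ≤ (w r : ℕ))).card := by
  rw [Finset.filter_image]
  exact Finset.card_image_of_injective _ w.injective

-- determination
lemma eq_of_cnt_eq {y w : Equiv.Perm (Fin n)}
    (h : ∀ (j : Fin n) (t : ℕ), cnt y j t = cnt w j t) : y = w := by
  have key : ∀ m : ℕ, ∀ j : Fin n, (j : ℕ) = m → y j = w j := by
    intro m
    induction m using Nat.strong_induction_on with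
    | _ m ih =>
      intro j hj
      have hpre : ∀ r : Fin n, r < j → y r = w r := fun r hr => ih r (by omega) r rfl
      have hsplit : ∀ (z : Equiv.Perm (Fin n)) (t : ℕ),
          cnt z j t = ((Finset.Iio j).filter (fun r => t ≤ (z r : ℕ))).card
            + (if t ≤ (z j : ℕ) then 1 else 0) := by
        intro z t
        unfold cnt
        rw [← Finset.Iio_insert, Finset.filter_insert]
        split
        · rw [Finset.card_insert_of_notMem (by simp)]
        · simp
      have hIio : ∀ t : ℕ, ((Finset.Iio j).filter (fun r => t ≤ (y r : ℕ))).card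
          = ((Finset.Iio j).filter (fun r => t ≤ (w r : ℕ))).card := by
        intro t
        congr 1
        apply Finset.filter_congr
        intro r hr
        rw [hpre r (Finset.mem_Iio.1 hr)]
      have hyw : ∀ t : ℕ, (if t ≤ (y j : ℕ) then 1 else 0) = (if t ≤ (w j : ℕ) then (1:ℕ) else 0) := by
        intro t
        have := h j t
        rw [hsplit y t, hsplit w t, hIio t] at this
        omega
      have h1 := hyw (y j)
      have h2 := hyw (w j)
      simp only [le_refl, if_true] at h1 h2
      by_cases hle : (y j : ℕ) ≤ (w j : ℕ)
      · by_cases hle2 : (w j : ℕ) ≤ (y j : ℕ)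
        · exact Fin.ext (le_antisymm hle hle2)
        · rw [if_neg hle2] at h2; omega
      · rw [if_neg hle] at h1; omega
  exact Equiv.ext fun j => key j j rfl


lemma cnt_mono_col (w : Equiv.Perm (Fin n)) {j j' : Fin n} (h : j ≤ j') (t : ℕ) :
    cnt w j t ≤ cnt w j' t :=
  Finset.card_le_card (Finset.filter_subset_filter _ (Finset.Iic_subset_Iic.2 h))

lemma cnt_split' (w : Equiv.Perm (Fin n)) {i j : Fin n} (hij : i ≤ j) (t : ℕ) :
    cnt w j t = cnt w i t + ((Finset.Ioc i j).filter (fun r => t ≤ (w r : ℕ))).card := by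
  unfold cnt
  rw [← Finset.card_union_of_disjoint, ← Finset.filter_union]
  · congr 2
    rw [← Finset.coe_inj, Finset.coe_union, Finset.coe_Iic, Finset.coe_Ioc, Finset.coe_Iic,
      Set.Iic_union_Ioc_eq_Iic hij]
  · apply Finset.disjoint_filter_filter
    rw [Finset.disjoint_left]
    intro r hr hr'
    simp only [Finset.mem_Iic] at hr
    simp only [Finset.mem_Ioc] at hr'
    exact absurd hr (not_le.2 hr'.1)

lemma cnt_eq_pcnt_add (w : Equiv.Perm (Fin n)) (i : Fin n) (t : ℕ) :
    cnt w i t = pcnt w i t + (if t ≤ (w i : ℕ) then 1 else 0) := by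
  unfold cnt pcnt
  rw [← Finset.Iio_insert, Finset.filter_insert]
  split
  · rw [Finset.card_insert_of_notMem (by simp)]
  · simp

lemma cnt_total (w : Equiv.Perm (Fin n)) (hn : 0 < n) (t : ℕ) :
    cnt w ⟨n-1, by omega⟩ t = (Finset.univ.filter (fun x : Fin n => t ≤ (x : ℕ))).card := by
  have huniv : Finset.Iic (⟨n-1, by omega⟩ : Fin n) = Finset.univ := by
    ext r
    simp only [Finset.mem_Iic, Finset.mem_univ, iff_true]
    have := r.isLt
    exact Fin.le_def.2 (by simp; omega)
  unfold cnt
  rw [huniv]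
  apply Finset.card_bij (fun (r : Fin n) _ => w r)
  · intro r hr
    simp only [Finset.mem_filter, Finset.mem_univ, true_and] at hr ⊢
    exact hr
  · intro a _ b _ hab
    exact w.injective hab
  · intro x hx
    simp only [Finset.mem_filter, Finset.mem_univ, true_and] at hx
    exact ⟨w.symm x, by simp [hx], by simp⟩


lemma cnt_zero_of_ge (w : Equiv.Perm (Fin n)) (j : Fin n) {t : ℕ} (h : n ≤ t) :
    cnt w j t = 0 := by
  unfold cnt
  rw [Finset.card_eq_zero, Finset.filter_eq_empty_iff]
  intro r _
  have := (w r).isLt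
  omega

/-- Existence of the threshold `τ` and the greedy value `cs` at position `i`. -/
lemma exists_tau_cs (v w : Equiv.Perm (Fin n))
    (hw : ∀ (j : Fin n) (t : ℕ), cnt w j t ≤ cnt v j t) (i : Fin n) :
    ∃ (τ : ℕ) (cs : Fin n),
      (cnt v i τ ≤ pcnt w i τ) ∧ (∀ t : ℕ, t < τ → pcnt w i t < cnt v i t) ∧
      ((cs : ℕ) < τ) ∧ (∀ r : Fin n, r < i → w r ≠ cs) ∧
      (∀ c : Fin n, (∀ r : Fin n, r < i → w r ≠ c) → (c : ℕ) < τ → c ≤ cs) := by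
  classical
  set SS : Finset ℕ := (Finset.range (n+1)).filter (fun t => cnt v i t ≤ pcnt w i t) with hSS
  have hSSne : SS.Nonempty := by
    refine ⟨n, ?_⟩
    simp only [hSS, Finset.mem_filter, Finset.mem_range]
    exact ⟨by omega, by rw [cnt_zero_of_ge v i (le_refl n)]; omega⟩
  set τ : ℕ := SS.min' hSSne with hτ
  have hτmem : τ ∈ SS := SS.min'_mem hSSne
  simp only [hSS, Finset.mem_filter, Finset.mem_range] at hτmem
  have hτmin : ∀ t : ℕ, t < τ → pcnt w i t < cnt v i t := by
    intro t ht
    by_contra hcon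
    push_neg at hcon
    have : t ∈ SS := by
      simp only [hSS, Finset.mem_filter, Finset.mem_range]
      exact ⟨by omega, hcon⟩
    exact absurd (SS.min'_le t this) (not_le.2 ht)
  have hwilt : (w i : ℕ) < τ := by
    by_contra hcon
    push_neg at hcon
    have h1 : cnt w i τ = pcnt w i τ + 1 := by
      rw [cnt_eq_pcnt_add w i τ, if_pos hcon]
    have h2 := hw i τ
    omega
  set CS : Finset (Fin n) :=
    Finset.univ.filter (fun c : Fin n => (∀ r : Fin n, r < i → w r ≠ c) ∧ (c : ℕ) < τ) with hCS
  have hCSne : CS.Nonempty := by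
    refine ⟨w i, ?_⟩
    simp only [hCS, Finset.mem_filter, Finset.mem_univ, true_and]
    refine ⟨fun r hr he => ?_, hwilt⟩
    exact absurd (w.injective he) (ne_of_lt hr)
  set cs : Fin n := CS.max' hCSne with hcs
  have hcsmem : cs ∈ CS := CS.max'_mem hCSne
  simp only [hCS, Finset.mem_filter, Finset.mem_univ, true_and] at hcsmem
  refine ⟨τ, cs, hτmem.2, hτmin, hcsmem.2, hcsmem.1, ?_⟩
  intro c hc hct
  apply CS.le_max'
  simp only [hCS, Finset.mem_filter, Finset.mem_univ, true_and]
  exact ⟨hc, hct⟩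


/-- The key exchange lemma. -/
lemma swap_step {k : ℕ} {v y : Equiv.Perm (Fin n)}
    (hv2 : ∀ a b : Fin n, a < b → k ≤ (a : ℕ) → v a < v b)
    (hy : ∀ (j : Fin n) (t : ℕ), cnt y j t ≤ cnt v j t)
    {i : Fin n} (hik : k ≤ (i : ℕ))
    {τ : ℕ}
    (hτS : cnt v i τ ≤ pcnt y i τ)
    (hτmin : ∀ t : ℕ, t < τ → pcnt y i t < cnt v i t)
    {cs : Fin n}
    (hcrem : ∀ r : Fin n, r < i → y r ≠ cs)
    (hclt : (cs : ℕ) < τ)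
    (hcmax : ∀ c : Fin n, (∀ r : Fin n, r < i → y r ≠ c) → (c : ℕ) < τ → c ≤ cs)
    (hαc : y i < cs) :
    ∃ y' : Equiv.Perm (Fin n),
      (∀ (j : Fin n) (t : ℕ), cnt y' j t ≤ cnt v j t) ∧
      (∀ (j : Fin n) (t : ℕ), cnt y j t ≤ cnt y' j t) ∧
      (∀ r : Fin n, r < i → y' r = y r) ∧
      (y i < y' i ∧ y' i ≤ cs) := by
  classical
  set α := y i with hα
  -- the set of candidate positions
  set Q : Finset (Fin n) :=
    Finset.univ.filter (fun r => i < r ∧ α < y r ∧ y r ≤ cs) with hQ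
  have hQne : Q.Nonempty := by
    refine ⟨y.symm cs, ?_⟩
    have hys : y (y.symm cs) = cs := y.apply_symm_apply cs
    have h1 : ¬ (y.symm cs < i) := fun hlt => hcrem _ hlt hys
    have h2 : y.symm cs ≠ i := by
      intro he
      rw [he] at hys
      exact absurd (hys ▸ hαc) (lt_irrefl _)
    simp only [hQ, Finset.mem_filter, Finset.mem_univ, true_and]
    exact ⟨lt_of_le_of_ne (le_of_not_gt h1) (Ne.symm h2), by rw [hys]; exact ⟨hαc, le_refl _⟩⟩
  set q : Fin n := Q.min' hQne with hq
  have hqmem : q ∈ Q := Q.min'_mem hQne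
  have hqmin : ∀ r ∈ Q, q ≤ r := fun r hr => Q.min'_le r hr
  simp only [hQ, Finset.mem_filter, Finset.mem_univ, true_and] at hqmem
  obtain ⟨hiq, hαβ, hβc⟩ := hqmem
  set β := y q with hβ
  -- the swapped permutation
  set y' : Equiv.Perm (Fin n) := y * Equiv.swap i q with hy'
  have hy'i : y' i = β := by simp [hy', Equiv.swap_apply_left, hβ]
  have hy'q : y' q = α := by simp [hy', Equiv.swap_apply_right, hα]
  have hy'r : ∀ r : Fin n, r ≠ i → r ≠ q → y' r = y r := by
    intro r h1 h2
    simp [hy', Equiv.swap_apply_of_ne_of_ne h1 h2]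
  -- count comparisons
  -- case j < i  or j ≥ q : counts equal
  have hcnt_eq_lt : ∀ (j : Fin n), j < i → ∀ t, cnt y' j t = cnt y j t := by
    intro j hj t
    unfold cnt
    congr 1
    apply Finset.filter_congr
    intro r hr
    simp only [Finset.mem_Iic] at hr
    rw [hy'r r (by exact ne_of_lt (lt_of_le_of_lt hr hj))
      (by exact ne_of_lt (lt_of_le_of_lt hr (lt_trans hj hiq)))]
  have hcnt_eq_ge : ∀ (j : Fin n), q ≤ j → ∀ t, cnt y' j t = cnt y j t := by
    intro j hj t
    unfold cnt
    apply Finset.card_bij (fun (r : Fin n) _ => Equiv.swap i q r)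
    · intro r hr
      simp only [Finset.mem_filter, Finset.mem_Iic] at hr ⊢
      refine ⟨?_, by simpa [hy', Equiv.Perm.mul_apply] using hr.2⟩
      by_cases h1 : r = i
      · rw [h1, Equiv.swap_apply_left]; exact hj
      · by_cases h2 : r = q
        · rw [h2, Equiv.swap_apply_right]; exact le_trans (le_of_lt hiq) hj
        · rw [Equiv.swap_apply_of_ne_of_ne h1 h2]; exact hr.1
    · intro a _ b _ hab
      exact (Equiv.swap i q).injective hab
    · intro x hx
      simp only [Finset.mem_filter, Finset.mem_Iic] at hx
      refine ⟨Equiv.swap i q x, ?_, by rw [Equiv.swap_apply_self]⟩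
      simp only [Finset.mem_filter, Finset.mem_Iic]
      constructor
      · by_cases h1 : x = i
        · rw [h1, Equiv.swap_apply_left]; exact hj
        · by_cases h2 : x = q
          · rw [h2, Equiv.swap_apply_right]; exact le_trans (le_of_lt hiq) hj
          · rw [Equiv.swap_apply_of_ne_of_ne h1 h2]; exact hx.1
      · simpa [hy', Equiv.Perm.mul_apply, Equiv.swap_apply_self] using hx.2
  -- decomposition in the middle range
  have hmid : ∀ (w : Equiv.Perm (Fin n)) (j : Fin n), i ≤ j → ∀ t,
      cnt w j t = (((Finset.Iic j).erase i).filter (fun r => t ≤ (w r : ℕ))).card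
        + (if t ≤ (w i : ℕ) then 1 else 0) := by
    intro w j hij t
    have hims : i ∈ Finset.Iic j := Finset.mem_Iic.2 hij
    unfold cnt
    conv_lhs => rw [← Finset.insert_erase hims]
    rw [Finset.filter_insert]
    split
    · rw [Finset.card_insert_of_notMem (by simp)]
    · simp
  have herase_congr : ∀ (j : Fin n), j < q → ∀ t,
      (((Finset.Iic j).erase i).filter (fun r => t ≤ (y' r : ℕ))).card
        = (((Finset.Iic j).erase i).filter (fun r => t ≤ (y r : ℕ))).card := by
    intro j hjq t
    congr 1
    apply Finset.filter_congr
    intro r hr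
    rw [Finset.mem_erase, Finset.mem_Iic] at hr
    rw [hy'r r hr.1 (ne_of_lt (lt_of_le_of_lt hr.2 hjq))]
  -- the no-tightness claim
  have key : ∀ (j : Fin n) (t : ℕ), i ≤ j → j < q → (α : ℕ) < t → t ≤ (β : ℕ) →
      cnt y j t < cnt v j t := by
    intro j t hij hjq hαt htβ
    by_contra hcon
    push_neg at hcon
    have htight : cnt y j t = cnt v j t := le_antisymm (hy j t) hcon
    have htτ : t < τ := by
      have : (β : ℕ) ≤ (cs : ℕ) := hβc
      omega
    set M : Finset (Fin n) := (Finset.Ioc i j).filter (fun r => τ ≤ (y r : ℕ)) with hM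
    have hMeq : (Finset.Ioc i j).filter (fun r => t ≤ (y r : ℕ)) = M := by
      apply Finset.filter_congr
      intro r hr
      rw [Finset.mem_Ioc] at hr
      constructor
      · intro htr
        have hry : α < y r := by
          rw [Fin.lt_def]; omega
        have hrnotQ : r ∉ Q := by
          intro hrQ
          exact absurd (hqmin r hrQ) (not_le.2 (lt_of_le_of_lt hr.2 hjq))
        have hnle : ¬ (y r ≤ cs) := by
          intro hle
          apply hrnotQ
          simp only [hQ, Finset.mem_filter, Finset.mem_univ, true_and]
          exact ⟨hr.1, hry, hle⟩
        have hyrrem : ∀ r' : Fin n, r' < i → y r' ≠ y r := by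
          intro r' hr' he
          exact absurd (y.injective he) (ne_of_lt (lt_trans hr' hr.1))
        by_contra hτr
        push_neg at hτr
        exact hnle (hcmax (y r) hyrrem hτr)
      · intro hτr
        have : (β : ℕ) ≤ (cs : ℕ) := hβc
        omega
    have hind0α : ¬ (t ≤ (α : ℕ)) := by omega
    have hind0ατ : ¬ (τ ≤ (α : ℕ)) := by
      have : (α : ℕ) < (cs : ℕ) := hαc
      omega
    have hcys : cnt y j t = pcnt y i t + M.card := by
      rw [cnt_split' y hij t, cnt_eq_pcnt_add y i t, if_neg hind0α, hMeq]
      omega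
    have hcyτ : cnt y j τ = pcnt y i τ + M.card := by
      rw [cnt_split' y hij τ, cnt_eq_pcnt_add y i τ, if_neg hind0ατ, ← hM]
      omega
    have hm1 : 1 ≤ M.card := by
      have h1 : pcnt y i t < cnt v i t := hτmin t htτ
      have h2 : cnt v i t ≤ cnt v j t := cnt_mono_col v hij t
      omega
    have hd : pcnt y i τ + M.card ≤ cnt v j τ := hcyτ ▸ hy j τ
    have he : cnt v j τ = cnt v i τ + ((Finset.Ioc i j).filter (fun r => τ ≤ (v r : ℕ))).card :=
      cnt_split' v hij τ
    have hCvpos : 0 < ((Finset.Ioc i j).filter (fun r => τ ≤ (v r : ℕ))).card := by omega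
    obtain ⟨r₀, hr₀⟩ := Finset.card_pos.mp hCvpos
    rw [Finset.mem_filter, Finset.mem_Ioc] at hr₀
    have hfar : ∀ r : Fin n, j < r → τ ≤ (v r : ℕ) := by
      intro r hjr
      have hr₀r : r₀ < r := lt_of_le_of_lt hr₀.1.2 hjr
      have : v r₀ < v r := hv2 r₀ r hr₀r (by
        have : (i : ℕ) < (r₀ : ℕ) := hr₀.1.1
        omega)
      have : (v r₀ : ℕ) ≤ (v r : ℕ) := le_of_lt this
      omega
    have hn : 0 < n := i.pos
    set top : Fin n := ⟨n - 1, by omega⟩ with htop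
    have htople : ∀ r : Fin n, r ≤ top := by
      intro r
      have := r.isLt
      rw [Fin.le_def]
      simp only [htop]
      omega
    have htot : cnt y top τ = cnt v top τ := by
      rw [cnt_total y hn, cnt_total v hn]
    have hsy : cnt y top τ = cnt y j τ
        + ((Finset.Ioc j top).filter (fun r => τ ≤ (y r : ℕ))).card :=
      cnt_split' y (htople j) τ
    have hsv : cnt v top τ = cnt v j τ
        + ((Finset.Ioc j top).filter (fun r => τ ≤ (v r : ℕ))).card :=
      cnt_split' v (htople j) τ
    have hFv : (Finset.Ioc j top).filter (fun r => τ ≤ (v r : ℕ)) = Finset.Ioc j top := by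
      apply Finset.filter_true_of_mem
      intro r hr
      exact hfar r (Finset.mem_Ioc.1 hr).1
    have hcard_le : (Finset.Ioc j top).card
        ≤ ((Finset.Ioc j top).filter (fun r => τ ≤ (y r : ℕ))).card := by
      rw [hFv] at hsv
      omega
    have hFy : (Finset.Ioc j top).filter (fun r => τ ≤ (y r : ℕ)) = Finset.Ioc j top :=
      Finset.eq_of_subset_of_card_le (Finset.filter_subset _ _) hcard_le
    have hqmem' : q ∈ (Finset.Ioc j top).filter (fun r => τ ≤ (y r : ℕ)) := by
      rw [hFy]
      exact Finset.mem_Ioc.2 ⟨hjq, htople q⟩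
    have : τ ≤ (β : ℕ) := (Finset.mem_filter.1 hqmem').2
    have : (β : ℕ) ≤ (cs : ℕ) := hβc
    omega
  -- assemble
  refine ⟨y', ?_, ?_, fun r hr => hy'r r (ne_of_lt hr) (ne_of_lt (lt_trans hr hiq)),
    by rw [hy'i]; exact hαβ, by rw [hy'i]; exact hβc⟩
  · intro j t
    rcases lt_or_ge j i with hj | hij
    · rw [hcnt_eq_lt j hj t]; exact hy j t
    rcases le_or_gt q j with hj | hjq
    · rw [hcnt_eq_ge j hj t]; exact hy j t
    rw [hmid y' j hij t, herase_congr j hjq t, hy'i]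
    by_cases h1 : t ≤ (β : ℕ)
    · rw [if_pos h1]
      by_cases h2 : t ≤ (α : ℕ)
      · have := hmid y j hij t
        rw [if_pos h2] at this
        rw [← this]
        exact hy j t
      · push_neg at h2
        have hk := key j t hij hjq h2 h1
        have := hmid y j hij t
        rw [if_neg (by omega)] at this
        omega
    · rw [if_neg h1]
      have := hmid y j hij t
      have hle : (((Finset.Iic j).erase i).filter (fun r => t ≤ (y r : ℕ))).card ≤ cnt y j t := by
        omega
      exact le_trans hle (hy j t)
  · intro j t
    rcases lt_or_ge j i with hj | hij
    · rw [hcnt_eq_lt j hj t]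
    rcases le_or_gt q j with hj | hjq
    · rw [hcnt_eq_ge j hj t]
    rw [hmid y' j hij t, herase_congr j hjq t, hy'i, hmid y j hij t]
    have hcast : (α : ℕ) ≤ (β : ℕ) := le_of_lt hαβ
    by_cases h2 : t ≤ (α : ℕ)
    · rw [if_pos h2, if_pos (by omega)]
    · rw [if_neg h2]
      omega


lemma pcnt_congr {y y' : Equiv.Perm (Fin n)} {i : Fin n}
    (h : ∀ r : Fin n, r < i → y' r = y r) (t : ℕ) : pcnt y' i t = pcnt y i t := by
  unfold pcnt
  congr 1
  apply Finset.filter_congr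
  intro r hr
  rw [h r (Finset.mem_Iio.1 hr)]

lemma lift_step {k : ℕ} {v : Equiv.Perm (Fin n)}
    (hv2 : ∀ a b : Fin n, a < b → k ≤ (a : ℕ) → v a < v b)
    {i : Fin n} (hik : k ≤ (i : ℕ)) {τ : ℕ} {cs : Fin n} (hclt : (cs : ℕ) < τ) :
    ∀ (d : ℕ) (y : Equiv.Perm (Fin n)),
      ((cs : ℕ) - (y i : ℕ)) ≤ d →
      (∀ (j : Fin n) (t : ℕ), cnt y j t ≤ cnt v j t) →
      (cnt v i τ ≤ pcnt y i τ) →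
      (∀ t : ℕ, t < τ → pcnt y i t < cnt v i t) →
      (∀ r : Fin n, r < i → y r ≠ cs) →
      (∀ c : Fin n, (∀ r : Fin n, r < i → y r ≠ c) → (c : ℕ) < τ → c ≤ cs) →
      (y i ≤ cs) →
      ∃ y' : Equiv.Perm (Fin n),
        (∀ (j : Fin n) (t : ℕ), cnt y' j t ≤ cnt v j t) ∧
        (∀ (j : Fin n) (t : ℕ), cnt y j t ≤ cnt y' j t) ∧
        (∀ r : Fin n, r < i → y' r = y r) ∧
        y' i = cs := by
  intro d
  induction d with
  | zero =>
    intro y hd hy _ _ _ _ hle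
    have : y i = cs := le_antisymm hle (by rw [Fin.le_def]; omega)
    exact ⟨y, hy, fun j t => le_refl _, fun r _ => rfl, this⟩
  | succ d ih =>
    intro y hd hy hτS hτmin hcrem hcmax hle
    by_cases heq : y i = cs
    · exact ⟨y, hy, fun j t => le_refl _, fun r _ => rfl, heq⟩
    · have hlt : y i < cs := lt_of_le_of_ne hle heq
      obtain ⟨y'', h1, h2, h3, h4, h5⟩ := swap_step hv2 hy hik hτS hτmin hcrem hclt hcmax hlt
      have hpc : ∀ t, pcnt y'' i t = pcnt y i t := pcnt_congr h3
      obtain ⟨y', g1, g2, g3, g4⟩ := ih y''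
        (by rw [Fin.lt_def] at h4; rw [Fin.le_def] at hle; omega)
        h1
        (by rw [hpc]; exact hτS)
        (fun t ht => by rw [hpc]; exact hτmin t ht)
        (fun r hr => by rw [h3 r hr]; exact hcrem r hr)
        (fun c hc hct => hcmax c (fun r hr => by rw [← h3 r hr]; exact hc r hr) hct)
        h5
      exact ⟨y', g1, fun j t => le_trans (h2 j t) (g2 j t),
        fun r hr => by rw [g3 r hr, h3 r hr], g4⟩


lemma bruhatLE_iff_cnt {y w : Equiv.Perm (Fin n)} :
    bruhatLE y w ↔ ∀ (j : Fin n) (t : ℕ), cnt y j t ≤ cnt w j t := by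
  classical
  have hcard : ∀ (z : Equiv.Perm (Fin n)) (j : Fin n),
      ((Finset.Iic j).image z).card = (Finset.Iic j).card := fun z j =>
    Finset.card_image_of_injective _ z.injective
  constructor
  · intro h j t
    have := (galeList_iff_count (by rw [hcard, hcard])).1 (h j) t
    rwa [image_filter_card, image_filter_card] at this
  · intro h j
    apply (galeList_iff_count (by rw [hcard, hcard])).2
    intro t
    rw [image_filter_card, image_filter_card]
    exact h j t

end BruhatAux

open BruhatAux in
/-- For `v` a `k`-Grassmannian permutation and `u ≤ v`, there is a unique
maximal element of the Bruhat interval `[u,v]` agreeing with `u` on the first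
`k` positions (as an ordered list). -/
theorem stmt4 {n k : ℕ} (u v : Equiv.Perm (Fin n)) (hv : IsGrassmannian k v)
    (huv : bruhatLE u v) :
    ∃! u' : Equiv.Perm (Fin n),
      (bruhatLE u u' ∧ bruhatLE u' v ∧ (∀ j : Fin n, (j : ℕ) < k → u' j = u j)) ∧
      (∀ y : Equiv.Perm (Fin n), bruhatLE u y → bruhatLE y v →
        (∀ j : Fin n, (j : ℕ) < k → y j = u j) → bruhatLE y u') := by
  classical
  rcases Nat.eq_zero_or_pos n with hn0 | hn0
  · subst hn0
    have hall : ∀ a b : Equiv.Perm (Fin 0), a = b := fun a b => Equiv.ext fun x => x.elim0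
    have hble : ∀ a b : Equiv.Perm (Fin 0), bruhatLE a b := fun a b => fun i => i.elim0
    exact ⟨u, ⟨⟨hble _ _, hble _ _, fun j _ => rfl⟩,
      fun y _ _ _ => hble _ _⟩, fun w _ => hall w u⟩
  have hvu_cnt : ∀ (j : Fin n) (t : ℕ), cnt u j t ≤ cnt v j t := bruhatLE_iff_cnt.1 huv
  set T : Finset (Equiv.Perm (Fin n)) :=
    Finset.univ.filter (fun y : Equiv.Perm (Fin n) =>
      (∀ r : Fin n, (r : ℕ) < k → y r = u r) ∧
      ∀ (j : Fin n) (t : ℕ), cnt y j t ≤ cnt v j t) with hT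
  have hmemT : ∀ y : Equiv.Perm (Fin n), y ∈ T ↔
      ((∀ r : Fin n, (r : ℕ) < k → y r = u r) ∧
       ∀ (j : Fin n) (t : ℕ), cnt y j t ≤ cnt v j t) := by
    intro y
    simp only [hT, Finset.mem_filter, Finset.mem_univ, true_and]
  have huT : u ∈ T := (hmemT u).2 ⟨fun r _ => rfl, hvu_cnt⟩
  set W : Equiv.Perm (Fin n) → ℕ :=
    fun y => ∑ p ∈ Finset.univ ×ˢ Finset.range (n+1), cnt y p.1 p.2 with hW
  obtain ⟨z, hzT, hzmax⟩ := T.exists_max_image W ⟨u, huT⟩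
  have hz_pre : ∀ r : Fin n, (r : ℕ) < k → z r = u r := ((hmemT z).1 hzT).1
  have hz_feas : ∀ (j : Fin n) (t : ℕ), cnt z j t ≤ cnt v j t := ((hmemT z).1 hzT).2
  -- a feasible permutation sharing a prefix with `z` is dominated by `z`
  have main : ∀ d : ℕ, ∀ y : Equiv.Perm (Fin n), y ∈ T →
      (∀ r : Fin n, (r : ℕ) + d < n → y r = z r) →
      ∀ (j : Fin n) (t : ℕ), cnt y j t ≤ cnt z j t := by
    intro d
    induction d with
    | zero =>
      intro y _ hagree j t
      have : y = z := Equiv.ext fun r => hagree r (by have := r.isLt; omega)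
      rw [this]
    | succ d ih =>
      intro y hyT hagree
      have hy_pre := ((hmemT y).1 hyT).1
      have hy_feas := ((hmemT y).1 hyT).2
      set i : Fin n := ⟨n - d - 1, by omega⟩ with hi
      have hival : (i : ℕ) = n - d - 1 := rfl
      have hagree' : ∀ r : Fin n, r < i → y r = z r := by
        intro r hr
        rw [Fin.lt_def, hival] at hr
        exact hagree r (by omega)
      have hext : ∀ (w : Equiv.Perm (Fin n)), (∀ r : Fin n, r < i → w r = z r) → w i = z i →
          (∀ r : Fin n, (r : ℕ) + d < n → w r = z r) := by
        intro w h1 h2 r hrd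
        rcases lt_or_eq_of_le (show (r : ℕ) ≤ n - d - 1 by omega) with hlt | heq
        · exact h1 r (by rw [Fin.lt_def, hival]; omega)
        · have : r = i := Fin.ext (by rw [hival]; exact heq)
          rw [this]; exact h2
      by_cases hik : (i : ℕ) < k
      · have hyi : y i = z i := by rw [hy_pre i hik, hz_pre i hik]
        exact ih y hyT (hext y hagree' hyi)
      · push_neg at hik
        obtain ⟨τ, cs, hτS, hτmin, hclt, hcrem_z, hcmax_z⟩ := exists_tau_cs v z hz_feas i
        have hfeas_lt_tau : ∀ w : Equiv.Perm (Fin n),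
            (∀ (j : Fin n) (t : ℕ), cnt w j t ≤ cnt v j t) →
            (∀ t : ℕ, pcnt w i t = pcnt z i t) → (w i : ℕ) < τ := by
          intro w hwf hwp
          by_contra hcon
          push_neg at hcon
          have h1 : cnt w i τ = pcnt w i τ + 1 := by
            rw [cnt_eq_pcnt_add w i τ, if_pos hcon]
          have h2 := hwf i τ
          have h3 := hwp τ
          omega
        have hzi_lt : (z i : ℕ) < τ := hfeas_lt_tau z hz_feas (fun t => rfl)
        have hinj_ne : ∀ (w : Equiv.Perm (Fin n)) (r : Fin n), r < i → w r ≠ w i :=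
          fun w r hr he => absurd (w.injective he) (ne_of_lt hr)
        have hzi_le : z i ≤ cs := hcmax_z (z i) (hinj_ne z) hzi_lt
        -- the maximal element is greedy at position i
        have hzics : z i = cs := by
          by_contra hne
          obtain ⟨z', hz'1, hz'2, hz'3, hz'4⟩ :=
            lift_step hv.2 hik hclt ((cs : ℕ) - (z i : ℕ)) z (le_refl _)
              hz_feas hτS hτmin hcrem_z hcmax_z hzi_le
          have hz'T : z' ∈ T := by
            refine (hmemT z').2 ⟨fun r hr => ?_, hz'1⟩
            rw [hz'3 r (by rw [Fin.lt_def, hival]; omega), hz_pre r hr]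
          have hne' : z' ≠ z := by
            intro he
            rw [he] at hz'4
            exact hne hz'4
          have hWlt : W z < W z' := by
            have hle : ∀ p ∈ Finset.univ ×ˢ Finset.range (n+1),
                cnt z p.1 p.2 ≤ cnt z' p.1 p.2 := fun p _ => hz'2 p.1 p.2
            have hex : ∃ p ∈ Finset.univ ×ˢ Finset.range (n+1),
                cnt z p.1 p.2 < cnt z' p.1 p.2 := by
              by_contra hcon
              push_neg at hcon
              apply hne'
              apply eq_of_cnt_eq
              intro j t
              rcases le_or_gt t n with htn | htn
              · have hp : (j, t) ∈ Finset.univ ×ˢ Finset.range (n+1) := by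
                  rw [Finset.mem_product]
                  exact ⟨Finset.mem_univ _, Finset.mem_range.2 (by omega)⟩
                exact le_antisymm (hcon (j, t) hp) (hle (j, t) hp)
              · rw [cnt_zero_of_ge z' j (by omega), cnt_zero_of_ge z j (by omega)]
            exact Finset.sum_lt_sum hle hex
          exact absurd (hzmax z' hz'T) (not_le.2 hWlt)
        -- lift y to agree with z at position i
        have hpc_y : ∀ t : ℕ, pcnt y i t = pcnt z i t := fun t => pcnt_congr hagree' t
        have hcrem_y : ∀ r : Fin n, r < i → y r ≠ cs := by
          intro r hr
          rw [hagree' r hr]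
          exact hcrem_z r hr
        have hcmax_y : ∀ c : Fin n, (∀ r : Fin n, r < i → y r ≠ c) → (c : ℕ) < τ → c ≤ cs := by
          intro c hc hct
          refine hcmax_z c (fun r hr => ?_) hct
          rw [← hagree' r hr]
          exact hc r hr
        have hτS_y : cnt v i τ ≤ pcnt y i τ := by rw [hpc_y]; exact hτS
        have hτmin_y : ∀ t : ℕ, t < τ → pcnt y i t < cnt v i t := by
          intro t ht
          rw [hpc_y]
          exact hτmin t ht
        have hyi_lt : (y i : ℕ) < τ := hfeas_lt_tau y hy_feas hpc_y
        have hyi_le : y i ≤ cs := hcmax_y (y i) (hinj_ne y) hyi_lt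
        obtain ⟨y', hy'1, hy'2, hy'3, hy'4⟩ :=
          lift_step hv.2 hik hclt ((cs : ℕ) - (y i : ℕ)) y (le_refl _)
            hy_feas hτS_y hτmin_y hcrem_y hcmax_y hyi_le
        have hy'T : y' ∈ T := by
          refine (hmemT y').2 ⟨fun r hr => ?_, hy'1⟩
          rw [hy'3 r (by rw [Fin.lt_def, hival]; omega), hy_pre r hr]
        have hdom := ih y' hy'T (hext y' (fun r hr => by rw [hy'3 r hr]; exact hagree' r hr)
          (by rw [hy'4, hzics]))
        exact fun j t => le_trans (hy'2 j t) (hdom j t)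
  have hvac : ∀ y : Equiv.Perm (Fin n), ∀ r : Fin n, (r : ℕ) + n < n → y r = z r := by
    intro y r hr
    have := r.isLt
    omega
  have hmain' : ∀ y : Equiv.Perm (Fin n), y ∈ T → bruhatLE y z := by
    intro y hyT
    exact bruhatLE_iff_cnt.2 (main n y hyT (hvac y))
  refine ⟨z, ⟨⟨hmain' u huT, bruhatLE_iff_cnt.2 hz_feas, fun j hj => hz_pre j hj⟩, ?_⟩, ?_⟩
  · intro y _ hyv hyp
    exact hmain' y ((hmemT y).2 ⟨hyp, bruhatLE_iff_cnt.1 hyv⟩)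
  · rintro w ⟨⟨hw1, hw2, hw3⟩, hwmax⟩
    have hwT : w ∈ T := (hmemT w).2 ⟨hw3, bruhatLE_iff_cnt.1 hw2⟩
    have h1 : ∀ (j : Fin n) (t : ℕ), cnt w j t ≤ cnt z j t :=
      bruhatLE_iff_cnt.1 (hmain' w hwT)
    have h2 : ∀ (j : Fin n) (t : ℕ), cnt z j t ≤ cnt w j t :=
      bruhatLE_iff_cnt.1 (hwmax z (hmain' u huT) (bruhatLE_iff_cnt.2 hz_feas)
        (fun j hj => hz_pre j hj))
    exact eq_of_cnt_eq (fun j t => le_antisymm (h1 j t) (h2 j t))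
end

section
/- Let v ∈ S_n be k-Grassmannian and let u ≤ v. Then the unique maximal element of the Bruhat interval [u,v] whose initial set {y(1),...,y(k)} equals {u(1),...,u(k)} coincides with the unique maximal element of the coset u·(S_k × S_{n-k}) intersected with [id,v] having that initial set; in particular [u,v] ∩ u·(S_k × S_{n-k}) has a unique maximal element. -/
/-- The initial set `y[k] = {y(1),…,y(k)}` of a permutation. -/
def initSet {n : ℕ} (k : ℕ) (y : Equiv.Perm (Fin n)) : Finset (Fin n) :=
  (Finset.univ.filter fun j : Fin n => (j : ℕ) < k).image y

/-- Membership in the coset `u · (S_k × S_{n-k})`, where `S_k × S_{n-k}` is the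
subgroup of permutations preserving the first `k` positions setwise. -/
def inCoset {n : ℕ} (k : ℕ) (u y : Equiv.Perm (Fin n)) : Prop :=
  ∃ σ : Equiv.Perm (Fin n), (∀ j : Fin n, ((σ j : ℕ) < k ↔ (j : ℕ) < k)) ∧ y = u * σ

namespace Stmt5Aux

open Finset

variable {n : ℕ}

def cnt (x : Fin n) (S : Finset (Fin n)) : ℕ := (S.filter (fun y => x ≤ y)).card

def cntGT (x : Fin n) (S : Finset (Fin n)) : ℕ := (S.filter (fun y => x < y)).card

lemma cnt_le_card (x : Fin n) (S : Finset (Fin n)) : cnt x S ≤ S.card :=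
  card_filter_le _ _

lemma cnt_mono {S T : Finset (Fin n)} (h : S ⊆ T) (x : Fin n) : cnt x S ≤ cnt x T :=
  card_le_card (filter_subset_filter _ h)

lemma cnt_anti {S : Finset (Fin n)} {x x' : Fin n} (h : x ≤ x') : cnt x' S ≤ cnt x S := by
  apply card_le_card
  intro y hy
  simp only [mem_filter] at *
  exact ⟨hy.1, le_trans h hy.2⟩

lemma cnt_insert {a : Fin n} {S : Finset (Fin n)} (ha : a ∉ S) (x : Fin n) :
    cnt x (insert a S) = cnt x S + if x ≤ a then 1 else 0 := by
  unfold cnt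
  rw [filter_insert]
  split
  · rw [card_insert_of_notMem (fun h => ha (mem_filter.1 h).1)]
  · rfl

lemma cnt_erase {b : Fin n} {S : Finset (Fin n)} (hb : b ∈ S) (x : Fin n) :
    cnt x S = cnt x (S.erase b) + if x ≤ b then 1 else 0 := by
  conv_lhs => rw [← insert_erase hb]
  exact cnt_insert (notMem_erase _ _) x

lemma cntGT_insert {a : Fin n} {S : Finset (Fin n)} (ha : a ∉ S) (x : Fin n) :
    cntGT x (insert a S) = cntGT x S + if x < a then 1 else 0 := by
  unfold cntGT
  rw [filter_insert]
  split
  · rw [card_insert_of_notMem (fun h => ha (mem_filter.1 h).1)]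
  · rfl

lemma cntGT_erase {b : Fin n} {S : Finset (Fin n)} (hb : b ∈ S) (x : Fin n) :
    cntGT x S = cntGT x (S.erase b) + if x < b then 1 else 0 := by
  conv_lhs => rw [← insert_erase hb]
  exact cntGT_insert (notMem_erase _ _) x

lemma cnt_eq_cntGT_add (x : Fin n) (S : Finset (Fin n)) :
    cnt x S = cntGT x S + if x ∈ S then 1 else 0 := by
  unfold cnt cntGT
  by_cases hx : x ∈ S
  · simp only [hx, if_true]
    have : S.filter (fun y => x ≤ y) = insert x (S.filter (fun y => x < y)) := by
      ext y
      simp only [mem_filter, mem_insert]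
      constructor
      · rintro ⟨hy, hxy⟩
        rcases eq_or_lt_of_le hxy with h | h
        · exact Or.inl h.symm
        · exact Or.inr ⟨hy, h⟩
      · rintro (rfl | ⟨hy, hxy⟩)
        · exact ⟨hx, le_refl _⟩
        · exact ⟨hy, le_of_lt hxy⟩
    rw [this, card_insert_of_notMem (fun h => lt_irrefl x (mem_filter.1 h).2)]
  · rw [if_neg hx, add_zero]
    congr 1
    apply filter_congr
    intro y hy
    constructor
    · intro h
      exact lt_of_le_of_ne h (fun he => hx (he ▸ hy))
    · exact le_of_lt

lemma cnt_pos {a : Fin n} {S : Finset (Fin n)} (ha : a ∈ S) : 1 ≤ cnt a S := by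
  apply card_pos.2
  exact ⟨a, mem_filter.2 ⟨ha, le_refl _⟩⟩

lemma exists_ge_of_cnt_pos {x : Fin n} {S : Finset (Fin n)} (h : 1 ≤ cnt x S) :
    ∃ w ∈ S, x ≤ w := by
  obtain ⟨w, hw⟩ := card_pos.1 h
  exact ⟨w, (mem_filter.1 hw).1, (mem_filter.1 hw).2⟩

lemma cnt_eq_card {x : Fin n} {S : Finset (Fin n)} (h : ∀ y ∈ S, x ≤ y) :
    cnt x S = S.card := by
  unfold cnt
  rw [filter_true_of_mem h]

lemma cnt_eq_zero {x : Fin n} {S : Finset (Fin n)} (h : ∀ y ∈ S, ¬ x ≤ y) :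
    cnt x S = 0 := by
  unfold cnt
  rw [filter_false_of_mem h, card_empty]

lemma cntGT_le_of_cnt_le {S T : Finset (Fin n)} (h : ∀ x, cnt x S ≤ cnt x T) (x : Fin n) :
    cntGT x S ≤ cntGT x T := by
  by_cases hx : (x : ℕ) + 1 < n
  · have e : ∀ (U : Finset (Fin n)), cntGT x U = cnt ⟨(x : ℕ) + 1, hx⟩ U := by
      intro U
      unfold cnt cntGT
      congr 1
    rw [e, e]
    exact h _
  · have e : ∀ (U : Finset (Fin n)), cntGT x U = 0 := by
      intro U
      unfold cntGT
      rw [card_eq_zero, filter_eq_empty_iff]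
      intro y _
      rw [Fin.lt_def]
      omega
    rw [e, e]

lemma eq_of_cnt_eq {S T : Finset (Fin n)} (h : ∀ x, cnt x S = cnt x T) : S = T := by
  have hGT : ∀ x, cntGT x S = cntGT x T := fun x =>
    le_antisymm (cntGT_le_of_cnt_le (fun x => (h x).le) x)
      (cntGT_le_of_cnt_le (fun x => (h x).ge) x)
  ext a
  have h1 := cnt_eq_cntGT_add a S
  have h2 := cnt_eq_cntGT_add a T
  have h3 := h a
  have h4 := hGT a
  constructor
  · intro haS
    by_contra haT
    rw [if_pos haS] at h1
    rw [if_neg haT, add_zero] at h2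
    omega
  · intro haT
    by_contra haS
    rw [if_pos haT] at h2
    rw [if_neg haS, add_zero] at h1
    omega

def wt (S : Finset (Fin n)) : ℕ := ∑ x : Fin n, cnt x S

lemma wt_mono {S T : Finset (Fin n)} (h : ∀ x, cnt x S ≤ cnt x T) : wt S ≤ wt T :=
  Finset.sum_le_sum (fun x _ => h x)

lemma cnt_eq_of_wt_le {S T : Finset (Fin n)} (hle : ∀ x, cnt x S ≤ cnt x T)
    (hw : wt T ≤ wt S) (x : Fin n) : cnt x S = cnt x T := by
  by_contra hne
  have hlt : cnt x S < cnt x T := lt_of_le_of_ne (hle x) hne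
  have : wt S < wt T := Finset.sum_lt_sum (fun i _ => hle i) ⟨x, mem_univ x, hlt⟩
  omega

lemma exists_join {i : ℕ} {S T : Finset (Fin n)} (hS : S.card = i) (hT : T.card = i) :
    ∃ J : Finset (Fin n), J.card = i ∧ (∀ a ∈ J, a ∈ S ∨ a ∈ T) ∧
      (∀ a, a ∈ S → a ∈ T → a ∈ J) ∧ (∀ x, cnt x S ≤ cnt x J) ∧ (∀ x, cnt x T ≤ cnt x J) ∧
      (∀ x, cnt x J ≤ max (cnt x S) (cnt x T)) := by
  classical
  set eS := S.orderEmbOfFin hS with heS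
  set eT := T.orderEmbOfFin hT with heT
  set f : Fin i → Fin n := fun r => max (eS r) (eT r) with hf
  have hmono : StrictMono f := fun r r' h =>
    max_lt_max (eS.strictMono h) (eT.strictMono h)
  have hinj : Function.Injective f := hmono.injective
  refine ⟨Finset.image f univ, ?_, ?_, ?_, ?_, ?_, ?_⟩
  · rw [card_image_of_injective _ hinj, card_univ, Fintype.card_fin]
  · intro a ha
    obtain ⟨r, _, hr⟩ := mem_image.1 ha
    rcases max_cases (eS r) (eT r) with ⟨h1, _⟩ | ⟨h1, _⟩
    · exact Or.inl (by rw [← hr, hf]; simp only [h1]; exact S.orderEmbOfFin_mem hS r)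
    · exact Or.inr (by rw [← hr, hf]; simp only [h1]; exact T.orderEmbOfFin_mem hT r)
  · intro a haS haT
    have hrS : ∃ p, eS p = a := by
      have : a ∈ Set.range ⇑eS := by rw [heS, Finset.range_orderEmbOfFin]; exact haS
      exact this
    have hrT : ∃ q, eT q = a := by
      have : a ∈ Set.range ⇑eT := by rw [heT, Finset.range_orderEmbOfFin]; exact haT
      exact this
    obtain ⟨p, hp⟩ := hrS
    obtain ⟨q, hq⟩ := hrT
    rcases le_total p q with hpq | hpq
    · apply mem_image.2 ⟨p, mem_univ p, ?_⟩
      have : eT p ≤ a := by rw [← hq]; exact eT.monotone hpq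
      rw [hf]
      simp only
      rw [hp]
      exact max_eq_left this
    · apply mem_image.2 ⟨q, mem_univ q, ?_⟩
      have : eS q ≤ a := by rw [← hp]; exact eS.monotone hpq
      rw [hf]
      simp only
      rw [hq]
      exact max_eq_right this
  · intro x
    have hSim : S = Finset.image (fun r => eS r) univ := by
      ext a
      simp only [mem_image, mem_univ, true_and]
      constructor
      · intro ha
        have : a ∈ Set.range ⇑eS := by rw [heS, Finset.range_orderEmbOfFin]; exact ha
        exact this
      · rintro ⟨r, rfl⟩
        exact S.orderEmbOfFin_mem hS r
    rw [hSim]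
    unfold cnt
    rw [filter_image, filter_image]
    rw [card_image_of_injective _ (eS.injective), card_image_of_injective _ hinj]
    apply card_le_card
    intro r hr
    simp only [mem_filter, mem_univ, true_and] at *
    exact le_trans hr (le_max_left _ _)
  · intro x
    have hTim : T = Finset.image (fun r => eT r) univ := by
      ext a
      simp only [mem_image, mem_univ, true_and]
      constructor
      · intro ha
        have : a ∈ Set.range ⇑eT := by rw [heT, Finset.range_orderEmbOfFin]; exact ha
        exact this
      · rintro ⟨r, rfl⟩
        exact T.orderEmbOfFin_mem hT r
    rw [hTim]
    unfold cnt
    rw [filter_image, filter_image]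
    rw [card_image_of_injective _ (eT.injective), card_image_of_injective _ hinj]
    apply card_le_card
    intro r hr
    simp only [mem_filter, mem_univ, true_and] at *
    exact le_trans hr (le_max_right _ _)
  · intro x
    have hSim : S = Finset.image (fun r => eS r) univ := by
      ext a
      simp only [mem_image, mem_univ, true_and]
      constructor
      · intro ha
        have : a ∈ Set.range ⇑eS := by rw [heS, Finset.range_orderEmbOfFin]; exact ha
        exact this
      · rintro ⟨r, rfl⟩
        exact S.orderEmbOfFin_mem hS r
    have hTim : T = Finset.image (fun r => eT r) univ := by
      ext a
      simp only [mem_image, mem_univ, true_and]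
      constructor
      · intro ha
        have : a ∈ Set.range ⇑eT := by rw [heT, Finset.range_orderEmbOfFin]; exact ha
        exact this
      · rintro ⟨r, rfl⟩
        exact T.orderEmbOfFin_mem hT r
    conv_rhs => rw [hSim, hTim]
    unfold cnt
    rw [filter_image, filter_image, filter_image]
    rw [card_image_of_injective _ (eS.injective), card_image_of_injective _ (eT.injective),
      card_image_of_injective _ hinj]
    set U := univ.filter (fun r => x ≤ eS r) with hU
    set V := univ.filter (fun r => x ≤ eT r) with hV
    have hun : univ.filter (fun r => x ≤ f r) = U ∪ V := by
      ext r
      simp only [hU, hV, mem_union, mem_filter, mem_univ, true_and, hf, le_max_iff]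
    rw [hun]
    have hcomp : U ⊆ V ∨ V ⊆ U := by
      by_contra hc
      push_neg at hc
      obtain ⟨hc1, hc2⟩ := hc
      obtain ⟨c, hcU, hcV⟩ := not_subset.1 hc1
      obtain ⟨d, hdV, hdU⟩ := not_subset.1 hc2
      simp only [hU, hV, mem_filter, mem_univ, true_and] at hcU hcV hdV hdU
      rcases le_total c d with hcd | hcd
      · exact hdU (le_trans hcU (eS.monotone hcd))
      · exact hcV (le_trans hdV (eT.monotone hcd))
    rcases hcomp with h | h
    · rw [union_eq_right.2 h]
      exact le_max_right _ _
    · rw [union_eq_left.2 h]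
      exact le_max_left _ _

lemma counts_of_forall₂ {l₁ l₂ : List (Fin n)} (h : List.Forall₂ (· ≤ ·) l₁ l₂) (x : Fin n) :
    l₁.countP (fun y => x ≤ y) ≤ l₂.countP (fun y => x ≤ y) := by
  induction h with
  | nil => exact le_refl _
  | @cons a b t₁ t₂ hab htl ih =>
    rw [List.countP_cons, List.countP_cons]
    by_cases hxa : x ≤ a
    · have hxb : x ≤ b := le_trans hxa hab
      simp only [hxa, hxb, decide_eq_true_eq, if_pos]
      omega
    · have h1 : (if (decide (x ≤ b) = true) then 1 else 0) ≤ 1 := by split <;> omega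
      simp only [hxa, decide_eq_true_eq, if_false]
      omega

lemma forall₂_of_counts : ∀ (l₁ l₂ : List (Fin n)), l₁.Pairwise (· < ·) → l₂.Pairwise (· < ·) →
    l₁.length = l₂.length → (∀ x, l₁.countP (fun y => x ≤ y) ≤ l₂.countP (fun y => x ≤ y)) →
    List.Forall₂ (· ≤ ·) l₁ l₂
  | [], [], _, _, _, _ => List.Forall₂.nil
  | [], (b :: t₂), _, _, hlen, _ => by simp at hlen
  | (a :: t₁), [], _, _, hlen, _ => by simp at hlen
  | (a :: t₁), (b :: t₂), h₁, h₂, hlen, hcnt => by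
    have hs₁ := List.pairwise_cons.1 h₁
    have hs₂ := List.pairwise_cons.1 h₂
    have hab : a ≤ b := by
      by_contra hba
      push_neg at hba
      have hfull : (a :: t₁).countP (fun y => decide (a ≤ y)) = t₁.length + 1 := by
        rw [List.countP_cons]
        have : t₁.countP (fun y => decide (a ≤ y)) = t₁.length :=
          List.countP_eq_length.2 (fun y hy => by simp [le_of_lt (hs₁.1 y hy)])
        simp [this]
      have hsmall : (b :: t₂).countP (fun y => decide (a ≤ y)) ≤ t₂.length := by
        rw [List.countP_cons]
        have h3 : ¬ (a ≤ b) := not_le.2 hba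
        simp only [h3, decide_eq_true_eq, if_false, add_zero]
        exact List.countP_le_length
      have := hcnt a
      simp only [List.length_cons] at hlen
      omega
    refine List.Forall₂.cons hab (forall₂_of_counts t₁ t₂ hs₁.2 hs₂.2 (by
      simp only [List.length_cons] at hlen; omega) ?_)
    intro x
    by_cases hx1 : x ≤ a
    · have hx2 : x ≤ b := le_trans hx1 hab
      have := hcnt x
      rw [List.countP_cons, List.countP_cons] at this
      simp only [hx1, hx2, decide_eq_true_eq, if_pos] at this
      omega
    · by_cases hx2 : x ≤ b
      · have hfull : t₂.countP (fun y => decide (x ≤ y)) = t₂.length :=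
          List.countP_eq_length.2 (fun y hy => by simp [le_of_lt (lt_of_le_of_lt hx2 (hs₂.1 y hy))])
        have hlen' : t₁.length = t₂.length := by
          simp only [List.length_cons] at hlen; omega
        rw [hfull, ← hlen']
        exact List.countP_le_length
      · have := hcnt x
        rw [List.countP_cons, List.countP_cons] at this
        simp only [hx1, hx2, decide_eq_true_eq, if_false, add_zero] at this
        exact this

lemma countP_sort_eq (S : Finset (Fin n)) (x : Fin n) :
    (S.sort (· ≤ ·)).countP (fun y => x ≤ y) = cnt x S := by
  have h1 : ((S.sort (· ≤ ·) : List (Fin n)) : Multiset (Fin n)) = S.val := Finset.sort_eq _ _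
  have h2 : Multiset.countP (fun y => x ≤ y) (S.val) = (S.filter (fun y => x ≤ y)).card := by
    rw [Multiset.countP_eq_card_filter]
    rfl
  calc (S.sort (· ≤ ·)).countP (fun y => x ≤ y)
      = Multiset.countP (fun y => x ≤ y) ((S.sort (· ≤ ·) : List (Fin n)) : Multiset (Fin n)) :=
        (Multiset.coe_countP _ _).symm
    _ = Multiset.countP (fun y => x ≤ y) S.val := by rw [h1]
    _ = cnt x S := h2

lemma galeList_iff (I J : Finset (Fin n)) :
    galeList I J ↔ (I.card = J.card ∧ ∀ x, cnt x I ≤ cnt x J) := by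
  unfold galeList
  constructor
  · intro h
    constructor
    · rw [← Finset.length_sort (α := Fin n) (· ≤ ·), ← Finset.length_sort (α := Fin n) (· ≤ ·)]
      exact h.length_eq
    · intro x
      rw [← countP_sort_eq I x, ← countP_sort_eq J x]
      exact counts_of_forall₂ h x
  · rintro ⟨hcard, hcnt⟩
    apply forall₂_of_counts _ _ (Finset.sortedLT_sort I).pairwise (Finset.sortedLT_sort J).pairwise
    · rw [Finset.length_sort, Finset.length_sort]
      exact hcard
    · intro x
      rw [countP_sort_eq I x, countP_sort_eq J x]
      exact hcnt x

lemma block1 {i : ℕ} {A W M N : Finset (Fin n)} {vi : Fin n}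
    (hvi : vi ∉ W)
    (hmax : ∀ w ∈ W, w ≤ vi)
    (hMc : M.card = i) (hNc : N.card = i + 1)
    (hMA : M ⊆ A) (hNA : N ⊆ A)
    (hMW : ∀ x, cnt x M ≤ cnt x W)
    (hNW : ∀ x, cnt x N ≤ cnt x (insert vi W))
    (domM : ∀ S : Finset (Fin n), S.card = i → S ⊆ A → (∀ x, cnt x S ≤ cnt x W) →
      ∀ x, cnt x S ≤ cnt x M)
    (domN : ∀ S : Finset (Fin n), S.card = i + 1 → S ⊆ A →
      (∀ x, cnt x S ≤ cnt x (insert vi W)) → ∀ x, cnt x S ≤ cnt x N) :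
    M ⊆ N := by
  intro a ha
  by_contra haN
  have hW' : ∀ x, cnt x (insert vi W) = cnt x W + if x ≤ vi then 1 else 0 := cnt_insert hvi
  have hNne : N.Nonempty := card_pos.1 (by omega)
  obtain ⟨mN, hmNmem, hmNle⟩ : ∃ mN ∈ N, ∀ y ∈ N, y ≤ mN :=
    ⟨N.max' hNne, N.max'_mem hNne, fun y hy => N.le_max' y hy⟩
  have hmNvi : mN ≤ vi := by
    have h1 : 1 ≤ cnt mN N := cnt_pos hmNmem
    have h2 : 1 ≤ cnt mN (insert vi W) := le_trans h1 (hNW mN)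
    obtain ⟨w, hw, hmw⟩ := exists_ge_of_cnt_pos h2
    rcases mem_insert.1 hw with rfl | hw'
    · exact hmw
    · exact le_trans hmw (hmax w hw')
  have hdel : ∀ x, cnt x (N.erase mN) ≤ cnt x W := by
    intro x
    by_cases hx : x ≤ mN
    · have h1 : cnt x N = cnt x (N.erase mN) + 1 := by rw [cnt_erase hmNmem x, if_pos hx]
      have h2 : cnt x (insert vi W) = cnt x W + 1 := by rw [hW' x, if_pos (le_trans hx hmNvi)]
      have h3 := hNW x
      omega
    · have h0 : cnt x N = 0 := cnt_eq_zero (fun y hy hxy => hx (le_trans hxy (hmNle y hy)))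
      have h4 := cnt_mono (erase_subset mN N) x
      omega
  have hdelM : ∀ x, cnt x (N.erase mN) ≤ cnt x M :=
    domM _ (by rw [card_erase_of_mem hmNmem, hNc]; omega) (fun y hy => hNA (erase_subset _ _ hy)) hdel
  have hdelMGT : ∀ x, cntGT x (N.erase mN) ≤ cntGT x M := cntGT_le_of_cnt_le hdelM
  have hs1 : 1 ≤ cnt a M := cnt_pos ha
  have htGT : cnt a N = cntGT a N := by
    rw [cnt_eq_cntGT_add a N, if_neg haN, add_zero]
  have hsGT : cnt a M = cntGT a M + 1 := by
    rw [cnt_eq_cntGT_add a M, if_pos ha]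
  have hts : cnt a N ≤ cnt a M := by
    have h1 : cntGT a N = cntGT a (N.erase mN) + if a < mN then 1 else 0 := cntGT_erase hmNmem a
    have h2 := hdelMGT a
    have h3 : (if a < mN then 1 else 0) ≤ 1 := by split <;> omega
    omega
  have hbex : (N.filter (fun y => y < a)).Nonempty := by
    rw [filter_nonempty_iff]
    by_contra hc
    push_neg at hc
    have hfull : cnt a N = N.card := cnt_eq_card (fun y hy => hc y hy)
    have h5 := cnt_le_card a M
    omega
  obtain ⟨b, hbmem', hbmax'⟩ : ∃ b ∈ N.filter (fun y => y < a),
      ∀ y ∈ N.filter (fun y => y < a), y ≤ b :=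
    ⟨(N.filter (fun y => y < a)).max' hbex, max'_mem _ _, fun y hy => le_max' _ y hy⟩
  have hbN : b ∈ N := (mem_filter.1 hbmem').1
  have hba : b < a := (mem_filter.1 hbmem').2
  have hbmax : ∀ y ∈ N, y < a → y ≤ b := fun y hy hya => hbmax' y (mem_filter.2 ⟨hy, hya⟩)
  have havi : a ≤ vi := by
    have h1 : 1 ≤ cnt a W := le_trans hs1 (hMW a)
    obtain ⟨w, hw, haw⟩ := exists_ge_of_cnt_pos h1
    exact le_trans haw (hmax w hw)
  have hkey : ∀ x, b < x → x ≤ a → cnt x N = cnt a N := by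
    intro x hbx hxa
    unfold cnt
    congr 1
    apply filter_congr
    intro y hy
    constructor
    · intro hxy
      by_contra hay
      exact absurd (le_trans hxy (hbmax y hy (not_le.1 hay))) (not_le.2 hbx)
    · intro hay
      exact le_trans hxa hay
  set X := insert a (N.erase b) with hX
  have haeb : a ∉ N.erase b := fun h => haN (erase_subset _ _ h)
  have hXcard : X.card = i + 1 := by
    rw [hX, card_insert_of_notMem haeb, card_erase_of_mem hbN, hNc]; omega
  have hXA : X ⊆ A := by
    rw [hX]
    exact insert_subset (hMA ha) (subset_trans (erase_subset _ _) hNA)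
  have hXW : ∀ x, cnt x X ≤ cnt x (insert vi W) := by
    intro x
    have hXc : cnt x X = cnt x (N.erase b) + if x ≤ a then 1 else 0 := cnt_insert haeb x
    have hNc' : cnt x N = cnt x (N.erase b) + if x ≤ b then 1 else 0 := cnt_erase hbN x
    by_cases hxb : x ≤ b
    · have hxa : x ≤ a := le_trans hxb hba.le
      have h1 := hNW x
      rw [if_pos hxb] at hNc'
      rw [if_pos hxa] at hXc
      omega
    · by_cases hxa : x ≤ a
      · have hcN : cnt x N = cnt a N := hkey x (not_le.1 hxb) hxa
        have hW1 : cnt x (insert vi W) = cnt x W + 1 := by rw [hW' x, if_pos (le_trans hxa havi)]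
        have hWM : cnt a M ≤ cnt x W := le_trans (cnt_anti hxa) (hMW x)
        rw [if_neg hxb] at hNc'
        rw [if_pos hxa] at hXc
        omega
      · rw [if_neg hxa] at hXc
        rw [if_neg (fun h => hxa (le_trans h hba.le))] at hNc'
        have h1 := hNW x
        omega
  have hXN : ∀ x, cnt x X ≤ cnt x N := domN X hXcard hXA hXW
  have hc1 : cnt a X = cnt a (N.erase b) + 1 := by rw [hX, cnt_insert haeb a, if_pos (le_refl a)]
  have hc2 : cnt a N = cnt a (N.erase b) + if a ≤ b then 1 else 0 := cnt_erase hbN a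
  rw [if_neg (not_le.2 hba)] at hc2
  have h6 := hXN a
  omega

lemma block2 {i K : ℕ} {A W M N : Finset (Fin n)} {vi : Fin n}
    (hvi : vi ∉ W)
    (hAc : A.card = K) (hKi : K ≤ i)
    (hAW : ∀ x, cnt x A ≤ cnt x W)
    (hMc : M.card = i) (hNc : N.card = i + 1)
    (hMA : A ⊆ M) (hNA : A ⊆ N)
    (hMW : ∀ x, cnt x M ≤ cnt x W)
    (hNW : ∀ x, cnt x N ≤ cnt x (insert vi W))
    (domM : ∀ S : Finset (Fin n), S.card = i → A ⊆ S → (∀ x, cnt x S ≤ cnt x W) →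
      ∀ x, cnt x S ≤ cnt x M)
    (domN : ∀ S : Finset (Fin n), S.card = i + 1 → A ⊆ S →
      (∀ x, cnt x S ≤ cnt x (insert vi W)) → ∀ x, cnt x S ≤ cnt x N) :
    M ⊆ N := by
  intro a ha
  by_contra haN
  have hW' : ∀ x, cnt x (insert vi W) = cnt x W + if x ≤ vi then 1 else 0 := cnt_insert hvi
  have haA : a ∉ A := fun h => haN (hNA h)
  have haMA : a ∈ M \ A := mem_sdiff.2 ⟨ha, haA⟩
  have haNA' : a ∉ N \ A := fun h => haN (mem_sdiff.1 h).1
  have hsplit : ∀ (P : Finset (Fin n)), A ⊆ P → ∀ x, cnt x P = cnt x A + cnt x (P \ A) := by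
    intro P hAP x
    unfold cnt
    have hd : Disjoint (A.filter fun y => x ≤ y) ((P \ A).filter fun y => x ≤ y) :=
      disjoint_filter_filter disjoint_sdiff
    rw [← card_union_of_disjoint hd, ← filter_union, union_sdiff_of_subset hAP]
  have hGTsplit : ∀ (P : Finset (Fin n)), A ⊆ P → cntGT a P = cntGT a A + cntGT a (P \ A) := by
    intro P hAP
    unfold cntGT
    have hd : Disjoint (A.filter fun y => a < y) ((P \ A).filter fun y => a < y) :=
      disjoint_filter_filter disjoint_sdiff
    rw [← card_union_of_disjoint hd, ← filter_union, union_sdiff_of_subset hAP]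
  have hsB1 : 1 ≤ cnt a (M \ A) := cnt_pos haMA
  have hNAcard : (N \ A).card = i + 1 - K := by rw [card_sdiff_of_subset hNA, hNc, hAc]
  have hMAcard : (M \ A).card = i - K := by rw [card_sdiff_of_subset hMA, hMc, hAc]
  have hzex : (N \ A).Nonempty := by rw [← card_pos, hNAcard]; omega
  obtain ⟨z, hzNA, hzmax⟩ : ∃ z ∈ N \ A, ∀ y ∈ N \ A, y ≤ z :=
    ⟨(N \ A).max' hzex, max'_mem _ _, fun y hy => le_max' _ y hy⟩
  have hzN : z ∈ N := (mem_sdiff.1 hzNA).1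
  have hzA : z ∉ A := (mem_sdiff.1 hzNA).2
  have hdelz : ∀ x, cnt x (N.erase z) ≤ cnt x W := by
    intro x
    have hNe : cnt x N = cnt x (N.erase z) + if x ≤ z then 1 else 0 := cnt_erase hzN x
    by_cases hxz : x ≤ z
    · rw [if_pos hxz] at hNe
      have h1 := hNW x
      have h2 := hW' x
      have h3 : (if x ≤ vi then 1 else 0) ≤ 1 := by split <;> omega
      omega
    · rw [if_neg hxz, add_zero] at hNe
      by_cases hxvi : x ≤ vi
      · have hNsplit := hsplit N hNA x
        have hzero : cnt x (N \ A) = 0 :=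
          cnt_eq_zero (fun y hy hxy => hxz (le_trans hxy (hzmax y hy)))
        have h4 := hAW x
        omega
      · have h1 := hNW x
        rw [hW' x, if_neg hxvi, add_zero] at h1
        omega
  have hdelzM : ∀ x, cnt x (N.erase z) ≤ cnt x M :=
    domM _ (by rw [card_erase_of_mem hzN, hNc]; omega)
      (fun y hy => mem_erase.2 ⟨fun he => hzA (he ▸ hy), hNA hy⟩) hdelz
  have hdelzGT := cntGT_le_of_cnt_le hdelzM
  have hGTM : cnt a (M \ A) = cntGT a (M \ A) + 1 := by
    rw [cnt_eq_cntGT_add a (M \ A), if_pos haMA]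
  have hGTN : cnt a (N \ A) = cntGT a (N \ A) := by
    rw [cnt_eq_cntGT_add a (N \ A), if_neg haNA', add_zero]
  have htBsB : cnt a (N \ A) + 1 ≤ cnt a (M \ A) + if a < z then 1 else 0 := by
    have h1 : cntGT a N = cntGT a (N.erase z) + if a < z then 1 else 0 := cntGT_erase hzN a
    have h2 := hdelzGT a
    have h3 := hGTsplit N hNA
    have h4 := hGTsplit M hMA
    omega
  have htBsB' : cnt a (N \ A) ≤ cnt a (M \ A) := by
    have h3 : (if a < z then 1 else 0) ≤ 1 := by split <;> omega
    omega
  have hbex : ((N \ A).filter (fun y => y < a)).Nonempty := by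
    rw [filter_nonempty_iff]
    by_contra hc
    push_neg at hc
    have hfull : cnt a (N \ A) = (N \ A).card := cnt_eq_card (fun y hy => hc y hy)
    have h5 : cnt a (M \ A) ≤ (M \ A).card := cnt_le_card _ _
    omega
  obtain ⟨b, hbmem', hbmax'⟩ : ∃ b ∈ (N \ A).filter (fun y => y < a),
      ∀ y ∈ (N \ A).filter (fun y => y < a), y ≤ b :=
    ⟨((N \ A).filter (fun y => y < a)).max' hbex, max'_mem _ _, fun y hy => le_max' _ y hy⟩
  have hbNA : b ∈ N \ A := (mem_filter.1 hbmem').1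
  have hbN : b ∈ N := (mem_sdiff.1 hbNA).1
  have hbA : b ∉ A := (mem_sdiff.1 hbNA).2
  have hba : b < a := (mem_filter.1 hbmem').2
  have hbmax : ∀ y ∈ N \ A, y < a → y ≤ b := fun y hy hya => hbmax' y (mem_filter.2 ⟨hy, hya⟩)
  have hkeyNA : ∀ x, b < x → x ≤ a → cnt x (N \ A) = cnt a (N \ A) := by
    intro x hbx hxa
    unfold cnt
    congr 1
    apply filter_congr
    intro y hy
    constructor
    · intro hxy
      by_contra hay
      exact absurd (le_trans hxy (hbmax y hy (not_le.1 hay))) (not_le.2 hbx)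
    · intro hay
      exact le_trans hxa hay
  have hkeyW : ∀ x, x ≤ a → x ≤ vi → cnt x A + cnt a (M \ A) + 1 ≤ cnt x (insert vi W) := by
    intro x hxa hxvi
    have h1 : cnt x (insert vi W) = cnt x W + 1 := by rw [hW' x, if_pos hxvi]
    have h2 := hMW x
    have h3 := hsplit M hMA x
    have h4 : cnt a (M \ A) ≤ cnt x (M \ A) := cnt_anti hxa
    omega
  have hkeyW2 : ∀ x, x ≤ a → cnt x A + cnt a (M \ A) ≤ cnt x W := by
    intro x hxa
    have h2 := hMW x
    have h3 := hsplit M hMA x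
    have h4 : cnt a (M \ A) ≤ cnt x (M \ A) := cnt_anti hxa
    omega
  by_cases hgood : cnt a (N \ A) + 1 ≤ cnt a (M \ A) ∨ a ≤ vi
  · -- bump
    have haeb : a ∉ N.erase b := fun h => haN (erase_subset _ _ h)
    have hXcard : (insert a (N.erase b)).card = i + 1 := by
      rw [card_insert_of_notMem haeb, card_erase_of_mem hbN, hNc]; omega
    have hXA : A ⊆ insert a (N.erase b) := by
      intro y hy
      exact mem_insert.2 (Or.inr (mem_erase.2 ⟨fun he => hbA (he ▸ hy), hNA hy⟩))
    have hXW : ∀ x, cnt x (insert a (N.erase b)) ≤ cnt x (insert vi W) := by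
      intro x
      have hXc : cnt x (insert a (N.erase b)) = cnt x (N.erase b) + if x ≤ a then 1 else 0 :=
        cnt_insert haeb x
      have hNc' : cnt x N = cnt x (N.erase b) + if x ≤ b then 1 else 0 := cnt_erase hbN x
      by_cases hxb : x ≤ b
      · have hxa : x ≤ a := le_trans hxb hba.le
        have h1 := hNW x
        rw [if_pos hxb] at hNc'
        rw [if_pos hxa] at hXc
        omega
      · by_cases hxa : x ≤ a
        · have hcN : cnt x (N \ A) = cnt a (N \ A) := hkeyNA x (not_le.1 hxb) hxa
          have hNs := hsplit N hNA x
          rw [if_neg hxb] at hNc'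
          rw [if_pos hxa] at hXc
          by_cases hxvi : x ≤ vi
          · have h1 := hkeyW x hxa hxvi
            omega
          · have havi : ¬ a ≤ vi := fun h => hxvi (le_trans hxa h)
            have hst : cnt a (N \ A) + 1 ≤ cnt a (M \ A) := hgood.resolve_right havi
            have h1 := hkeyW2 x hxa
            have h2 : cnt x (insert vi W) = cnt x W := by
              rw [hW' x, if_neg hxvi, add_zero]
            omega
        · rw [if_neg hxa] at hXc
          rw [if_neg (fun h => hxa (le_trans h hba.le))] at hNc'
          have h1 := hNW x
          omega
    have hXN := domN _ hXcard hXA hXW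
    have hc1 : cnt a (insert a (N.erase b)) = cnt a (N.erase b) + 1 := by
      rw [cnt_insert haeb a, if_pos (le_refl a)]
    have hc2 : cnt a N = cnt a (N.erase b) + if a ≤ b then 1 else 0 := cnt_erase hbN a
    rw [if_neg (not_le.2 hba)] at hc2
    have h6 := hXN a
    have h7 := hsplit N hNA a
    omega
  · push_neg at hgood
    obtain ⟨hst, havi⟩ := hgood
    -- second deletion with b
    have hdelb : ∀ x, cnt x (N.erase b) ≤ cnt x W := by
      intro x
      have hNe : cnt x N = cnt x (N.erase b) + if x ≤ b then 1 else 0 := cnt_erase hbN x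
      by_cases hxb : x ≤ b
      · rw [if_pos hxb] at hNe
        have h1 := hNW x
        have h2 := hW' x
        have h3 : (if x ≤ vi then 1 else 0) ≤ 1 := by split <;> omega
        omega
      · rw [if_neg hxb, add_zero] at hNe
        by_cases hxvi : x ≤ vi
        · have hxa : x ≤ a := le_trans hxvi havi.le
          have h1 : cnt x (N \ A) = cnt a (N \ A) := hkeyNA x (not_le.1 hxb) hxa
          have h2 := hsplit N hNA x
          have h3 := hkeyW x hxa hxvi
          have h4 : cnt x (insert vi W) = cnt x W + 1 := by rw [hW' x, if_pos hxvi]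
          omega
        · have h1 := hNW x
          rw [hW' x, if_neg hxvi, add_zero] at h1
          omega
    have hdelbM : ∀ x, cnt x (N.erase b) ≤ cnt x M :=
      domM _ (by rw [card_erase_of_mem hbN, hNc]; omega)
        (fun y hy => mem_erase.2 ⟨fun he => hbA (he ▸ hy), hNA hy⟩) hdelb
    have hdelbGT := cntGT_le_of_cnt_le hdelbM
    have h1 : cntGT a N = cntGT a (N.erase b) + if a < b then 1 else 0 := cntGT_erase hbN a
    rw [if_neg (not_lt.2 hba.le)] at h1
    have h2 := hdelbGT a
    have h3 := hGTsplit N hNA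
    have h4 := hGTsplit M hMA
    omega

def pos (n i : ℕ) : Finset (Fin n) := univ.filter fun j : Fin n => (j : ℕ) < i

def flag (y : Equiv.Perm (Fin n)) (i : ℕ) : Finset (Fin n) := (pos n i).image ⇑y

lemma initSet_eq_flag (k : ℕ) (y : Equiv.Perm (Fin n)) : initSet k y = flag y k := rfl

lemma pos_zero : pos n 0 = ∅ := by
  unfold pos
  rw [filter_eq_empty_iff]
  intro j _
  omega

lemma pos_succ {i : ℕ} (h : i < n) : pos n (i + 1) = insert ⟨i, h⟩ (pos n i) := by
  unfold pos
  ext j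
  simp only [mem_insert, mem_filter, mem_univ, true_and]
  constructor
  · intro hj
    rcases Nat.lt_succ_iff_lt_or_eq.1 hj with h1 | h1
    · exact Or.inr h1
    · exact Or.inl (Fin.ext h1)
  · rintro (rfl | h1)
    · exact Nat.lt_succ_self i
    · omega

lemma pos_succ_ge {i : ℕ} (h : n ≤ i) : pos n (i + 1) = pos n i := by
  unfold pos
  apply filter_congr
  intro j _
  have := j.isLt
  constructor <;> intro <;> omega

lemma mem_pos {i : ℕ} {j : Fin n} : j ∈ pos n i ↔ (j : ℕ) < i := by
  unfold pos
  simp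

lemma pos_mono {i i' : ℕ} (h : i ≤ i') : pos n i ⊆ pos n i' := by
  intro j hj
  rw [mem_pos] at *
  omega

lemma pos_card : ∀ i : ℕ, (pos n i).card = min i n := by
  intro i
  induction i with
  | zero => simp [pos_zero]
  | succ i ih =>
    by_cases h : i < n
    · rw [pos_succ h, card_insert_of_notMem (by rw [mem_pos]; exact Nat.lt_irrefl i), ih]
      omega
    · rw [pos_succ_ge (by omega), ih]
      omega

lemma pos_top {i : ℕ} (h : n ≤ i) : pos n i = univ := by
  apply eq_univ_of_card
  rw [pos_card]
  simp only [Fintype.card_fin]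
  omega

lemma flag_card {i : ℕ} (h : i ≤ n) (y : Equiv.Perm (Fin n)) : (flag y i).card = i := by
  unfold flag
  rw [card_image_of_injective _ y.injective, pos_card]
  omega

lemma flag_zero (y : Equiv.Perm (Fin n)) : flag y 0 = ∅ := by
  unfold flag
  rw [pos_zero, image_empty]

lemma flag_succ {i : ℕ} (h : i < n) (y : Equiv.Perm (Fin n)) :
    flag y (i + 1) = insert (y ⟨i, h⟩) (flag y i) := by
  unfold flag
  rw [pos_succ h, image_insert]

lemma flag_mono {i i' : ℕ} (h : i ≤ i') (y : Equiv.Perm (Fin n)) : flag y i ⊆ flag y i' :=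
  image_subset_image (pos_mono h)

lemma flag_top {i : ℕ} (h : n ≤ i) (y : Equiv.Perm (Fin n)) : flag y i = univ := by
  apply eq_univ_of_card
  unfold flag
  rw [card_image_of_injective _ y.injective, pos_card]
  simp only [Fintype.card_fin]
  omega

lemma self_not_mem_flag {i : ℕ} (h : i < n) (y : Equiv.Perm (Fin n)) :
    y ⟨i, h⟩ ∉ flag y i := by
  unfold flag
  rw [mem_image]
  rintro ⟨j, hj, hyj⟩
  have h2 := y.injective hyj
  rw [mem_pos] at hj
  rw [h2] at hj
  exact Nat.lt_irrefl i hj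

lemma Iic_eq_pos (i : Fin n) : Finset.Iic i = pos n ((i : ℕ) + 1) := by
  ext j
  rw [mem_pos, mem_Iic]
  rw [Fin.le_def]
  omega

lemma image_Iic (y : Equiv.Perm (Fin n)) (i : Fin n) :
    (Finset.Iic i).image ⇑y = flag y ((i : ℕ) + 1) := by
  rw [Iic_eq_pos]
  rfl

lemma bruhatLE_iff (y v : Equiv.Perm (Fin n)) :
    bruhatLE y v ↔ ∀ i : ℕ, (flag y i).card = (flag v i).card ∧ ∀ x, cnt x (flag y i) ≤ cnt x (flag v i) := by
  constructor
  · intro h i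
    match i with
    | 0 =>
      rw [flag_zero, flag_zero]
      exact ⟨rfl, fun x => le_refl _⟩
    | (i + 1) =>
      by_cases hi : i < n
      · have := h ⟨i, hi⟩
        rw [galeList_iff, image_Iic, image_Iic] at this
        exact this
      · rw [flag_top (by omega), flag_top (by omega)]
        exact ⟨rfl, fun x => le_refl _⟩
  · intro h i
    rw [image_Iic, image_Iic, galeList_iff]
    exact h _

lemma exists_perm_of_flags (M : ℕ → Finset (Fin n)) (hcard : ∀ i ≤ n, (M i).card = i)
    (hnest : ∀ i < n, M i ⊆ M (i + 1)) : ∃ m : Equiv.Perm (Fin n), ∀ i ≤ n, flag m i = M i := by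
  have huniq : ∀ j : Fin n, ∃ a : Fin n, M ((j : ℕ) + 1) \ M (j : ℕ) = {a} := by
    intro j
    apply card_eq_one.1
    rw [card_sdiff_of_subset (hnest _ j.isLt), hcard _ j.isLt, hcard _ (by omega)]
    omega
  choose g hg using huniq
  have hgmem : ∀ j : Fin n, g j ∈ M ((j : ℕ) + 1) ∧ g j ∉ M (j : ℕ) := by
    intro j
    have : g j ∈ M ((j : ℕ) + 1) \ M (j : ℕ) := by rw [hg j]; exact mem_singleton_self _
    exact ⟨(mem_sdiff.1 this).1, (mem_sdiff.1 this).2⟩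
  have hMmono : ∀ i i' : ℕ, i ≤ i' → i' ≤ n → M i ⊆ M i' := by
    intro i i' hii' hi'n
    induction i' with
    | zero => have : i = 0 := by omega
              rw [this]
    | succ i' ih =>
      rcases Nat.lt_succ_iff_lt_or_eq.1 (Nat.lt_succ_of_le hii') with h1 | h1
      · exact subset_trans (ih (by omega) (by omega)) (hnest i' (by omega))
      · rw [h1]
  have hginj : Function.Injective g := by
    intro j j' hjj'
    by_contra hne
    rcases Ne.lt_or_gt (fun h : j = j' => hne h) with hlt | hlt
    · have h1 : g j ∈ M (j' : ℕ) :=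
        hMmono ((j : ℕ) + 1) (j' : ℕ) (by exact hlt) j'.isLt.le ((hgmem j).1)
      rw [hjj'] at h1
      exact (hgmem j').2 h1
    · have h1 : g j' ∈ M (j : ℕ) :=
        hMmono ((j' : ℕ) + 1) (j : ℕ) (by exact hlt) j.isLt.le ((hgmem j').1)
      rw [← hjj'] at h1
      exact (hgmem j).2 h1
  have hgbij : Function.Bijective g := Finite.injective_iff_bijective.1 hginj
  set m : Equiv.Perm (Fin n) := Equiv.ofBijective g hgbij with hm
  have hmapp : ∀ j : Fin n, m j = g j := fun j => rfl
  refine ⟨m, ?_⟩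
  intro i hin
  induction i with
  | zero =>
    rw [flag_zero]
    symm
    rw [← card_eq_zero.1 (hcard 0 (by omega))]
  | succ i ih =>
    have hi : i < n := by omega
    rw [flag_succ hi, ih (by omega)]
    have h1 : g ⟨i, hi⟩ ∈ M (i + 1) := (hgmem ⟨i, hi⟩).1
    have h2 : g ⟨i, hi⟩ ∉ M i := (hgmem ⟨i, hi⟩).2
    apply eq_of_subset_of_card_le
    · rw [hmapp]
      exact insert_subset h1 (hnest i hi)
    · rw [hcard _ hin, hmapp, card_insert_of_notMem h2, hcard _ (by omega)]

lemma bruhat_antisymm {y m : Equiv.Perm (Fin n)} (h1 : bruhatLE y m) (h2 : bruhatLE m y) :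
    y = m := by
  rw [bruhatLE_iff] at h1 h2
  have hflag : ∀ i, flag y i = flag m i := fun i =>
    eq_of_cnt_eq (fun x => le_antisymm ((h1 i).2 x) ((h2 i).2 x))
  apply Equiv.ext
  intro j
  have hy1 : y j ∈ flag y ((j : ℕ) + 1) := by
    unfold flag
    exact mem_image_of_mem _ (mem_pos.2 (by omega))
  have hy2 : y j ∉ flag y (j : ℕ) := by
    have := self_not_mem_flag j.isLt y
    simpa using this
  have hm1 : m j ∈ flag m ((j : ℕ) + 1) := by
    unfold flag
    exact mem_image_of_mem _ (mem_pos.2 (by omega))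
  have hm2 : m j ∉ flag m (j : ℕ) := by
    have := self_not_mem_flag j.isLt m
    simpa using this
  rw [hflag] at hy1 hy2
  obtain ⟨a, hA⟩ := card_eq_one.1 (show (flag m ((j:ℕ)+1) \ flag m (j:ℕ)).card = 1 by
    rw [card_sdiff_of_subset (flag_mono (by omega) m), flag_card (by omega), flag_card (by omega)]
    omega)
  have e1 : y j ∈ flag m ((j:ℕ)+1) \ flag m (j:ℕ) := mem_sdiff.2 ⟨hy1, hy2⟩
  have e2 : m j ∈ flag m ((j:ℕ)+1) \ flag m (j:ℕ) := mem_sdiff.2 ⟨hm1, hm2⟩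
  rw [hA] at e1 e2
  rw [mem_singleton.1 e1, mem_singleton.1 e2]

lemma inCoset_iff (k : ℕ) (u y : Equiv.Perm (Fin n)) :
    inCoset k u y ↔ initSet k y = initSet k u := by
  constructor
  · rintro ⟨σ, hσ, rfl⟩
    have hσpos : (pos n k).image ⇑σ = pos n k := by
      apply eq_of_subset_of_card_le
      · intro j hj
        obtain ⟨j', hj', rfl⟩ := mem_image.1 hj
        rw [mem_pos] at *
        exact (hσ j').2 hj'
      · rw [card_image_of_injective _ σ.injective]
    rw [initSet_eq_flag, initSet_eq_flag]
    unfold flag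
    rw [show ⇑(u * σ) = ⇑u ∘ ⇑σ from rfl]
    rw [← Finset.image_image, hσpos]
  · intro h
    have himg : flag y k = flag u k := by
      rw [← initSet_eq_flag, ← initSet_eq_flag]
      exact h
    refine ⟨u⁻¹ * y, fun j => ?_, (mul_inv_cancel_left u y).symm⟩
    have happ : (u⁻¹ * y) j = u⁻¹ (y j) := rfl
    constructor
    · intro hσj
      rw [happ] at hσj
      have h1 : u (u⁻¹ (y j)) ∈ flag u k := by
        unfold flag
        exact mem_image_of_mem _ (mem_pos.2 hσj)
      rw [show u (u⁻¹ (y j)) = y j from u.apply_symm_apply (y j)] at h1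
      rw [← himg] at h1
      obtain ⟨j'', hj'', hyj⟩ := mem_image.1 h1
      have := y.injective hyj
      rw [mem_pos] at hj''
      rw [← this]
      exact hj''
    · intro hj
      rw [happ]
      have h1 : y j ∈ flag y k := by
        unfold flag
        exact mem_image_of_mem _ (mem_pos.2 hj)
      rw [himg] at h1
      obtain ⟨j', hj', huj⟩ := mem_image.1 h1
      have : u⁻¹ (y j) = j' := by rw [← huj]; exact u.symm_apply_apply j'
      rw [this]
      exact mem_pos.1 hj'

lemma main_aux (u v : Equiv.Perm (Fin n)) (k : ℕ) (hv : IsGrassmannian k v)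
    (huv : bruhatLE u v) :
    ∃ m : Equiv.Perm (Fin n), bruhatLE m v ∧ initSet k m = initSet k u ∧
      ∀ y, bruhatLE y v → initSet k y = initSet k u → bruhatLE y m := by
  classical
  set K := min k n with hK
  have hposkK : pos n k = pos n K := by
    unfold pos
    apply filter_congr
    intro j _
    have := j.isLt
    constructor <;> intro <;> omega
  have hflagkK : ∀ y : Equiv.Perm (Fin n), flag y k = flag y K := by
    intro y
    unfold flag
    rw [hposkK]
  set A := flag u K with hA
  have hAcard : A.card = K := flag_card (by omega) u
  have huvC := (bruhatLE_iff u v).1 huv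
  set P : ℕ → Finset (Fin n) → Prop := fun i S =>
    S.card = i ∧ (i ≤ K → S ⊆ A) ∧ (K ≤ i → A ⊆ S) ∧
      ∀ x, cnt x S ≤ cnt x (flag v i) with hP
  have hPu : ∀ i, i ≤ n → P i (flag u i) := by
    intro i hin
    refine ⟨flag_card hin u, fun hiK => ?_, fun hKi => ?_, fun x => (huvC i).2 x⟩
    · rw [hA]; exact flag_mono hiK u
    · rw [hA]; exact flag_mono hKi u
  have hMex : ∀ i, ∃ Mi : Finset (Fin n),
      i ≤ n → P i Mi ∧ ∀ S, P i S → ∀ x, cnt x S ≤ cnt x Mi := by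
    intro i
    by_cases hin : i ≤ n
    · obtain ⟨Mi, hMiP, hMimax⟩ :
          ∃ Mi ∈ (univ : Finset (Finset (Fin n))).filter (P i),
            ∀ S ∈ (univ : Finset (Finset (Fin n))).filter (P i), wt S ≤ wt Mi :=
        Finset.exists_max_image _ wt ⟨flag u i, mem_filter.2 ⟨mem_univ _, hPu i hin⟩⟩
      rw [mem_filter] at hMiP
      refine ⟨Mi, fun _ => ⟨hMiP.2, ?_⟩⟩
      intro S hS
      obtain ⟨J, hJcard, hJsub, hJsup, hJS, hJM, hJmax⟩ := exists_join hS.1 hMiP.2.1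
      have hJP : P i J := by
        refine ⟨hJcard, fun hiK => ?_, fun hKi => ?_, fun x => ?_⟩
        · intro a haJ
          rcases hJsub a haJ with h | h
          · exact hS.2.1 hiK h
          · exact hMiP.2.2.1 hiK h
        · intro a haA
          exact hJsup a (hS.2.2.1 hKi haA) (hMiP.2.2.2.1 hKi haA)
        · exact le_trans (hJmax x) (max_le (hS.2.2.2 x) (hMiP.2.2.2.2 x))
      have hwtJ : wt J ≤ wt Mi := hMimax J (mem_filter.2 ⟨mem_univ _, hJP⟩)
      have hMJ : ∀ x, cnt x Mi = cnt x J := fun x => cnt_eq_of_wt_le hJM hwtJ x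
      intro x
      exact le_trans (hJS x) (hMJ x).ge
    · exact ⟨∅, fun h => absurd h hin⟩
  choose M hM using hMex
  have hnest : ∀ i < n, M i ⊆ M (i + 1) := by
    intro i hin
    have hMi := hM i (by omega)
    have hMi1 := hM (i + 1) (by omega)
    have hWc : flag v (i + 1) = insert (v ⟨i, hin⟩) (flag v i) := flag_succ hin v
    have hvi : v ⟨i, hin⟩ ∉ flag v i := self_not_mem_flag hin v
    rcases le_or_gt (i + 1) K with hiK | hKi
    · have hmax : ∀ w ∈ flag v i, w ≤ v ⟨i, hin⟩ := by
        intro w hw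
        obtain ⟨j, hj, rfl⟩ := mem_image.1 hw
        rw [mem_pos] at hj
        apply le_of_lt
        apply hv.1 j ⟨i, hin⟩
        · rw [Fin.lt_def]
          exact hj
        · show i < k
          omega
      apply block1 hvi hmax hMi.1.1 hMi1.1.1 (hMi.1.2.1 (by omega)) (hMi1.1.2.1 hiK)
        hMi.1.2.2.2 (by rw [← hWc]; exact hMi1.1.2.2.2)
      · intro S hSc hSA hSW
        exact hMi.2 S ⟨hSc, fun _ => hSA, fun hKi' => absurd hKi' (by omega), hSW⟩
      · intro S hSc hSA hSW
        apply hMi1.2 S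
        refine ⟨hSc, fun _ => hSA, fun hKi' => ?_, by rw [hWc]; exact hSW⟩
        have hSK : S = A := eq_of_subset_of_card_le hSA (by rw [hAcard, hSc]; omega)
        rw [hSK]
    · have hAW : ∀ x, cnt x A ≤ cnt x (flag v i) := by
        intro x
        calc cnt x A ≤ cnt x (flag v K) := by rw [hA]; exact (huvC K).2 x
          _ ≤ cnt x (flag v i) := cnt_mono (flag_mono (by omega) v) x
      apply block2 hvi hAcard (show K ≤ i by omega) hAW hMi.1.1 hMi1.1.1
        (hMi.1.2.2.1 (by omega)) (hMi1.1.2.2.1 (by omega))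
        hMi.1.2.2.2 (by rw [← hWc]; exact hMi1.1.2.2.2)
      · intro S hSc hSA hSW
        apply hMi.2 S
        refine ⟨hSc, fun hiK' => ?_, fun _ => hSA, hSW⟩
        have hSK : S = A := by
          symm
          exact eq_of_subset_of_card_le hSA (by rw [hAcard, hSc]; omega)
        rw [hSK]
      · intro S hSc hSA hSW
        apply hMi1.2 S
        refine ⟨hSc, fun hiK' => absurd hiK' (by omega), fun _ => hSA, by rw [hWc]; exact hSW⟩
  have hMcard : ∀ i, i ≤ n → (M i).card = i := fun i hin => (hM i hin).1.1
  obtain ⟨m, hmflag⟩ := exists_perm_of_flags M hMcard hnest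
  have hMK : M K = A := by
    have h1 := (hM K (by omega)).1
    exact Subset.antisymm (h1.2.1 (le_refl K)) (h1.2.2.1 (le_refl K))
  have hminit : initSet k m = initSet k u := by
    rw [initSet_eq_flag, initSet_eq_flag, hflagkK m, hflagkK u, hmflag K (by omega), hMK, hA]
  have hdom : ∀ y, bruhatLE y v → initSet k y = initSet k u → bruhatLE y m := by
    intro y hyv hyinit
    have hyC := (bruhatLE_iff y v).1 hyv
    have hyA : flag y K = A := by
      rw [← hflagkK y, ← initSet_eq_flag, hyinit, initSet_eq_flag, hflagkK u, hA]
    have hyP : ∀ i, i ≤ n → P i (flag y i) := by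
      intro i hin
      refine ⟨flag_card hin y, fun hiK => ?_, fun hKi => ?_, fun x => (hyC i).2 x⟩
      · rw [← hyA]; exact flag_mono hiK y
      · rw [← hyA]; exact flag_mono hKi y
    rw [bruhatLE_iff]
    intro i
    by_cases hin : i ≤ n
    · constructor
      · rw [flag_card hin, flag_card hin]
      · intro x
        rw [hmflag i hin]
        exact (hM i hin).2 _ (hyP i hin) x
    · rw [flag_top (by omega), flag_top (by omega)]
      exact ⟨rfl, fun x => le_refl _⟩
  have hmv : bruhatLE m v := by
    rw [bruhatLE_iff]
    intro i
    by_cases hin : i ≤ n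
    · refine ⟨?_, fun x => ?_⟩
      · rw [flag_card hin, flag_card hin]
      · rw [hmflag i hin]
        exact (hM i hin).1.2.2.2 x
    · rw [flag_top (by omega), flag_top (by omega)]
      exact ⟨rfl, fun x => le_refl _⟩
  exact ⟨m, hmv, hminit, hdom⟩

end Stmt5Aux

/-- For `v` `k`-Grassmannian and `u ≤ v`: the unique maximal element of `[u,v]`
with initial set `u[k]` coincides with the unique maximal element of
`u·(S_k × S_{n-k}) ∩ [id,v]` with that initial set; in particular
`[u,v] ∩ u·(S_k × S_{n-k})` has a unique maximal element. -/
theorem stmt5 {n k : ℕ} (u v : Equiv.Perm (Fin n)) (hv : IsGrassmannian k v)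
    (huv : bruhatLE u v) :
    ∃! m : Equiv.Perm (Fin n),
      (bruhatLE u m ∧ bruhatLE m v ∧ initSet k m = initSet k u ∧
        (∀ y, bruhatLE u y → bruhatLE y v → initSet k y = initSet k u → bruhatLE y m)) ∧
      (inCoset k u m ∧
        (∀ y, inCoset k u y → bruhatLE y v → initSet k y = initSet k u → bruhatLE y m)) ∧
      (∀ y, inCoset k u y → bruhatLE u y → bruhatLE y v → bruhatLE y m) := by
  obtain ⟨m, hmv, hminit, hdom⟩ := Stmt5Aux.main_aux u v k hv huv
  have humu : bruhatLE u m := hdom u huv rfl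
  refine ⟨m, ⟨⟨humu, hmv, hminit, fun y _ hyv hyi => hdom y hyv hyi⟩,
    ⟨(Stmt5Aux.inCoset_iff k u m).2 hminit, fun y _ hyv hyi => hdom y hyv hyi⟩,
    fun y hyc _ hyv => hdom y hyv ((Stmt5Aux.inCoset_iff k u y).1 hyc)⟩, ?_⟩
  rintro m' ⟨⟨hum', hm'v, hm'init, hmax'⟩, _, _⟩
  exact Stmt5Aux.bruhat_antisymm (hdom m' hm'v hm'init) (hmax' m humu hmv hminit)
end

section
/- Let w be a permutation of [n] (n ≥ 2) with w(i) = i + m mod n for some fixed m ∈ [n-1] (a spirograph permutation). Then w has no alignments: there is no pair of distinct arcs (i ↦ w(i)), (j ↦ w(j)) forming an alignment. -/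
/-- The pair of arcs `(p ↦ w p, s ↦ w s)` of the chord diagram of `w` is an
alignment: distinct noncrossing arcs oriented in the same direction.
Combinatorially, measuring cyclic distances from `p`,
`w p ∈ [p, w s - 1]^cyc` and `w s ∈ [w p + 1, s]^cyc`. -/
def IsAlignment {n : ℕ} [NeZero n] (w : Equiv.Perm (Fin n)) (p s : Fin n) : Prop :=
  p ≠ s ∧ (w p - p) < (w s - p) ∧ (w s - p) ≤ (s - p)

/-- A spirograph permutation `w(i) = i + m (mod n)` with `m ≢ 0` has no alignments. -/
theorem stmt8 {n : ℕ} [NeZero n] (hn : 2 ≤ n) (w : Equiv.Perm (Fin n))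
    (m : Fin n) (hm : m ≠ 0) (hw : ∀ i, w i = i + m) :
    ∀ p s : Fin n, ¬ IsAlignment w p s := by
  rintro p s ⟨hps, h1, h2⟩
  simp only [hw] at h1 h2
  have e : p + m - p = m := by simp
  have e2 : s + m - p = (s - p) + m := add_sub_right_comm s m p
  rw [e, e2] at h1
  rw [e2] at h2
  set d := s - p with hd
  have hdne : d ≠ 0 := sub_ne_zero_of_ne (Ne.symm hps)
  have hmv : 0 < m.val := Nat.pos_of_ne_zero (fun h => hm (Fin.ext h))
  have hdv : 0 < d.val := Nat.pos_of_ne_zero (fun h => hdne (Fin.ext h))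
  have hmn : m.val < n := m.isLt
  have hdn : d.val < n := d.isLt
  rw [Fin.lt_def] at h1
  rw [Fin.le_def] at h2
  have hadd : ((d + m : Fin n)).val = (d.val + m.val) % n := Fin.val_add d m
  rcases Nat.lt_or_ge (d.val + m.val) n with h | h
  · rw [hadd, Nat.mod_eq_of_lt h] at h1 h2
    omega
  · have : (d.val + m.val) % n = d.val + m.val - n := by
      rw [Nat.mod_eq_sub_mod h, Nat.mod_eq_of_lt (by omega)]
    rw [hadd, this] at h1 h2
    omega
end

section
/- Let n ≥ 4 and let w be a fixed-point-free stabilized-interval-free permutation of [n] that is not a spirograph permutation (i.e., the values w(i) - i mod n are not all equal). Then w contains a crossed alignment: there is an alignment (p ↦ w(p), s ↦ w(s)) and a third arc (x ↦ w(x)) crossing both arcs of the alignment. -/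
/-- The arcs `(a ↦ w a)` and `(b ↦ w b)` cross: their endpoints interleave in
cyclic order (with the usual convention that a head meeting a tail at a common
vertex counts as a crossing). Measuring cyclic distances from one tail, the
other arc's tail lies in `(a, w a]` and its head strictly beyond `w a`
(or back at `a`), or symmetrically. -/
def Crossing {n : ℕ} [NeZero n] (w : Equiv.Perm (Fin n)) (a b : Fin n) : Prop :=
  (b ≠ a ∧ (b - a) ≤ (w a - a) ∧ ((w a - a) < (w b - a) ∨ w b = a)) ∨
  (a ≠ b ∧ (a - b) ≤ (w b - b) ∧ ((w b - b) < (w a - b) ∨ w a = b))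

set_option linter.unusedSectionVars false
set_option linter.unusedVariables false
set_option maxHeartbeats 1000000
open Fin.CommRing Fin.NatCast
namespace CA9

variable {n : ℕ} [NeZero n]

def pos (b x : Fin n) : ℕ := (x - b).val

lemma pos_lt (b x : Fin n) : pos b x < n := (x - b).isLt

lemma pos_inj {b x y : Fin n} (h : pos b x = pos b y) : x = y := by
  have : x - b = y - b := Fin.val_injective h
  exact sub_left_injective this

lemma pos_self (b : Fin n) : pos b b = 0 := by simp [pos]

lemma pos_eq_zero_iff {b x : Fin n} : pos b x = 0 ↔ x = b := by
  constructor
  · intro h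
    have hb := pos_self b
    exact pos_inj (h.trans hb.symm)
  · rintro rfl; exact pos_self _

lemma fin_sub_val (u v : Fin n) :
    (u - v).val = if v.val ≤ u.val then u.val - v.val else u.val + n - v.val := by
  have hn : 0 < n := Nat.pos_of_ne_zero (NeZero.ne n)
  have hu := u.isLt; have hv := v.isLt
  rw [Fin.sub_def]
  simp only
  split
  · have h1 : n - v.val + u.val = (u.val - v.val) + n := by omega
    rw [h1, Nat.add_mod_right, Nat.mod_eq_of_lt (by omega)]
  · rw [Nat.mod_eq_of_lt (by omega)]; omega

lemma sub_val (b x y : Fin n) :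
    (x - y).val = if pos b y ≤ pos b x then pos b x - pos b y
      else pos b x + n - pos b y := by
  have h : x - y = (x - b) - (y - b) := by ring
  rw [h, fin_sub_val]; rfl

def LL (w : Equiv.Perm (Fin n)) (b : Fin n) : ℕ := pos b (w b)

def inV (w : Equiv.Perm (Fin n)) (b x : Fin n) : Prop :=
  0 < pos b x ∧ pos b x < LL w b

variable (w : Equiv.Perm (Fin n)) (b : Fin n)

lemma pos_ne {x y : Fin n} (h : x ≠ y) : pos b x ≠ pos b y :=
  fun hc => h (pos_inj hc)

/-- heads inside chase: `pos b (w X) = LL w b → X = b`. -/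
lemma head_ne_L {X : Fin n} (h : X ≠ b) : pos b (w X) ≠ pos b (w b) := by
  intro hc
  exact h (w.injective (pos_inj hc))

lemma cross_symm {x y : Fin n} (h : Crossing w x y) : Crossing w y x := by
  unfold Crossing at h ⊢; tauto

/-- the successor chord always crosses the chord: `Crossing w (w t) t`. -/
lemma cross_succ (t : Fin n) (h1 : w t ≠ t) (h2 : w (w t) ≠ w t) :
    Crossing w (w t) t := by
  have hn : 0 < n := Nat.pos_of_ne_zero (NeZero.ne n)
  set A := (w t - t).val with hA
  set B := (w (w t) - w t).val with hB
  have hA0 : A ≠ 0 := fun hc => h1 (sub_eq_zero.mp (Fin.val_injective (by simpa [hA] using hc)))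
  have hB0 : B ≠ 0 := fun hc => h2 (sub_eq_zero.mp (Fin.val_injective (by simpa [hB] using hc)))
  have hAn : A < n := (w t - t).isLt
  have hBn : B < n := (w (w t) - w t).isLt
  have hsum : w (w t) - t = (w (w t) - w t) + (w t - t) := by ring
  have hC : (w (w t) - t).val = (B + A) % n := by
    rw [hsum, Fin.val_add]
  have hTW : (t - w t).val = n - A := by
    have hneg : t - w t = -(w t - t) := by ring
    rw [hneg, Fin.neg_def]
    simp only [Fin.val_mk]
    rw [← hA, Nat.mod_eq_of_lt (by omega)]
  unfold Crossing
  rcases lt_trichotomy (A + B) n with hlt | heq | hgt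
  · right
    refine ⟨h1, le_refl _, Or.inl ?_⟩
    rw [Fin.lt_def, hC, Nat.mod_eq_of_lt (by omega)]
    omega
  · right
    refine ⟨h1, le_refl _, Or.inr ?_⟩
    have hz : (w (w t) - t).val = 0 := by
      have hba : B + A = n := by omega
      rw [hC, hba, Nat.mod_self]
    exact sub_eq_zero.mp (Fin.val_injective (by simpa using hz))
  · left
    refine ⟨h1.symm, ?_, Or.inr rfl⟩
    rw [Fin.le_def, hTW]
    omega

lemma exit_cross_b {X : Fin n} (hb : w b ≠ b) (h1 : inV w b X) (h2 : ¬ inV w b (w X)) :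
    Crossing w X b := by
  simp only [inV, LL] at h1 h2
  obtain ⟨hX0, hXL⟩ := h1
  have hXb : X ≠ b := fun hc => by simp [hc, pos_self] at hX0
  unfold Crossing
  right
  refine ⟨hXb, ?_, ?_⟩
  · rw [Fin.le_def, sub_val b, sub_val b]
    simp only [pos_self]
    have := pos_lt b X
    split_ifs <;> omega
  · rcases Nat.eq_zero_or_pos (pos b (w X)) with h0 | hpos
    · exact Or.inr (pos_eq_zero_iff.mp h0)
    · left
      have hnin : ¬ (pos b (w X) < pos b (w b)) := fun hc => h2 ⟨hpos, hc⟩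
      have hne : pos b (w X) ≠ pos b (w b) := head_ne_L w b hXb
      rw [Fin.lt_def, sub_val b, sub_val b]
      simp only [pos_self]
      split_ifs <;> omega

lemma align_b {G : Fin n} (h1 : inV w b G) (h2 : inV w b (w G))
    (h3 : pos b G < pos b (w G)) : IsAlignment w G b := by
  simp only [inV, LL] at h1 h2
  obtain ⟨hG0, hGL⟩ := h1
  obtain ⟨hq0, hqL⟩ := h2
  have hGb : G ≠ b := fun hc => by simp [hc, pos_self] at hG0
  have hLn : pos b (w b) < n := pos_lt b (w b)
  unfold IsAlignment
  refine ⟨hGb, ?_, ?_⟩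
  · rw [Fin.lt_def, sub_val b, sub_val b]
    split_ifs <;> omega
  · rw [Fin.le_def, sub_val b, sub_val b]
    simp only [pos_self]
    split_ifs <;> omega

lemma align_outer {G B : Fin n} (h1 : inV w b G) (h2 : inV w b (w G))
    (h3 : pos b G < pos b (w G))
    (hB1 : 0 < pos b B) (hB2 : pos b B < pos b G)
    (hBhead : pos b (w B) < pos b B ∨ ¬ inV w b (w B)) :
    IsAlignment w G B := by
  simp only [inV, LL] at h1 h2 hBhead
  obtain ⟨hG0, hGL⟩ := h1
  obtain ⟨hq0, hqL⟩ := h2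
  have hLn : pos b (w b) < n := pos_lt b (w b)
  have hBb : B ≠ b := fun hc => by simp [hc, pos_self] at hB1
  have hGB : G ≠ B := fun hc => by rw [hc] at hB2; omega
  have hheadL : pos b (w B) ≠ pos b (w b) := head_ne_L w b hBb
  have hhead : pos b (w B) < pos b B ∨ pos b (w B) = 0 ∨ pos b (w b) < pos b (w B) := by
    rcases hBhead with h | h
    · exact Or.inl h
    · rcases Nat.eq_zero_or_pos (pos b (w B)) with h0 | hpos
      · exact Or.inr (Or.inl h0)
      · have : ¬ (pos b (w B) < pos b (w b)) := fun hc => h ⟨hpos, hc⟩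
        omega
  have hwBn := pos_lt b (w B)
  have hqn := pos_lt b (w G)
  unfold IsAlignment
  refine ⟨hGB, ?_, ?_⟩
  · rw [Fin.lt_def, sub_val b, sub_val b]
    split_ifs <;> omega
  · rw [Fin.le_def, sub_val b, sub_val b]
    split_ifs <;> omega

lemma cross_crosser {G X : Fin n} (h1 : inV w b G) (h2 : inV w b (w G))
    (h3 : pos b G < pos b (w G))
    (hX1 : pos b G < pos b X) (hX2 : pos b X ≤ pos b (w G))
    (hXhead : pos b (w X) < pos b G ∨ ¬ inV w b (w X)) :
    Crossing w X G := by
  simp only [inV, LL] at h1 h2 hXhead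
  obtain ⟨hG0, hGL⟩ := h1
  obtain ⟨hq0, hqL⟩ := h2
  have hLn : pos b (w b) < n := pos_lt b (w b)
  have hXb : X ≠ b := fun hc => by simp [hc, pos_self] at hX1
  have hXG : X ≠ G := fun hc => by rw [hc] at hX1; omega
  have hheadL : pos b (w X) ≠ pos b (w b) := head_ne_L w b hXb
  have hhead : pos b (w X) < pos b G ∨ pos b (w X) = 0 ∨ pos b (w b) < pos b (w X) := by
    rcases hXhead with h | h
    · exact Or.inl h
    · rcases Nat.eq_zero_or_pos (pos b (w X)) with h0 | hpos
      · exact Or.inr (Or.inl h0)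
      · have : ¬ (pos b (w X) < pos b (w b)) := fun hc => h ⟨hpos, hc⟩
        omega
  have hwXn := pos_lt b (w X)
  have hqn := pos_lt b (w G)
  unfold Crossing
  right
  refine ⟨hXG, ?_, Or.inl ?_⟩
  · rw [Fin.le_def, sub_val b, sub_val b]
    split_ifs <;> omega
  · rw [Fin.lt_def, sub_val b, sub_val b]
    split_ifs <;> omega

def good (w : Equiv.Perm (Fin n)) (b x : Fin n) : Prop :=
  ∀ k : ℕ, inV w b ((⇑w)^[k] x)


lemma good_iter {z : Fin n} (h : good w b z) (k : ℕ) : good w b ((⇑w)^[k] z) := by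
  intro k'
  rw [← Function.iterate_add_apply]
  exact h _

lemma iter_mod {x : Fin n} {p : ℕ} (hp : 0 < p) (hx : (⇑w)^[p] x = x) :
    ∀ k, (⇑w)^[k] x = (⇑w)^[k % p] x := by
  intro k
  induction k using Nat.strong_induction_on with
  | _ k IH =>
    rcases lt_or_ge k p with h | h
    · rw [Nat.mod_eq_of_lt h]
    · have h1 : k = (k - p) + p := by omega
      have h2 : (⇑w)^[k] x = (⇑w)^[k - p] x := by
        conv_lhs => rw [h1]
        rw [Function.iterate_add_apply, hx]
      rw [h2, IH (k - p) (by omega), Nat.mod_eq_sub_mod h]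

lemma exists_period (x : Fin n) : ∃ p, 0 < p ∧ (⇑w)^[p] x = x := by
  refine ⟨Fintype.card (Equiv.Perm (Fin n)), Fintype.card_pos, ?_⟩
  have h := pow_card_eq_one (G := Equiv.Perm (Fin n)) (x := w)
  have : (w ^ Fintype.card (Equiv.Perm (Fin n))) x = x := by rw [h]; rfl
  rwa [Equiv.Perm.coe_pow] at this

lemma orbit_distinct {v : Fin n} {m : ℕ}
    (hall : ∀ j, j ≤ m → inV w b ((⇑w)^[j] v))
    (hexit : ¬ inV w b ((⇑w)^[m+1] v)) :
    ∀ j l, j < l → l ≤ m + 1 → (⇑w)^[j] v ≠ (⇑w)^[l] v := by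
  intro j l hjl hlm heq
  have h1 : (⇑w)^[l] v = (⇑w)^[j] ((⇑w)^[l - j] v) := by
    rw [← Function.iterate_add_apply]
    congr 1
    omega
  rw [h1] at heq
  have h2 : v = (⇑w)^[l - j] v := (w.injective.iterate j) heq
  have h3 := iter_mod w (p := l - j) (x := v) (by omega) h2.symm
  have h4 : (m + 1) % (l - j) ≤ m := by
    have := Nat.mod_lt (m + 1) (y := l - j) (by omega)
    omega
  exact hexit (by rw [h3 (m + 1)]; exact hall _ h4)

lemma chain
    (HCA : ∀ p s x : Fin n, IsAlignment w p s → Crossing w x p → Crossing w x s → False)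
    (hfpf : ∀ i : Fin n, w i ≠ i) {v : Fin n} {m : ℕ}
    (hall : ∀ j, j ≤ m → inV w b ((⇑w)^[j] v))
    (hexit : ¬ inV w b ((⇑w)^[m+1] v)) :
    ∀ j, j < m → pos b ((⇑w)^[j+1] v) < pos b ((⇑w)^[j] v) := by
  classical
  set u : ℕ → Fin n := fun j => (⇑w)^[j] v with hu
  have hsucc : ∀ j, u (j + 1) = w (u j) := fun j => Function.iterate_succ_apply' _ _ _
  suffices H : ∀ k, ∀ j, j < m → m - j = k + 1 → pos b (u (j+1)) < pos b (u j) by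
    intro j hj
    exact H (m - j - 1) j hj (by omega)
  intro k
  induction k using Nat.strong_induction_on with
  | _ k IH =>
    intro j hj hk
    have IH' : ∀ l, j < l → l < m → pos b (u (l+1)) < pos b (u l) := by
      intro l h1 h2
      rcases Nat.lt_or_ge (m - l - 1) k with hlt | hge
      · exact IH (m - l - 1) hlt l h2 (by omega)
      · omega
    by_contra hcon
    push_neg at hcon
    have hne : u j ≠ u (j + 1) :=
      orbit_distinct w b hall hexit j (j+1) (by omega) (by omega)
    have hfwd : pos b (u j) < pos b (u (j+1)) := by
      have := pos_ne (b := b) hne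
      omega
    have mono : ∀ s, j + 1 ≤ s → s ≤ m → pos b (u s) ≤ pos b (u (j+1)) := by
      intro s h1 h2
      induction s, h1 using Nat.le_induction with
      | base => exact le_refl _
      | succ s hs ih =>
        have hd := IH' s (by omega) (by omega)
        have := ih (by omega)
        omega
    set P : ℕ → Prop := fun k' => j + 1 ≤ k' ∧ pos b (u j) < pos b (u k') with hP
    have hPj1 : P (j+1) := ⟨le_refl _, hfwd⟩
    set l := Nat.findGreatest P m with hldef
    have hl1 : j + 1 ≤ l := Nat.le_findGreatest (by omega) hPj1
    have hPl : P l := Nat.findGreatest_spec (by omega : j + 1 ≤ m) hPj1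
    have hlm : l ≤ m := Nat.findGreatest_le m
    have hinVj : inV w b (u j) := hall j (by omega)
    have hinVj1 : inV w b (u (j+1)) := hall (j+1) (by omega)
    have hwuj : w (u j) = u (j+1) := (hsucc j).symm
    rcases eq_or_lt_of_le hlm with heq | hlt
    · -- l = m : exit crosser against alignment (u j, b)
      rw [heq] at hPl
      have hal : IsAlignment w (u j) b := by
        refine align_b w b hinVj ?_ ?_
        · rw [hwuj]; exact hinVj1
        · rw [hwuj]; exact hfwd
      have hc1 : Crossing w (u m) (u j) := by
        refine cross_crosser w b hinVj ?_ ?_ hPl.2 ?_ ?_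
        · rw [hwuj]; exact hinVj1
        · rw [hwuj]; exact hfwd
        · rw [hwuj]
          exact mono m (by omega) (by omega)
        · right
          rw [← hsucc m]
          exact hexit
      have hc2 : Crossing w (u m) b := by
        refine exit_cross_b w b (hfpf b) (hall m (le_refl _)) ?_
        rw [← hsucc m]
        exact hexit
      exact HCA (u j) b (u m) hal hc1 hc2
    · -- l < m
      have hnP : ¬ P (l + 1) :=
        Nat.findGreatest_is_greatest (n := m) (k := l + 1) (by omega) (by omega)
      have h1 : pos b (u (l+1)) ≤ pos b (u j) := by
        by_contra hgt
        refine hnP ⟨by omega, by omega⟩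
      have hne2 : u (l+1) ≠ u j :=
        fun hc => (orbit_distinct w b hall hexit j (l+1) (by omega) (by omega)) hc.symm
      have hstrict : pos b (u (l+1)) < pos b (u j) := by
        have := pos_ne (b := b) hne2
        omega
      have hinVl1 : inV w b (u (l+1)) := hall (l+1) (by omega)
      have hal : IsAlignment w (u j) (u (l+1)) := by
        refine align_outer w b hinVj ?_ ?_ hinVl1.1 hstrict ?_
        · rw [hwuj]; exact hinVj1
        · rw [hwuj]; exact hfwd
        · rcases eq_or_lt_of_le (show l + 1 ≤ m by omega) with heq2 | hlt2
          · right
            rw [← hsucc (l+1), heq2]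
            exact hexit
          · left
            rw [← hsucc (l+1)]
            exact IH' (l+1) (by omega) hlt2
      have hc1 : Crossing w (u l) (u j) := by
        refine cross_crosser w b hinVj ?_ ?_ hPl.2 ?_ ?_
        · rw [hwuj]; exact hinVj1
        · rw [hwuj]; exact hfwd
        · rw [hwuj]
          exact mono l (by omega) (by omega)
        · left
          rw [← hsucc l]
          exact hstrict
      have hc2 : Crossing w (u l) (u (l+1)) := by
        rw [hsucc l]
        exact cross_symm w (cross_succ w (u l) (hfpf _) (hfpf _))
      exact HCA (u j) (u (l+1)) (u l) hal hc1 hc2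

lemma theta2
    (HCA : ∀ p s x : Fin n, IsAlignment w p s → Crossing w x p → Crossing w x s → False)
    (hfpf : ∀ i : Fin n, w i ≠ i) {G : Fin n}
    (h1 : inV w b G) (h2 : inV w b (w G)) (h3 : pos b G < pos b (w G)) :
    ∀ v : Fin n, pos b G ≤ pos b v → pos b v ≤ pos b (w G) → good w b v := by
  classical
  intro v hv1 hv2
  by_contra hbad
  have hinv : inV w b v := ⟨by have := h1.1; omega, by have := h2.2; omega⟩
  have hex : ∃ k, ¬ inV w b ((⇑w)^[k] v) := by
    by_contra hc
    push_neg at hc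
    exact hbad hc
  set k0 := Nat.find hex with hk0
  have hk0spec : ¬ inV w b ((⇑w)^[k0] v) := Nat.find_spec hex
  have hk0pos : k0 ≠ 0 := by
    intro hc
    rw [hc] at hk0spec
    exact hk0spec hinv
  set m := k0 - 1 with hm
  have hall : ∀ j, j ≤ m → inV w b ((⇑w)^[j] v) := by
    intro j hj
    by_contra hc
    have := Nat.find_min hex (m := j) (by omega)
    exact this hc
  have hexit : ¬ inV w b ((⇑w)^[m+1] v) := by
    have : m + 1 = k0 := by omega
    rw [this]
    exact hk0spec
  set u : ℕ → Fin n := fun j => (⇑w)^[j] v with hu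
  have hsucc : ∀ j, u (j + 1) = w (u j) := fun j => Function.iterate_succ_apply' _ _ _
  have hchain : ∀ j, j < m → pos b (u (j+1)) < pos b (u j) :=
    chain w b HCA hfpf hall hexit
  have mono : ∀ j, j ≤ m → pos b (u j) ≤ pos b v := by
    intro j hj
    induction j with
    | zero => exact le_refl _
    | succ j ih =>
      have hd := hchain j (by omega)
      have := ih (by omega)
      omega
  set P : ℕ → Prop := fun k' => pos b G ≤ pos b (u k') with hP
  have hP0 : P 0 := hv1
  set l := Nat.findGreatest P m with hldef
  have hPl : P l := Nat.findGreatest_spec (Nat.zero_le m) hP0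
  have hlm : l ≤ m := Nat.findGreatest_le m
  rcases eq_or_lt_of_le hlm with heq | hlt
  · -- l = m : exit inside (pos G, q]
    rw [heq] at hPl
    have hneG : u m ≠ G := by
      intro hc
      have hexit' : ¬ inV w b (u (m+1)) := hexit
      rw [hsucc m, hc] at hexit'
      exact hexit' h2
    have hstrict : pos b G < pos b (u m) := by
      have := pos_ne (b := b) hneG
      omega
    have hal : IsAlignment w G b := align_b w b h1 h2 h3
    have hc1 : Crossing w (u m) G := by
      refine cross_crosser w b h1 h2 h3 hstrict ?_ ?_
      · exact le_trans (mono m (le_refl _)) hv2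
      · right
        rw [← hsucc m]
        exact hexit
    have hc2 : Crossing w (u m) b := by
      refine exit_cross_b w b (hfpf b) (hall m (le_refl _)) ?_
      rw [← hsucc m]
      exact hexit
    exact HCA G b (u m) hal hc1 hc2
  · have hnP : ¬ P (l + 1) :=
      Nat.findGreatest_is_greatest (n := m) (k := l + 1) (by omega) (by omega)
    have hlow : pos b (u (l+1)) < pos b G := by
      by_contra hc
      exact hnP (by omega)
    have hneG : u l ≠ G := by
      intro hc
      have : pos b (u (l+1)) = pos b (w G) := by rw [hsucc l, hc]
      omega
    have hstrict : pos b G < pos b (u l) := by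
      have := pos_ne (b := b) hneG
      have : pos b G ≤ pos b (u l) := hPl
      omega
    have hinVl1 : inV w b (u (l+1)) := hall (l+1) (by omega)
    have hal : IsAlignment w G (u (l+1)) := by
      refine align_outer w b h1 h2 h3 hinVl1.1 hlow ?_
      rcases eq_or_lt_of_le (show l + 1 ≤ m by omega) with heq2 | hlt2
      · right
        rw [← hsucc (l+1), heq2]
        exact hexit
      · left
        rw [← hsucc (l+1)]
        exact hchain (l+1) hlt2
    have hc1 : Crossing w (u l) G := by
      refine cross_crosser w b h1 h2 h3 hstrict ?_ ?_
      · exact le_trans (mono l (by omega)) hv2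
      · left
        rw [← hsucc l]
        exact hlow
    have hc2 : Crossing w (u l) (u (l+1)) := by
      rw [hsucc l]
      exact cross_symm w (cross_succ w (u l) (hfpf _) (hfpf _))
    exact HCA G (u (l+1)) (u l) hal hc1 hc2

lemma theta3
    (HCA : ∀ p s x : Fin n, IsAlignment w p s → Crossing w x p → Crossing w x s → False)
    (hfpf : ∀ i : Fin n, w i ≠ i) {z : Fin n}
    (hgood : good w b z) (hback : pos b (w z) < pos b z) :
    ∀ v : Fin n, pos b (w z) ≤ pos b v → pos b v ≤ pos b z → good w b v := by
  classical
  intro v hv1 hv2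
  by_contra hbad
  have hvz : v ≠ z := by
    intro hc
    rw [hc] at hbad
    exact hbad hgood
  have hvz' : pos b v < pos b z := by
    have := pos_ne (b := b) hvz
    omega
  obtain ⟨T, hT1, hT2⟩ := exists_period w z
  set Q : ℕ → Prop := fun k => pos b v < pos b ((⇑w)^[k+1] z) with hQ
  have hQex : ∃ k, Q k := by
    refine ⟨T - 1, ?_⟩
    have : T - 1 + 1 = T := by omega
    rw [hQ]
    simp only
    rw [this, hT2]
    exact hvz'
  set k0 := Nat.find hQex with hk0
  have hk0spec : Q k0 := Nat.find_spec hQex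
  have hnot0 : ¬ Q 0 := by
    rw [hQ]
    simp only
    rw [Function.iterate_one]
    omega
  have hk0pos : k0 ≠ 0 := fun hc => hnot0 (hc ▸ hk0spec)
  have hprev : ¬ Q (k0 - 1) := Nat.find_min hQex (by omega)
  have hprev' : pos b ((⇑w)^[k0] z) ≤ pos b v := by
    rw [hQ] at hprev
    simp only at hprev
    have : k0 - 1 + 1 = k0 := by omega
    rw [this] at hprev
    omega
  have hgk : good w b ((⇑w)^[k0] z) := good_iter w b hgood k0
  have hne : (⇑w)^[k0] z ≠ v := by
    intro hc
    rw [hc] at hgk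
    exact hbad hgk
  have hstrict : pos b ((⇑w)^[k0] z) < pos b v := by
    have := pos_ne (b := b) hne
    omega
  have hw1 : w ((⇑w)^[k0] z) = (⇑w)^[k0+1] z := (Function.iterate_succ_apply' _ _ _).symm
  have hgk1 : good w b ((⇑w)^[k0+1] z) := good_iter w b hgood (k0+1)
  have hkval : pos b v < pos b ((⇑w)^[k0+1] z) := hk0spec
  have hGin : inV w b ((⇑w)^[k0] z) := by
    have := hgk 0
    simpa using this
  have hGin2 : inV w b (w ((⇑w)^[k0] z)) := by
    rw [hw1]
    have := hgk1 0
    simpa using this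
  have hGfwd : pos b ((⇑w)^[k0] z) < pos b (w ((⇑w)^[k0] z)) := by
    rw [hw1]
    omega
  refine hbad (theta2 w b HCA hfpf hGin hGin2 hGfwd v (le_of_lt hstrict) ?_)
  rw [hw1]
  exact le_of_lt hkval

lemma pos_add (c : Fin n) : pos b (b + c) = c.val := by
  unfold pos
  rw [add_sub_cancel_left]

lemma engine
    (HCA : ∀ p s x : Fin n, IsAlignment w p s → Crossing w x p → Crossing w x s → False)
    (hfpf : ∀ i : Fin n, w i ≠ i) {a : Fin n}
    (ha1 : inV w b a) (ha2 : inV w b (w a)) (ha3 : pos b a < pos b (w a)) :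
    ∃ lo hi : ℕ, 0 < lo ∧ lo ≤ hi ∧ hi < LL w b ∧ lo ≤ pos b a ∧ pos b a ≤ hi ∧
      ∀ x : Fin n, lo ≤ pos b x → pos b x ≤ hi → lo ≤ pos b (w x) ∧ pos b (w x) ≤ hi := by
  classical
  have hga : good w b a := theta2 w b HCA hfpf ha1 ha2 ha3 a (le_refl _) (le_of_lt ha3)
  set pa := pos b a with hpa
  set gd : ℕ → Prop := fun i => ∀ x : Fin n, pos b x = i → good w b x with hgd
  have hgda : gd pa := by
    intro x hx
    have : x = a := pos_inj hx
    rw [this]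
    exact hga
  set R : ℕ → Prop := fun h => pa ≤ h ∧ h < LL w b ∧ ∀ i, pa ≤ i → i ≤ h → gd i with hR
  have hRpa : R pa := by
    refine ⟨le_refl _, ha1.2, ?_⟩
    intro i hi1 hi2
    have : i = pa := le_antisymm hi2 hi1
    rw [this]
    exact hgda
  have hpaL : pa ≤ LL w b - 1 := by have := ha1.2; omega
  set hi := Nat.findGreatest R (LL w b - 1) with hhi
  have hRhi : R hi := Nat.findGreatest_spec hpaL hRpa
  have hhiL : hi ≤ LL w b - 1 := Nat.findGreatest_le _
  have hhi_pa : pa ≤ hi := hRhi.1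
  set Pl : ℕ → Prop := fun l => 0 < l ∧ l ≤ pa ∧ ∀ i, l ≤ i → i ≤ pa → gd i with hPl
  have hPlex : ∃ l, Pl l := by
    refine ⟨pa, ha1.1, le_refl _, ?_⟩
    intro i hi1 hi2
    have : i = pa := le_antisymm hi2 hi1
    rw [this]
    exact hgda
  set lo := Nat.find hPlex with hlo
  have hPlo : Pl lo := Nat.find_spec hPlex
  have hlo_pa : lo ≤ pa := hPlo.2.1
  have hlo0 : 0 < lo := hPlo.1
  have goodrange : ∀ i, lo ≤ i → i ≤ hi → gd i := by
    intro i hi1 hi2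
    rcases le_total i pa with h | h
    · exact hPlo.2.2 i hi1 h
    · exact hRhi.2.2 i h hi2
  have bdh : hi + 1 < LL w b → ¬ gd (hi + 1) := by
    intro hlt hgdc
    have hnR : ¬ R (hi + 1) :=
      Nat.findGreatest_is_greatest (n := LL w b - 1) (k := hi + 1) (by omega) (by omega)
    refine hnR ⟨by omega, by omega, ?_⟩
    intro i hi1 hi2
    rcases eq_or_lt_of_le hi2 with heq | hlt2
    · rw [heq]; exact hgdc
    · exact hRhi.2.2 i hi1 (by omega)
  have bdl : 1 < lo → ¬ gd (lo - 1) := by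
    intro hlt hgdc
    have hnP : ¬ Pl (lo - 1) := Nat.find_min hPlex (by omega)
    refine hnP ⟨by omega, by omega, ?_⟩
    intro i hi1 hi2
    rcases eq_or_lt_of_le hi1 with heq | hlt2
    · rw [← heq]; exact hgdc
    · exact hPlo.2.2 i (by omega) hi2
  refine ⟨lo, hi, hlo0, le_trans hlo_pa hhi_pa, by omega, hlo_pa, hhi_pa, ?_⟩
  intro x hx1 hx2
  have hgx : good w b x := goodrange (pos b x) hx1 hx2 x rfl
  have hinVx : inV w b x := hgx 0
  have hinVwx : inV w b (w x) := by
    have := hgx 1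
    simpa using this
  have hne : pos b x ≠ pos b (w x) := by
    intro hc
    exact hfpf x (pos_inj hc.symm)
  rcases lt_or_gt_of_ne hne with hfw | hbw
  · -- forward
    have hrange : ∀ i, pos b x ≤ i → i ≤ pos b (w x) → gd i := by
      intro i hi1 hi2 y hy
      exact theta2 w b HCA hfpf hinVx hinVwx hfw y (by omega) (by omega)
    constructor
    · omega
    · by_contra hc
      push_neg at hc
      have h1 : hi + 1 < LL w b := by
        have := hinVwx.2
        omega
      exact bdh h1 (hrange (hi + 1) (by omega) (by omega))
  · -- backward
    have hrange : ∀ i, pos b (w x) ≤ i → i ≤ pos b x → gd i := by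
      intro i hi1 hi2 y hy
      exact theta3 w b HCA hfpf hgx hbw y (by omega) (by omega)
    constructor
    · by_contra hc
      push_neg at hc
      have hlo1 : 1 < lo := by
        have := hinVwx.1
        omega
      exact bdl hlo1 (hrange (lo - 1) (by omega) (by omega))
    · omega

lemma descent_exists (hn4 : 4 ≤ n) (hfpf : ∀ i : Fin n, w i ≠ i)
    (hns : ¬ ∃ m : Fin n, ∀ i, w i = i + m) :
    ∃ i : Fin n, (w (i+1) - (i+1)).val + 2 ≤ (w i - i).val := by
  haveI : Nonempty (Fin n) := ⟨0⟩
  by_contra h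
  push_neg at h
  -- h : ∀ i, (w i - i).val < (w (i+1) - (i+1)).val + 2
  have hmono : ∀ i : Fin n, (w i - i).val ≤ (w (i+1) - (i+1)).val := by
    intro i
    have h1 := h i
    by_contra hgt
    push_neg at hgt
    have heq : (w i - i).val = (w (i+1) - (i+1)).val + 1 := by omega
    have hlt : (w (i+1) - (i+1)).val + 1 < n := by
      have := (w i - i).isLt
      omega
    have hfin : w i - i = (w (i+1) - (i+1)) + 1 := by
      apply Fin.val_injective
      rw [Fin.val_add, heq]
      have hn1 : (1 : Fin n).val = 1 := by
        have h1v : (1 : Fin n).val = 1 % n := rfl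
        rw [h1v]
        exact Nat.mod_eq_of_lt (by omega)
      rw [hn1, Nat.mod_eq_of_lt hlt]
    have hww : w (i+1) = w i := by
      have e1 : w (i+1) = (i+1) + (w (i+1) - (i+1)) := by ring
      have e2 : w i = i + (w i - i) := by ring
      rw [e1, e2, hfin]
      ring
    have := w.injective hww
    have hone : (1 : Fin n) = 0 := by
      have : i + 1 = i + 0 := by rw [add_zero]; exact this
      exact add_left_cancel this
    have hz : ((1 : Fin n)).val = 0 := by rw [hone]; rfl
    have hn1 : (1 : Fin n).val = 1 := by
      have h1v : (1 : Fin n).val = 1 % n := rfl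
      rw [h1v]
      exact Nat.mod_eq_of_lt (by omega)
    omega
  obtain ⟨imax, hmax⟩ := Finite.exists_max (fun j : Fin n => (w j - j).val)
  have hconstk : ∀ k : ℕ, (w (imax + k) - (imax + k)).val = (w imax - imax).val := by
    intro k
    induction k with
    | zero => simp
    | succ k ih =>
      have hcast : ((k+1 : ℕ) : Fin n) = ((k : ℕ) : Fin n) + 1 := by push_cast; ring
      have hstep := hmono (imax + (k : ℕ))
      have hm := hmax (imax + (k : ℕ) + 1)
      rw [hcast, ← add_assoc]
      omega
  have hconst : ∀ j : Fin n, w j - j = w imax - imax := by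
    intro j
    have e1 : j = imax + ((j - imax).val : Fin n) := by
      rw [Fin.cast_val_eq_self]
      ring
    apply Fin.val_injective
    rw [e1]
    exact hconstk (j - imax).val
  refine hns ⟨w imax - imax, ?_⟩
  intro i
  rw [← hconst i]
  ring

end CA9


/-- A fixed-point-free stabilized-interval-free permutation of `[n]`, `n ≥ 4`,
which is not a spirograph permutation contains a crossed alignment. -/
theorem stmt9 {n : ℕ} [NeZero n] (hn : 4 ≤ n) (w : Equiv.Perm (Fin n))
    (hfpf : ∀ i, w i ≠ i)
    (hsif : ∀ a b : Fin n, a ≤ b → Finset.Icc a b ≠ Finset.univ →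
      (Finset.Icc a b).image w ≠ Finset.Icc a b)
    (hns : ¬ ∃ m : Fin n, ∀ i, w i = i + m) :
    ∃ p s x : Fin n, IsAlignment w p s ∧ Crossing w x p ∧ Crossing w x s := by
  classical
  by_contra hCA
  have HCA : ∀ p s x : Fin n, IsAlignment w p s → Crossing w x p → Crossing w x s → False :=
    fun p s x h1 h2 h3 => hCA ⟨p, s, x, h1, h2, h3⟩
  obtain ⟨i, hdesc⟩ := CA9.descent_exists w hn hfpf hns
  have hone : (1 : Fin n).val = 1 := by
    have h1v : (1 : Fin n).val = 1 % n := rfl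
    rw [h1v]
    exact Nat.mod_eq_of_lt (by omega)
  set a := i + 1 with ha
  set b := i with hb
  have hfpa : w a ≠ a := hfpf a
  have hdesc' : (w a - a).val + 2 ≤ (w b - b).val := hdesc
  have hva1 : (w a - a).val ≠ 0 := by
    intro hc
    exact hfpa (sub_eq_zero.mp (Fin.val_injective (by simpa using hc)))
  have hvin : (w b - b).val < n := (w b - b).isLt
  -- positions of a and w a
  have hposa : CA9.pos b a = 1 := by
    unfold CA9.pos
    have : a - b = 1 := by rw [ha, hb]; ring
    rw [this, hone]
  have hLb : CA9.LL w b = (w b - b).val := rfl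
  have hposwa : CA9.pos b (w a) = (w a - a).val + 1 := by
    unfold CA9.pos
    have hsplit : w a - b = (w a - a) + (a - b) := by ring
    have hab : a - b = 1 := by rw [ha, hb]; ring
    rw [hsplit, hab, Fin.val_add, hone]
    have hva := hdesc'
    have : (w a - a).val + 1 < n := by omega
    exact Nat.mod_eq_of_lt this
  have ha1 : CA9.inV w b a := by
    constructor
    · rw [hposa]; omega
    · rw [hposa, hLb]
      omega
  have ha2 : CA9.inV w b (w a) := by
    constructor
    · rw [hposwa]; omega
    · rw [hposwa, hLb]; omega
  have ha3 : CA9.pos b a < CA9.pos b (w a) := by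
    rw [hposa, hposwa]; omega
  obtain ⟨lo, hi, hlo0, hlohi, hhiL, hloa, hahi, hinvar⟩ :=
    CA9.engine w b HCA hfpf ha1 ha2 ha3
  -- the stabilized finset
  set S : Finset (Fin n) := Finset.univ.filter (fun x => lo ≤ CA9.pos b x ∧ CA9.pos b x ≤ hi)
    with hS
  have hmemS : ∀ x : Fin n, x ∈ S ↔ lo ≤ CA9.pos b x ∧ CA9.pos b x ≤ hi := by
    intro x
    simp [hS]
  have haS : a ∈ S := (hmemS a).mpr ⟨hloa, hahi⟩
  have hbS : b ∉ S := by
    rw [hmemS]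
    rw [CA9.pos_self]
    omega
  have himg : S.image w = S := by
    apply Finset.eq_of_subset_of_card_le
    · intro y hy
      rw [Finset.mem_image] at hy
      obtain ⟨x, hx, rfl⟩ := hy
      rw [hmemS] at hx ⊢
      exact hinvar x hx.1 hx.2
    · rw [Finset.card_image_of_injective _ w.injective]
  have hScompl : ∀ x : Fin n, x ∈ Sᶜ → w x ∈ Sᶜ := by
    intro x hx
    rw [Finset.mem_compl] at hx ⊢
    intro hc
    rw [← himg, Finset.mem_image] at hc
    obtain ⟨z, hz, hzx⟩ := hc
    exact hx (w.injective hzx ▸ hz)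
  have himgc : Sᶜ.image w = Sᶜ := by
    apply Finset.eq_of_subset_of_card_le
    · intro y hy
      rw [Finset.mem_image] at hy
      obtain ⟨x, hx, rfl⟩ := hy
      exact hScompl x hx
    · rw [Finset.card_image_of_injective _ w.injective]
  -- convert to Icc
  have hLn : CA9.LL w b < n := CA9.pos_lt b (w b)
  have hbv := b.isLt
  have hposval : ∀ x : Fin n, CA9.pos b x =
      if b.val ≤ x.val then x.val - b.val else x.val + n - b.val := by
    intro x
    unfold CA9.pos
    exact CA9.fin_sub_val x b
  have hicc : ∃ A B : Fin n, A ≤ B ∧ (Finset.Icc A B = S ∨ Finset.Icc A B = Sᶜ) := by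
    rcases Nat.lt_or_ge (b.val + hi) n with h1 | h1
    · refine ⟨⟨b.val + lo, by omega⟩, ⟨b.val + hi, by omega⟩, by
        rw [Fin.le_def]; simp; omega, Or.inl ?_⟩
      ext x
      rw [Finset.mem_Icc, hmemS, Fin.le_def, Fin.le_def]
      have := hposval x
      have := x.isLt
      simp only [Fin.val_mk]
      split at *
      all_goals omega
    · rcases Nat.lt_or_ge (b.val + lo) n with h2 | h2
      · -- wrap: complement
        refine ⟨⟨b.val + hi + 1 - n, by omega⟩, ⟨b.val + lo - 1, by omega⟩, by
          rw [Fin.le_def]; simp; omega, Or.inr ?_⟩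
        ext x
        rw [Finset.mem_Icc, Finset.mem_compl, hmemS, Fin.le_def, Fin.le_def]
        have := hposval x
        have := x.isLt
        simp only [Fin.val_mk]
        constructor
        · intro hx
          intro hc
          split at *
          all_goals omega
        · intro hx
          by_contra hc
          push_neg at hc
          split at *
          all_goals omega
      · refine ⟨⟨b.val + lo - n, by omega⟩, ⟨b.val + hi - n, by omega⟩, by
          rw [Fin.le_def]; simp; omega, Or.inl ?_⟩
        ext x
        rw [Finset.mem_Icc, hmemS, Fin.le_def, Fin.le_def]
        have := hposval x
        have := x.isLt
        simp only [Fin.val_mk]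
        split at *
        all_goals omega
  obtain ⟨A, B, hAB, hcase⟩ := hicc
  rcases hcase with hcs | hcc
  · refine hsif A B hAB ?_ ?_
    · rw [hcs]
      intro hc
      exact hbS (hc ▸ Finset.mem_univ b)
    · rw [hcs]
      exact himg
  · refine hsif A B hAB ?_ ?_
    · rw [hcc]
      intro hc
      have : a ∈ Sᶜ := hc ▸ Finset.mem_univ a
      rw [Finset.mem_compl] at this
      exact this haS
    · rw [hcc]
      exact himgc
end

section
/- Let w be a fixed-point-free permutation of [n_1+n_2] that decomposes as w = w1 ⊕ w2, meaning w restricts to a fixed-point-free permutation w1 of [n_1] and a fixed-point-free permutation of [n_1+1, n_1+n_2] corresponding to w2 on [n_2]. Let k_i denote the number of anti-exceedances of w_i (indices i with w_i^{-1}(i) > i). Then the number of alignments of w equals (number of alignments of w1) + (number of alignments of w2) + k_1(n_2 - k_2) + k_2(n_1 - k_1). -/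
instance {n : ℕ} [NeZero n] (w : Equiv.Perm (Fin n)) (p s : Fin n) :
    Decidable (IsAlignment w p s) := by
  unfold IsAlignment; infer_instance

/-- The number of alignments of `w`. -/
def alignCount {m : ℕ} [NeZero m] (w : Equiv.Perm (Fin m)) : ℕ :=
  (Finset.univ.filter fun p : Fin m × Fin m => IsAlignment w p.1 p.2).card

/-- The number of anti-exceedances of `w`: elements `x` with `w⁻¹ x > x`. -/
def antiExcCount {m : ℕ} (w : Equiv.Perm (Fin m)) : ℕ :=
  (Finset.univ.filter fun x : Fin m => x < w.symm x).card

lemma subval {N : ℕ} [NeZero N] (a b : Fin N) : (a - b).val = (N - b.val + a.val) % N := by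
  rw [Fin.sub_def]

lemma modsub {N a b : ℕ} (ha : a < N) (hb : b < N) :
    (N - b + a) % N = if b ≤ a then a - b else N - b + a := by
  rcases le_or_gt b a with h | h
  · have e : N - b + a = (a - b) + N := by omega
    rw [if_pos h, e, Nat.add_mod_right, Nat.mod_eq_of_lt (by omega)]
  · rw [if_neg (by omega), Nat.mod_eq_of_lt (by omega)]

section main
variable {n1 n2 : ℕ} [NeZero n1] [NeZero n2] [NeZero (n1 + n2)]
    (w : Equiv.Perm (Fin (n1 + n2)))
    (w1 : Equiv.Perm (Fin n1)) (w2 : Equiv.Perm (Fin n2))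
    (h1 : ∀ i : Fin n1, w (Fin.castAdd n2 i) = Fin.castAdd n2 (w1 i))
    (h2 : ∀ j : Fin n2, w (Fin.natAdd n1 j) = Fin.natAdd n1 (w2 j))
    (hf1 : ∀ i, w1 i ≠ i) (hf2 : ∀ j, w2 j ≠ j)

include h1 in
lemma align11 (i i' : Fin n1) :
    IsAlignment w (Fin.castAdd n2 i) (Fin.castAdd n2 i') ↔ IsAlignment w1 i i' := by
  have hii : (Fin.castAdd n2 i ≠ Fin.castAdd n2 i') ↔ i ≠ i' := by
    simp [Fin.ext_iff]
  unfold IsAlignment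
  rw [h1, h1, hii]
  have B1 : (w1 i).val < n1 := (w1 i).isLt
  have B2 : (w1 i').val < n1 := (w1 i').isLt
  have B3 : i.val < n1 := i.isLt
  have B4 : i'.val < n1 := i'.isLt
  simp only [Fin.lt_def, Fin.le_def, subval, Fin.coe_castAdd]
  rw [modsub (by omega) (by omega), modsub (by omega) (by omega),
      modsub (by omega) (by omega), modsub B1 B3, modsub B2 B3, modsub B4 B3]
  constructor
  · rintro ⟨h, ha, hb⟩
    exact ⟨h, by split_ifs at ha ⊢ <;> omega, by split_ifs at hb ⊢ <;> omega⟩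
  · rintro ⟨h, ha, hb⟩
    exact ⟨h, by split_ifs at ha ⊢ <;> omega, by split_ifs at hb ⊢ <;> omega⟩

include h2 in
lemma align22 (j j' : Fin n2) :
    IsAlignment w (Fin.natAdd n1 j) (Fin.natAdd n1 j') ↔ IsAlignment w2 j j' := by
  have hjj : (Fin.natAdd n1 j ≠ Fin.natAdd n1 j') ↔ j ≠ j' := by
    simp [Fin.ext_iff]
  unfold IsAlignment
  rw [h2, h2, hjj]
  have B1 : (w2 j).val < n2 := (w2 j).isLt
  have B2 : (w2 j').val < n2 := (w2 j').isLt
  have B3 : j.val < n2 := j.isLt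
  have B4 : j'.val < n2 := j'.isLt
  simp only [Fin.lt_def, Fin.le_def, subval, Fin.coe_natAdd]
  rw [modsub (by omega) (by omega), modsub (by omega) (by omega),
      modsub (by omega) (by omega), modsub B1 B3, modsub B2 B3, modsub B4 B3]
  constructor
  · rintro ⟨h, ha, hb⟩
    exact ⟨h, by split_ifs at ha ⊢ <;> omega, by split_ifs at hb ⊢ <;> omega⟩
  · rintro ⟨h, ha, hb⟩
    exact ⟨h, by split_ifs at ha ⊢ <;> omega, by split_ifs at hb ⊢ <;> omega⟩

include h1 h2 hf1 hf2 in
lemma align12 (i : Fin n1) (j : Fin n2) :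
    IsAlignment w (Fin.castAdd n2 i) (Fin.natAdd n1 j) ↔ (i < w1 i ∧ w2 j < j) := by
  unfold IsAlignment
  rw [h1, h2]
  have hne : Fin.castAdd n2 i ≠ Fin.natAdd n1 j := by
    simp only [ne_eq, Fin.ext_iff, Fin.coe_castAdd, Fin.coe_natAdd]; omega
  have B1 : (w1 i).val < n1 := (w1 i).isLt
  have B2 : (w2 j).val < n2 := (w2 j).isLt
  have B3 : i.val < n1 := i.isLt
  have B4 : j.val < n2 := j.isLt
  have hfi : (w1 i).val ≠ i.val := fun h => hf1 i (Fin.ext h)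
  have hfj : (w2 j).val ≠ j.val := fun h => hf2 j (Fin.ext h)
  simp only [Fin.lt_def, Fin.le_def, subval, Fin.coe_castAdd, Fin.coe_natAdd, hne, true_and,
    ne_eq, not_false_eq_true]
  rw [modsub (by omega) (by omega), modsub (by omega) (by omega), modsub (by omega) (by omega)]
  constructor
  · rintro ⟨ha, hb⟩
    constructor
    · by_contra hc
      split_ifs at ha hb <;> omega
    · by_contra hc
      split_ifs at ha hb <;> omega
  · rintro ⟨ha, hb⟩
    constructor
    · split_ifs <;> omega
    · split_ifs <;> omega

include h1 h2 hf1 hf2 in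
lemma align21 (j : Fin n2) (i : Fin n1) :
    IsAlignment w (Fin.natAdd n1 j) (Fin.castAdd n2 i) ↔ (w1 i < i ∧ j < w2 j) := by
  unfold IsAlignment
  rw [h1, h2]
  have hne : Fin.natAdd n1 j ≠ Fin.castAdd n2 i := by
    simp only [ne_eq, Fin.ext_iff, Fin.coe_castAdd, Fin.coe_natAdd]; omega
  have B1 : (w1 i).val < n1 := (w1 i).isLt
  have B2 : (w2 j).val < n2 := (w2 j).isLt
  have B3 : i.val < n1 := i.isLt
  have B4 : j.val < n2 := j.isLt
  have hfi : (w1 i).val ≠ i.val := fun h => hf1 i (Fin.ext h)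
  have hfj : (w2 j).val ≠ j.val := fun h => hf2 j (Fin.ext h)
  simp only [Fin.lt_def, Fin.le_def, subval, Fin.coe_castAdd, Fin.coe_natAdd, hne, true_and,
    ne_eq, not_false_eq_true]
  rw [modsub (by omega) (by omega), modsub (by omega) (by omega), modsub (by omega) (by omega)]
  constructor
  · rintro ⟨ha, hb⟩
    constructor
    · by_contra hc
      split_ifs at ha hb <;> omega
    · by_contra hc
      split_ifs at ha hb <;> omega
  · rintro ⟨ha, hb⟩
    constructor
    · split_ifs <;> omega
    · split_ifs <;> omega

end main

lemma antiExc_eq {m : ℕ} (w : Equiv.Perm (Fin m)) :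
    antiExcCount w = (Finset.univ.filter fun i : Fin m => w i < i).card := by
  unfold antiExcCount
  apply Finset.card_bij' (fun x _ => w.symm x) (fun i _ => w i)
  · intro a ha
    simp only [Finset.mem_filter, Finset.mem_univ, true_and] at ha ⊢
    simpa using ha
  · intro a ha
    simp only [Finset.mem_filter, Finset.mem_univ, true_and] at ha ⊢
    simpa using ha
  · intro a _; simp
  · intro a _; simp

lemma split_card {m : ℕ} (v : Equiv.Perm (Fin m)) (hf : ∀ i, v i ≠ i) :
    (Finset.univ.filter fun i => i < v i).card
      + (Finset.univ.filter fun i => v i < i).card = m := by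
  have he : (Finset.univ.filter fun i : Fin m => v i < i)
      = (Finset.univ.filter fun i => ¬ i < v i) := by
    apply Finset.filter_congr; intro i _
    constructor
    · exact fun h => not_lt.mpr h.le
    · intro h; exact lt_of_le_of_ne (not_lt.mp h) (hf i)
  rw [he, Finset.card_filter_add_card_filter_not, Finset.card_univ, Fintype.card_fin]

/-- Alignments of a direct sum `w = w₁ ⊕ w₂` of fixed-point-free permutations:
`#Alignments(w) = #Alignments(w₁) + #Alignments(w₂) + k₁(n₂-k₂) + k₂(n₁-k₁)`,
where `kᵢ` is the number of anti-exceedances of `wᵢ`. -/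
theorem stmt13 {n1 n2 : ℕ} [NeZero n1] [NeZero n2] [NeZero (n1 + n2)]
    (w : Equiv.Perm (Fin (n1 + n2)))
    (w1 : Equiv.Perm (Fin n1)) (w2 : Equiv.Perm (Fin n2))
    (h1 : ∀ i : Fin n1, w (Fin.castAdd n2 i) = Fin.castAdd n2 (w1 i))
    (h2 : ∀ j : Fin n2, w (Fin.natAdd n1 j) = Fin.natAdd n1 (w2 j))
    (hf1 : ∀ i, w1 i ≠ i) (hf2 : ∀ j, w2 j ≠ j) :
    alignCount w = alignCount w1 + alignCount w2
      + antiExcCount w1 * (n2 - antiExcCount w2)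
      + antiExcCount w2 * (n1 - antiExcCount w1) := by
  classical
  set K1 := (Finset.univ.filter fun i : Fin n1 => w1 i < i).card with hK1
  set K2 := (Finset.univ.filter fun j : Fin n2 => w2 j < j).card with hK2
  set A1 := (Finset.univ.filter fun i : Fin n1 => i < w1 i).card with hA1
  set A2 := (Finset.univ.filter fun j : Fin n2 => j < w2 j).card with hA2
  have hK1' : antiExcCount w1 = K1 := antiExc_eq w1
  have hK2' : antiExcCount w2 = K2 := antiExc_eq w2
  have hsum1 : A1 + K1 = n1 := split_card w1 hf1
  have hsum2 : A2 + K2 = n2 := split_card w2 hf2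
  have key : alignCount w = alignCount w1 + alignCount w2 + A1 * K2 + K1 * A2 := by
    unfold alignCount
    rw [Finset.card_filter, Fintype.sum_prod_type]
    rw [← Equiv.sum_comp finSumFinEquiv
      (fun p => ∑ s : Fin (n1 + n2), if IsAlignment w p s then 1 else 0)]
    rw [Fintype.sum_sum_type]
    have inner : ∀ p : Fin (n1 + n2),
        (∑ s : Fin (n1 + n2), if IsAlignment w p s then 1 else 0)
        = (∑ i' : Fin n1, if IsAlignment w p (Fin.castAdd n2 i') then 1 else 0)
          + ∑ j' : Fin n2, if IsAlignment w p (Fin.natAdd n1 j') then 1 else 0 := by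
      intro p
      rw [← Equiv.sum_comp finSumFinEquiv (fun s => if IsAlignment w p s then 1 else 0),
        Fintype.sum_sum_type]
      rfl
    simp only [inner]
    simp only [finSumFinEquiv_apply_left, finSumFinEquiv_apply_right]
    rw [Finset.sum_add_distrib, Finset.sum_add_distrib]
    have e11 : (∑ i : Fin n1, ∑ i' : Fin n1,
        if IsAlignment w (Fin.castAdd n2 i) (Fin.castAdd n2 i') then 1 else 0)
        = alignCount w1 := by
      unfold alignCount
      rw [Finset.card_filter, Fintype.sum_prod_type]
      refine Finset.sum_congr rfl fun i _ => Finset.sum_congr rfl fun i' _ => ?_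
      simp only [align11 w w1 h1 i i']
    have e22 : (∑ j : Fin n2, ∑ j' : Fin n2,
        if IsAlignment w (Fin.natAdd n1 j) (Fin.natAdd n1 j') then 1 else 0)
        = alignCount w2 := by
      unfold alignCount
      rw [Finset.card_filter, Fintype.sum_prod_type]
      refine Finset.sum_congr rfl fun j _ => Finset.sum_congr rfl fun j' _ => ?_
      simp only [align22 w w2 h2 j j']
    have e12 : (∑ i : Fin n1, ∑ j : Fin n2,
        if IsAlignment w (Fin.castAdd n2 i) (Fin.natAdd n1 j) then 1 else 0)
        = A1 * K2 := by
      rw [hA1, hK2, Finset.card_filter, Finset.card_filter, Finset.sum_mul_sum]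
      refine Finset.sum_congr rfl fun i _ => Finset.sum_congr rfl fun j _ => ?_
      simp only [align12 w w1 w2 h1 h2 hf1 hf2 i j]
      by_cases ha : i < w1 i <;> by_cases hb : w2 j < j <;> simp [ha, hb]
    have e21 : (∑ j : Fin n2, ∑ i : Fin n1,
        if IsAlignment w (Fin.natAdd n1 j) (Fin.castAdd n2 i) then 1 else 0)
        = K1 * A2 := by
      rw [hK1, hA2, Finset.card_filter, Finset.card_filter, mul_comm, Finset.sum_mul_sum]
      refine Finset.sum_congr rfl fun j _ => Finset.sum_congr rfl fun i _ => ?_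
      simp only [align21 w w1 w2 h1 h2 hf1 hf2 j i]
      by_cases ha : w1 i < i <;> by_cases hb : j < w2 j <;> simp [ha, hb]
    erw [e11, e22, e12, e21]
    unfold alignCount
    ring
  rw [key, hK1', hK2']
  have e2 : n2 - K2 = A2 := by omega
  have e1 : n1 - K1 = A1 := by omega
  rw [e1, e2]
  ring
end

section
/- For n ≥ 1, [x^n] (1/(n+1)) (1 + 2x + Σ_{i≥2} (i-1)x^i)^{n+1} = Σ_{k=1}^n b_{n,k}/(n-k+1)!, where b_{n,k} = B_{n,k}(2·1!, 1·2!, 2·3!, ..., (n-k)·(n-k+1)!) and B_{n,k} is the partial Bell polynomial. -/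
/-- `P` is a set partition of `Fin n` (nonempty pairwise disjoint blocks
covering `Fin n`). -/
def IsSetPartition {n : ℕ} (P : Finset (Finset (Fin n))) : Prop :=
  (∀ B ∈ P, B.Nonempty) ∧
  (∀ B ∈ P, ∀ C ∈ P, B ≠ C → Disjoint B C) ∧
  (∀ x : Fin n, ∃ B ∈ P, x ∈ B)

open Classical in
/-- The partial Bell polynomial `B_{n,k}(x₁,…,x_{n-k+1})`: the sum over set
partitions of `[n]` into `k` blocks of the product of `x_{|B|}` over blocks. -/
noncomputable def partialBell (n k : ℕ) (x : ℕ → ℚ) : ℚ :=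
  ∑ P ∈ Finset.univ.filter
      (fun P : Finset (Finset (Fin n)) => IsSetPartition P ∧ P.card = k),
    ∏ B ∈ P, x B.card

/-- `b_{n,k} = B_{n,k}(2·1!, 1·2!, 2·3!, …, (n-k)·(n-k+1)!)`, i.e. the partial
Bell polynomial evaluated at `x_m = s_c(m)·m!`. -/
noncomputable def bnk (n k : ℕ) : ℚ :=
  partialBell n k fun m => (if m = 1 then (2 : ℚ) else (m : ℚ) - 1) * (Nat.factorial m)



section FaaDiBruno
open Finset


noncomputable def Wsum (y : ℕ → ℚ) (α : Type) [Fintype α] [DecidableEq α] (m : ℕ) : ℚ :=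
  ∑ f : α → Fin m, ∏ j : Fin m, y (univ.filter (fun i => f i = j)).card

lemma Wsum_succ (y : ℕ → ℚ) (α : Type) [Fintype α] [DecidableEq α] (m : ℕ) :
    Wsum y α (m+1) = ∑ S ∈ (univ : Finset α).powerset,
      y S.card * Wsum y (↥(Sᶜ)) m := by
  classical
  unfold Wsum
  rw [← Finset.sum_fiberwise_of_maps_to
    (g := fun f : α → Fin (m+1) => univ.filter (fun i => f i = Fin.last m))
    (t := (univ : Finset α).powerset) (fun f _ => by simp) _]
  refine Finset.sum_congr rfl (fun S _ => ?_)
  rw [Finset.mul_sum]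
  refine Finset.sum_bij' (i := fun f hf => fun p : ↥(Sᶜ) =>
      (⟨(f p.1).val, by
        have hfS : univ.filter (fun i => f i = Fin.last m) = S := (Finset.mem_filter.mp hf).2
        have hp : p.1 ∉ S := Finset.mem_compl.mp p.2
        have hne : f p.1 ≠ Fin.last m := by
          intro h
          have : p.1 ∈ univ.filter (fun i => f i = Fin.last m) := by simp [h]
          rw [hfS] at this
          exact hp this
        exact Fin.val_lt_last hne⟩ : Fin m))
    (j := fun g _ => fun a : α =>
      if h : a ∈ S then Fin.last m else (g ⟨a, Finset.mem_compl.mpr h⟩).castSucc)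
    ?_ ?_ ?_ ?_ ?_
  · intro f hf
    exact Finset.mem_univ _
  · intro g hg
    simp only [Finset.mem_filter, Finset.mem_univ, true_and]
    ext a
    simp only [Finset.mem_filter, Finset.mem_univ, true_and]
    constructor
    · intro h
      by_contra haS
      rw [dif_neg haS] at h
      exact absurd h (Fin.castSucc_lt_last _).ne
    · intro h; rw [dif_pos h]
  · intro f hf
    have hfS : univ.filter (fun i => f i = Fin.last m) = S := (Finset.mem_filter.mp hf).2
    funext a
    dsimp only
    by_cases haS : a ∈ S
    · rw [dif_pos haS]
      have : a ∈ univ.filter (fun i => f i = Fin.last m) := by rw [hfS]; exact haS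
      simpa using (Finset.mem_filter.mp this).2.symm
    · rw [dif_neg haS]
      apply Fin.ext
      simp
  · intro g hg
    funext p
    have hp : p.1 ∉ S := Finset.mem_compl.mp p.2
    dsimp only
    apply Fin.ext
    simp [dif_neg hp]
  · intro f hf
    have hfS : univ.filter (fun i => f i = Fin.last m) = S := (Finset.mem_filter.mp hf).2
    rw [Fin.prod_univ_castSucc]
    rw [congrArg Finset.card hfS, mul_comm]
    congr 1
    refine Finset.prod_congr rfl (fun j _ => ?_)
    congr 1
    refine Finset.card_bij' (fun a ha => (⟨a, by
        have hfa : f a = j.castSucc := by simpa using (Finset.mem_filter.mp ha).2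
        apply Finset.mem_compl.mpr
        intro haS
        rw [← hfS] at haS
        have h2 := (Finset.mem_filter.mp haS).2
        rw [hfa] at h2
        exact (Fin.castSucc_lt_last j).ne h2⟩ : ↥(Sᶜ)))
      (fun p hp => p.1) ?_ ?_ ?_ ?_
    · intro a ha
      have hfa : f a = j.castSucc := by simpa using (Finset.mem_filter.mp ha).2
      simp only [Finset.mem_filter, Finset.mem_univ, true_and]
      apply Fin.ext
      simpa using congrArg Fin.val hfa
    · intro p hp
      have := (Finset.mem_filter.mp hp).2
      simp only [Finset.mem_filter, Finset.mem_univ, true_and]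
      apply Fin.ext
      simpa using congrArg Fin.val this
    · intro a ha; rfl
    · intro p hp; rfl

lemma Wsum_eq_coeff (u : ℕ → ℚ) (m : ℕ) :
    ∀ (α : Type) [Fintype α] [DecidableEq α],
    Wsum (fun t => u t * t.factorial) α m
      = (Nat.factorial (Fintype.card α) : ℚ) *
        PowerSeries.coeff (Fintype.card α) ((PowerSeries.mk u) ^ m) := by
  induction m with
  | zero =>
    intro α _ _
    unfold Wsum
    simp only [Finset.univ_eq_empty, Finset.prod_empty, Finset.sum_const, nsmul_eq_mul, mul_one,
      pow_zero, PowerSeries.coeff_one]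
    rcases eq_or_ne (Fintype.card α) 0 with h | h
    · have : IsEmpty α := Fintype.card_eq_zero_iff.mp h
      simp [h, Finset.card_univ, Fintype.card_fun]
    · have : Fintype.card (α → Fin 0) = 0 := by
        rw [Fintype.card_fun]
        simp [pow_eq_zero_iff, h]
      rw [Finset.card_univ, this]
      simp [h]
  | succ m ih =>
    intro α _ _
    rw [Wsum_succ]
    have step1 : ∀ S ∈ (univ : Finset α).powerset,
        (fun t => u t * t.factorial) S.card * Wsum (fun t => u t * t.factorial) (↥(Sᶜ)) m
        = (u S.card * S.card.factorial) *
          ((Nat.factorial (Fintype.card α - S.card) : ℚ) *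
            PowerSeries.coeff (Fintype.card α - S.card) ((PowerSeries.mk u) ^ m)) := by
      intro S _
      rw [ih]
      congr 2 <;> rw [Fintype.card_coe, Finset.card_compl]
    rw [Finset.sum_congr rfl step1, Finset.sum_powerset]
    have step2 : ∀ s ∈ Finset.range (#(univ : Finset α) + 1),
        (∑ S ∈ Finset.powersetCard s (univ : Finset α),
          (u S.card * S.card.factorial) *
          ((Nat.factorial (Fintype.card α - S.card) : ℚ) *
            PowerSeries.coeff (Fintype.card α - S.card) ((PowerSeries.mk u) ^ m)))
        = ((Fintype.card α).choose s : ℚ) * ((u s * s.factorial) *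
          ((Nat.factorial (Fintype.card α - s) : ℚ) *
            PowerSeries.coeff (Fintype.card α - s) ((PowerSeries.mk u) ^ m))) := by
      intro s _
      rw [Finset.sum_congr rfl (fun S hS => ?_), Finset.sum_const, nsmul_eq_mul,
        Finset.card_powersetCard, Finset.card_univ]
      rw [(Finset.mem_powersetCard.mp hS).2]
    rw [Finset.sum_congr rfl step2]
    rw [pow_succ', PowerSeries.coeff_mul, Finset.Nat.sum_antidiagonal_eq_sum_range_succ_mk,
      Finset.mul_sum, Finset.card_univ]
    refine Finset.sum_congr rfl (fun s hs => ?_)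
    have hsle : s ≤ Fintype.card α := Nat.lt_succ_iff.mp (Finset.mem_range.mp hs)
    have hfact : ((Fintype.card α).choose s * s.factorial * (Fintype.card α - s).factorial : ℚ)
        = (Fintype.card α).factorial := by
      exact_mod_cast congrArg (Nat.cast : ℕ → ℚ) (Nat.choose_mul_factorial_mul_factorial hsle)
    rw [PowerSeries.coeff_mk]
    rw [← hfact]
    ring

def partOf {n m : ℕ} (f : Fin n → Fin m) : Finset (Finset (Fin n)) :=
  (Finset.univ.image (fun j : Fin m => univ.filter (fun i => f i = j))).filter
    (fun B => B.Nonempty)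

lemma partOf_isSetPartition {n m : ℕ} (f : Fin n → Fin m) : IsSetPartition (partOf f) := by
  refine ⟨fun B hB => (Finset.mem_filter.mp hB).2, ?_, ?_⟩
  · intro B hB C hC hne
    obtain ⟨j, -, rfl⟩ := Finset.mem_image.mp (Finset.mem_filter.mp hB).1
    obtain ⟨j', -, rfl⟩ := Finset.mem_image.mp (Finset.mem_filter.mp hC).1
    rw [Finset.disjoint_left]
    intro a ha ha'
    apply hne
    have h1 : f a = j := by simpa using ha
    have h2 : f a = j' := by simpa using ha'
    rw [← h1, ← h2]
  · intro x
    refine ⟨univ.filter (fun i => f i = f x), ?_, by simp⟩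
    exact Finset.mem_filter.mpr ⟨Finset.mem_image.mpr ⟨f x, Finset.mem_univ _, rfl⟩, ⟨x, by simp⟩⟩

lemma partOf_key {n m : ℕ} {f : Fin n → Fin m} {B : Finset (Fin n)} (hB : B ∈ partOf f)
    {x : Fin n} (hx : x ∈ B) : B = univ.filter (fun i => f i = f x) := by
  obtain ⟨j, -, rfl⟩ := Finset.mem_image.mp (Finset.mem_filter.mp hB).1
  have : f x = j := by simpa using hx
  rw [this]

lemma block_unique {n : ℕ} {P : Finset (Finset (Fin n))} (hP : IsSetPartition P)
    {B C : Finset (Fin n)} (hB : B ∈ P) (hC : C ∈ P) {a : Fin n} (ha : a ∈ B) (ha' : a ∈ C) :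
    B = C := by
  by_contra hne
  exact (Finset.disjoint_left.mp (hP.2.1 B hB C hC hne) ha) ha'

noncomputable def blockOf {n : ℕ} {P : Finset (Finset (Fin n))} (hP : IsSetPartition P)
    (a : Fin n) : ↥P := ⟨(hP.2.2 a).choose, (hP.2.2 a).choose_spec.1⟩

lemma mem_blockOf {n : ℕ} {P : Finset (Finset (Fin n))} (hP : IsSetPartition P) (a : Fin n) :
    a ∈ (blockOf hP a).1 := (hP.2.2 a).choose_spec.2

lemma blockOf_eq {n : ℕ} {P : Finset (Finset (Fin n))} (hP : IsSetPartition P) {a : Fin n}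
    {B : Finset (Fin n)} (hB : B ∈ P) (ha : a ∈ B) : (blockOf hP a : Finset (Fin n)) = B :=
  block_unique hP (blockOf hP a).2 hB (mem_blockOf hP a) ha

lemma card_partOf_fiber {n m : ℕ} (P : Finset (Finset (Fin n))) (hP : IsSetPartition P) :
    ((univ : Finset (Fin n → Fin m)).filter (fun f => partOf f = P)).card
      = m.descFactorial P.card := by
  classical
  have main : ((univ : Finset (Fin n → Fin m)).filter (fun f => partOf f = P)).card
      = Fintype.card (↥P ↪ Fin m) := by
    rw [← Finset.card_univ]
    refine Finset.card_bij'
      (i := fun f hf => ⟨fun B => f (hP.1 B.1 B.2).choose, by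
        intro B C hBC
        have hfP : partOf f = P := (Finset.mem_filter.mp hf).2
        have hB' : B.1 ∈ partOf f := hfP ▸ B.2
        have hC' : C.1 ∈ partOf f := hfP ▸ C.2
        have e1 := partOf_key hB' (hP.1 B.1 B.2).choose_spec
        have e2 := partOf_key hC' (hP.1 C.1 C.2).choose_spec
        apply Subtype.ext
        dsimp only at hBC
        rw [e1, e2, hBC]⟩)
      (j := fun e he => fun a => e (blockOf hP a))
      (fun _ _ => Finset.mem_univ _) ?_ ?_ ?_
    · -- backward maps into the filter set
      intro e he
      simp only [Finset.mem_filter, Finset.mem_univ, true_and]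
      -- partOf (fun a => e (blockOf hP a)) = P
      have fiber_eq : ∀ B (hB : B ∈ P),
          univ.filter (fun a => e (blockOf hP a) = e ⟨B, hB⟩) = B := by
        intro B hB
        ext a
        simp only [Finset.mem_filter, Finset.mem_univ, true_and]
        constructor
        · intro h
          have := e.injective h
          have hBa : (blockOf hP a : Finset (Fin n)) = B := congrArg Subtype.val this
          rw [← hBa]; exact mem_blockOf hP a
        · intro h
          congr 1
          exact Subtype.ext (blockOf_eq hP hB h)
      ext C
      simp only [partOf, Finset.mem_filter, Finset.mem_image, Finset.mem_univ, true_and]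
      constructor
      · rintro ⟨⟨j, rfl⟩, hne⟩
        obtain ⟨a, ha⟩ := hne
        have hj : e (blockOf hP a) = j := by simpa using ha
        have := fiber_eq (blockOf hP a).1 (blockOf hP a).2
        simp only [Subtype.coe_eta] at this
        rw [← hj, this]
        exact (blockOf hP a).2
      · intro hC
        exact ⟨⟨e ⟨C, hC⟩, fiber_eq C hC⟩, hP.1 C hC⟩
    · -- left inverse
      intro f hf
      funext a
      have hfP : partOf f = P := (Finset.mem_filter.mp hf).2
      set B := blockOf hP a with hBdef
      have hB' : B.1 ∈ partOf f := hfP ▸ B.2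
      have hkey := partOf_key hB' (hP.1 B.1 B.2).choose_spec
      have ha : a ∈ B.1 := mem_blockOf hP a
      rw [hkey] at ha
      have := (Finset.mem_filter.mp ha).2
      exact this.symm ▸ rfl
    · -- right inverse
      intro e he
      apply Function.Embedding.ext
      intro B
      dsimp only
      have hc : (hP.1 B.1 B.2).choose ∈ B.1 := (hP.1 B.1 B.2).choose_spec
      exact congrArg e (Subtype.ext (blockOf_eq hP B.2 hc))

  rw [main, Fintype.card_embedding_eq, Fintype.card_coe, Fintype.card_fin]

lemma Wsum_eq_partitionSum (y : ℕ → ℚ) (hy0 : y 0 = 1) (n m : ℕ)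
    [DecidablePred (IsSetPartition (n := n))] :
    Wsum y (Fin n) m
      = ∑ P ∈ (univ : Finset (Finset (Finset (Fin n)))).filter IsSetPartition,
        (m.descFactorial P.card : ℚ) * ∏ B ∈ P, y B.card := by
  classical
  unfold Wsum
  rw [← Finset.sum_fiberwise_of_maps_to (g := partOf)
      (t := univ.filter IsSetPartition)
      (fun f _ => Finset.mem_filter.mpr ⟨Finset.mem_univ _, partOf_isSetPartition f⟩) _]
  refine Finset.sum_congr rfl fun P hP' => ?_
  have hP : IsSetPartition P := (Finset.mem_filter.mp hP').2
  have const : ∀ f ∈ (univ : Finset (Fin n → Fin m)).filter (fun f => partOf f = P),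
      (∏ j : Fin m, y (univ.filter (fun i => f i = j)).card) = ∏ B ∈ P, y B.card := by
    intro f hf
    have hfP : partOf f = P := (Finset.mem_filter.mp hf).2
    have hP' : P = (univ.filter
        (fun j : Fin m => (univ.filter (fun i => f i = j)).Nonempty)).image
        (fun j => univ.filter (fun i => f i = j)) := by
      rw [← hfP]; unfold partOf; rw [Finset.filter_image]
    rw [hP', Finset.prod_image ?inj]
    case inj =>
      intro j hj j' hj' h
      obtain ⟨a, ha⟩ := (Finset.mem_filter.mp hj).2
      have h1 : f a = j := by simpa using ha
      have ha' : a ∈ univ.filter (fun i => f i = j') :=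
        (show univ.filter (fun i => f i = j) = univ.filter (fun i => f i = j') from h) ▸ ha
      have h2 : f a = j' := by simpa using ha'
      rw [← h1, ← h2]
    symm
    apply Finset.prod_subset (Finset.filter_subset _ _)
    intro j _ hj
    have : ¬ (univ.filter (fun i => f i = j)).Nonempty := by
      intro h; exact hj (Finset.mem_filter.mpr ⟨Finset.mem_univ _, h⟩)
    rw [Finset.not_nonempty_iff_eq_empty] at this
    rw [this, Finset.card_empty, hy0]
  rw [Finset.sum_congr rfl const, Finset.sum_const, card_partOf_fiber P hP, nsmul_eq_mul]

end FaaDiBruno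


open Finset in
lemma partition_card_mem {n : ℕ} (hn : 1 ≤ n) {P : Finset (Finset (Fin n))}
    (hP : IsSetPartition P) : P.card ∈ Finset.Icc 1 n := by
  classical
  have hbu : P.biUnion id = univ := by
    ext x
    simp only [Finset.mem_biUnion, Finset.mem_univ, iff_true, id]
    exact hP.2.2 x
  have hdisj : (P : Set (Finset (Fin n))).PairwiseDisjoint id := by
    intro B hB C hC hne
    exact hP.2.1 B hB C hC hne
  have h2 : P.card ≤ n := by
    have := Finset.card_le_card_biUnion hdisj (fun B hB => hP.1 B hB)
    rwa [hbu, Finset.card_univ, Fintype.card_fin] at this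
  have h1 : 1 ≤ P.card := by
    obtain ⟨B, hB, -⟩ := hP.2.2 ⟨0, hn⟩
    exact Finset.card_pos.mpr ⟨B, hB⟩
  exact Finset.mem_Icc.mpr ⟨h1, h2⟩

open Finset in
theorem stmt16' (n : ℕ) (hn : 1 ≤ n) :
    (1 / ((n : ℚ) + 1)) *
      (PowerSeries.coeff n
        ((PowerSeries.mk fun i : ℕ =>
            if i = 0 then (1 : ℚ) else if i = 1 then 2 else (i : ℚ) - 1) ^ (n + 1)))
    = ∑ k ∈ Finset.Icc 1 n, bnk n k / (Nat.factorial (n - k + 1)) := by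
  classical
  set u : ℕ → ℚ := fun i : ℕ =>
    if i = 0 then (1 : ℚ) else if i = 1 then 2 else (i : ℚ) - 1 with hu
  set y : ℕ → ℚ := fun t => u t * t.factorial with hy
  have hcoeff : Wsum y (Fin n) (n+1)
      = (Nat.factorial n : ℚ) * PowerSeries.coeff n ((PowerSeries.mk u) ^ (n+1)) := by
    have := Wsum_eq_coeff u (n+1) (Fin n)
    rwa [Fintype.card_fin] at this
  have hpart : Wsum y (Fin n) (n+1)
      = ∑ P ∈ (univ : Finset (Finset (Finset (Fin n)))).filter IsSetPartition,
        ((n+1).descFactorial P.card : ℚ) * ∏ B ∈ P, y B.card := by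
    apply Wsum_eq_partitionSum
    simp [hy, hu]
  -- group by card
  have hgroup : ∑ P ∈ (univ : Finset (Finset (Finset (Fin n)))).filter IsSetPartition,
        ((n+1).descFactorial P.card : ℚ) * ∏ B ∈ P, y B.card
      = ∑ k ∈ Finset.Icc 1 n, ((n+1).descFactorial k : ℚ) * bnk n k := by
    rw [← Finset.sum_fiberwise_of_maps_to (g := Finset.card) (t := Finset.Icc 1 n)
      (fun P hP => partition_card_mem hn (Finset.mem_filter.mp hP).2) _]
    refine Finset.sum_congr rfl fun k hk => ?_
    rw [bnk, partialBell, Finset.mul_sum]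
    rw [Finset.filter_filter]
    apply Finset.sum_congr
    · apply Finset.filter_congr
      intro P _
      simp
    · intro P hP
      have hP' := Finset.mem_filter.mp hP
      rw [hP'.2.2]
      congr 1
      refine Finset.prod_congr rfl fun B hB => ?_
      have hBne : B.Nonempty := hP'.2.1.1 B hB
      have hc : B.card ≠ 0 := Finset.card_ne_zero_of_mem (hBne.choose_spec)
      simp only [hy, hu]
      rcases eq_or_ne B.card 1 with h1 | h1
      · simp [h1]
      · simp [hc, h1]
  -- final algebra
  have hkey : (Nat.factorial n : ℚ) * PowerSeries.coeff n ((PowerSeries.mk u) ^ (n+1))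
      = ∑ k ∈ Finset.Icc 1 n, ((n+1).descFactorial k : ℚ) * bnk n k := by
    rw [← hcoeff, hpart, hgroup]
  have hnfac : (Nat.factorial n : ℚ) ≠ 0 := Nat.cast_ne_zero.mpr (Nat.factorial_ne_zero n)
  have hcoeff' : PowerSeries.coeff n ((PowerSeries.mk u) ^ (n+1))
      = (∑ k ∈ Finset.Icc 1 n, ((n+1).descFactorial k : ℚ) * bnk n k) / n.factorial := by
    field_simp at hkey ⊢
    linarith [hkey]
  rw [hcoeff', Finset.sum_div, Finset.mul_sum]
  refine Finset.sum_congr rfl fun k hk => ?_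
  obtain ⟨hk1, hk2⟩ := Finset.mem_Icc.mp hk
  have hid : ((n - k + 1).factorial : ℕ) * ((n+1).descFactorial k) = (n+1).factorial := by
    have h : k ≤ n + 1 := by omega
    have := Nat.factorial_mul_descFactorial h
    rwa [show n + 1 - k = n - k + 1 by omega] at this
  have hidQ : ((n - k + 1).factorial : ℚ) * ((n+1).descFactorial k : ℚ) = ((n+1).factorial : ℚ) := by
    exact_mod_cast congrArg (Nat.cast : ℕ → ℚ) hid
  have hfacs : ((n+1).factorial : ℚ) = ((n:ℚ)+1) * n.factorial := by
    rw [Nat.factorial_succ]; push_cast; ring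
  have h1 : ((n - k + 1).factorial : ℚ) ≠ 0 := Nat.cast_ne_zero.mpr (Nat.factorial_ne_zero _)
  have h2 : ((n:ℚ)+1) ≠ 0 := by positivity
  field_simp
  linear_combination (bnk n k) * (hidQ.trans hfacs)

/-- `[xⁿ] (1/(n+1)) (1 + 2x + Σ_{i≥2} (i-1)xⁱ)^{n+1} = Σ_{k=1}^n b_{n,k}/(n-k+1)!`. -/
theorem stmt16 (n : ℕ) (hn : 1 ≤ n) :
    (1 / ((n : ℚ) + 1)) *
      (PowerSeries.coeff n
        ((PowerSeries.mk fun i : ℕ =>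
            if i = 0 then (1 : ℚ) else if i = 1 then 2 else (i : ℚ) - 1) ^ (n + 1)))
    = ∑ k ∈ Finset.Icc 1 n, bnk n k / (Nat.factorial (n - k + 1)) :=
  stmt16' n hn
end

section
/- Let w be a permutation of [n], r ∈ [n], and define the shifted anti-exceedance set I_r(w) = { i ∈ [n] : i <_r w^{-1}(i) } with respect to the shifted linear order r <_r r+1 <_r ... <_r n <_r 1 <_r ... <_r r-1 (assume w has no fixed points). Then for all r, I_{r+1}(w) = I_r(w) \ {r} ∪ {w(r)} (indices mod n), and consequently |I_1(w)| = |I_2(w)| = ... = |I_n(w)|. -/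
lemma sub_one_lt_sub_one' {n : ℕ} [NeZero n] {a b : Fin n} (h : a ≠ b) :
    a - 1 < b - 1 ↔ (b = 0 ∨ (a ≠ 0 ∧ a < b)) := by
  obtain ⟨m, rfl⟩ : ∃ m, n = m + 1 :=
    ⟨n - 1, (Nat.succ_pred_eq_of_pos (Nat.pos_of_ne_zero (NeZero.ne n))).symm⟩
  have ha := a.isLt
  have hb := b.isLt
  have hab : a.val ≠ b.val := fun e => h (Fin.ext e)
  simp only [Fin.lt_def, Fin.coe_sub_one, Fin.ext_iff, Fin.val_zero, ne_eq]
  split_ifs with h1 h2 h2 <;> omega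

/-- The shifted anti-exceedance set `I_r(w) = { i : i <_r w⁻¹(i) }`, where `<_r`
is the linear order on `Fin n` starting at `r` (compared via cyclic distance
from `r`). -/
def shiftedAntiExc {n : ℕ} [NeZero n] (w : Equiv.Perm (Fin n)) (r : Fin n) :
    Finset (Fin n) :=
  Finset.univ.filter fun i => (i - r) < (w.symm i - r)

/-- For a fixed-point-free permutation `w`, passing from `<_r` to `<_{r+1}`
removes `r` from the shifted anti-exceedance set and inserts `w r`;
consequently all shifted anti-exceedance sets have the same cardinality. -/
theorem stmt17 {n : ℕ} [NeZero n] (w : Equiv.Perm (Fin n)) (hw : ∀ i, w i ≠ i) :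
    (∀ r : Fin n,
      shiftedAntiExc w (r + 1) = insert (w r) ((shiftedAntiExc w r).erase r)) ∧
    (∀ r r' : Fin n, (shiftedAntiExc w r).card = (shiftedAntiExc w r').card) := by
  have hw' : ∀ i, w.symm i ≠ i := fun i hi => hw i (by conv_lhs => rw [← hi, Equiv.apply_symm_apply])
  have main : ∀ r : Fin n,
      shiftedAntiExc w (r + 1) = insert (w r) ((shiftedAntiExc w r).erase r) := by
    intro r
    ext i
    simp only [shiftedAntiExc, Finset.mem_filter, Finset.mem_univ, true_and,
      Finset.mem_insert, Finset.mem_erase, ne_eq]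
    have hne : i - r ≠ w.symm i - r := fun h => hw' i (sub_left_inj.mp h).symm
    have k1 : i - (r + 1) = (i - r) - 1 := by abel
    have k2 : w.symm i - (r + 1) = (w.symm i - r) - 1 := by abel
    rw [k1, k2, sub_one_lt_sub_one' hne]
    simp only [sub_eq_zero, Equiv.symm_apply_eq, ne_eq]
  refine ⟨main, ?_⟩
  have hrmem : ∀ r : Fin n, r ∈ shiftedAntiExc w r := by
    intro r
    simp only [shiftedAntiExc, Finset.mem_filter, Finset.mem_univ, true_and, sub_self]
    have h0 : w.symm r - r ≠ 0 := fun h => hw' r (sub_eq_zero.mp h)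
    rw [Fin.lt_def, Fin.val_zero]
    exact Nat.pos_of_ne_zero (fun h => h0 (Fin.ext (by simp [h])))
  have step : ∀ r : Fin n, (shiftedAntiExc w (r + 1)).card = (shiftedAntiExc w r).card := by
    intro r
    have hnm : w r ∉ (shiftedAntiExc w r).erase r := by
      simp only [shiftedAntiExc, Finset.mem_erase, Finset.mem_filter, Finset.mem_univ,
        true_and, Equiv.symm_apply_apply, sub_self, not_and]
      intro _
      exact fun h => absurd h (by simp [Fin.lt_def])
    rw [main r, Finset.card_insert_of_notMem hnm, Finset.card_erase_of_mem (hrmem r),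
      Nat.sub_add_cancel (Finset.card_pos.mpr ⟨r, hrmem r⟩)]
  letI := Fin.instCommRing n
  have allk : ∀ (k : ℕ) (r : Fin n),
      (shiftedAntiExc w (r + (k : Fin n))).card = (shiftedAntiExc w r).card := by
    intro k
    induction k with
    | zero => simp
    | succ k ih =>
      intro r
      have : r + ((k + 1 : ℕ) : Fin n) = (r + (k : Fin n)) + 1 := by push_cast; ring
      rw [this, step, ih]
  intro r r'
  have h := allk (r' - r).val r
  rwa [Fin.cast_val_eq_self, show r + (r' - r) = r' by ring, eq_comm] at h
end
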